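/- arXiv:1802.04621 — 6 statements merged into one kernel-verified Lean document; each statement's English description precedes it below -/
import Mathlib

section
/- Let F_n(x,a) = P(S_n = x and M_n = a) for integers 0 ≤ x ≤ a, with the convention that F_n(x,a) = 0 if x < 0 or a < 0 or x > a. Then F_1(x,a) = p·δ_{x,1}δ_{a,1} + q·δ_{x,0}δ_{a,0}, and for every n ≥ 2 and 0 ≤ x ≤ a: if n is odd, F_n(x,a) = p·δ_{x,a}·F_{n-1}(x-1,a-1) + p·F_{n-1}(x-1,a) + q·F_{n-1}(x,a); if n is even, F_n(x,a) = (p + q·δ_{x,0})·F_{n-1}(x,a) + q·(1 - δ_{x,a})·F_{n-1}(x+1,a). Here δ denotes the Kronecker delta. -/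
open MeasureTheory ProbabilityTheory

/-- The reflected walk and its running max, as a function of the increment sequence. -/
def mqSM : ℕ → (ℕ → ℤ) → ℤ × ℤ
  | 0, _ => (0, 0)
  | (j+1), g =>
    (max ((mqSM j g).1 + g (j+1)) 0,
     max (mqSM j g).2 (max ((mqSM j g).1 + g (j+1)) 0))

lemma mqSM_measurable (j : ℕ) : Measurable (mqSM j) := by
  induction j with
  | zero => exact measurable_const
  | succ j ih =>
    have h1 : Measurable fun g : ℕ → ℤ => max ((mqSM j g).1 + g (j+1)) 0 :=
      ((ih.fst.add (measurable_pi_apply (j+1)))).max measurable_const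
    exact ((h1).prodMk (ih.snd.max h1))

lemma mqSM_congr (j : ℕ) {g g' : ℕ → ℤ} (h : ∀ i ≤ j, g i = g' i) :
    mqSM j g = mqSM j g' := by
  induction j with
  | zero => rfl
  | succ j ih =>
    have h' : ∀ i ≤ j, g i = g' i := fun i hi => h i (hi.trans (Nat.le_succ j))
    simp [mqSM, ih h', h (j+1) le_rfl]

lemma mq_split3 {Ω : Type*} [MeasurableSpace Ω] (μ : Measure Ω) (E A B : Set Ω)
    (hE : MeasurableSet E) (hA : MeasurableSet A) (hB : MeasurableSet B)
    (hAB : Disjoint A B) (h0 : μ (A ∪ B)ᶜ = 0) :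
    μ E = μ (E ∩ A) + μ (E ∩ B) := by
  have h1 : μ (E ∩ (A ∪ B)) + μ (E \ (A ∪ B)) = μ E :=
    measure_inter_add_diff E (hA.union hB)
  have h2 : μ (E \ (A ∪ B)) = 0 :=
    measure_mono_null (fun x hx => hx.2) h0
  have h3 : E ∩ (A ∪ B) = (E ∩ A) ∪ (E ∩ B) := Set.inter_union_distrib_left E A B
  have h4 : μ ((E ∩ A) ∪ (E ∩ B)) = μ (E ∩ A) + μ (E ∩ B) :=
    measure_union (hAB.mono (Set.inter_subset_right) (Set.inter_subset_right)) (hE.inter hB)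
  rw [← h1, h2, add_zero, h3, h4]

/-- For the ℓ = 1 (RG-cycle) reflected traffic walk with Bernoulli(p)
arrivals, the joint law `F n x a = P(S_n = x ∧ M_n = a)` satisfies the stated initial
condition and the odd/even one-step recurrences. -/
theorem maxQueue_F_recurrence
    (p q : ℝ) (hp : 0 < p) (hpq : p ≤ 1 / 2) (hq : q = 1 - p)
    {Ω : Type*} [MeasurableSpace Ω] (μ : Measure Ω) [IsProbabilityMeasure μ]
    (X : ℕ → Ω → ℤ) (hXmeas : ∀ i, Measurable (X i))
    (hXindep : iIndepFun X μ)
    (hXodd : ∀ i : ℕ, Odd i →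
      μ {ω | X i ω = 1} = ENNReal.ofReal p ∧ μ {ω | X i ω = 0} = ENNReal.ofReal q)
    (hXeven : ∀ i : ℕ, 1 ≤ i → Even i →
      μ {ω | X i ω = 0} = ENNReal.ofReal p ∧ μ {ω | X i ω = -1} = ENNReal.ofReal q)
    (S : ℕ → Ω → ℤ) (hS0 : ∀ ω, S 0 ω = 0)
    (hS : ∀ (j : ℕ) (ω : Ω), S (j + 1) ω = max (S j ω + X (j + 1) ω) 0)
    (M : ℕ → Ω → ℤ) (hM0 : ∀ ω, M 0 ω = S 0 ω)
    (hM : ∀ (n : ℕ) (ω : Ω), M (n + 1) ω = max (M n ω) (S (n + 1) ω))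
    (F : ℕ → ℤ → ℤ → ℝ)
    (hF : ∀ (n : ℕ) (x a : ℤ), F n x a = (μ {ω | S n ω = x ∧ M n ω = a}).toReal) :
    (∀ x a : ℤ,
      F 1 x a = p * (if x = 1 then (1 : ℝ) else 0) * (if a = 1 then (1 : ℝ) else 0)
        + q * (if x = 0 then (1 : ℝ) else 0) * (if a = 0 then (1 : ℝ) else 0)) ∧
    (∀ n : ℕ, 2 ≤ n → ∀ x a : ℤ, 0 ≤ x → x ≤ a →
      (Odd n →
        F n x a = p * (if x = a then (1 : ℝ) else 0) * F (n - 1) (x - 1) (a - 1)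
          + p * F (n - 1) (x - 1) a + q * F (n - 1) x a) ∧
      (Even n →
        F n x a = (p + q * (if x = 0 then (1 : ℝ) else 0)) * F (n - 1) x a
          + q * (1 - (if x = a then (1 : ℝ) else 0)) * F (n - 1) (x + 1) a)) := by
  have hq0 : 0 ≤ q := by rw [hq]; linarith
  have hpq1 : p + q = 1 := by rw [hq]; ring
  -- basic sure properties of the walk
  have hSnn : ∀ (j : ℕ) (ω : Ω), 0 ≤ S j ω := by
    intro j ω
    cases j with
    | zero => simp [hS0]
    | succ j => rw [hS]; exact le_max_right _ _
  have hSleM : ∀ (j : ℕ) (ω : Ω), S j ω ≤ M j ω := by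
    intro j ω
    cases j with
    | zero => rw [hM0]
    | succ j => rw [hM]; exact le_max_right _ _
  -- representation via mqSM
  have hrep : ∀ (j : ℕ) (ω : Ω), (S j ω, M j ω) = mqSM j (fun i => X i ω) := by
    intro j ω
    induction j with
    | zero => simp [mqSM, hS0, hM0]
    | succ j ih =>
      have h1 : (mqSM j fun i => X i ω).1 = S j ω := by rw [← ih]
      have h2 : (mqSM j fun i => X i ω).2 = M j ω := by rw [← ih]
      simp [mqSM, h1, h2, hS j ω, hM j ω, Prod.ext_iff]
  have hpairMeas : ∀ j : ℕ, Measurable fun ω => (S j ω, M j ω) := by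
    intro j
    have he : (fun ω => (S j ω, M j ω)) = (mqSM j) ∘ (fun ω i => X i ω) :=
      funext fun ω => hrep j ω
    rw [he]
    exact (mqSM_measurable j).comp (measurable_pi_lambda _ hXmeas)
  have hEM : ∀ (j : ℕ) (x a : ℤ), MeasurableSet {ω | S j ω = x ∧ M j ω = a} := by
    intro j x a
    have he : {ω | S j ω = x ∧ M j ω = a} = (fun ω => (S j ω, M j ω)) ⁻¹' {(x, a)} := by
      ext ω; simp [Prod.ext_iff]
    rw [he]
    exact (hpairMeas j) (measurableSet_singleton _)
  -- independence of (S m, M m) from X (m+1)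
  have hkey : ∀ (m : ℕ) (x a v : ℤ),
      μ ({ω | S m ω = x ∧ M m ω = a} ∩ {ω | X (m+1) ω = v})
        = μ {ω | S m ω = x ∧ M m ω = a} * μ {ω | X (m+1) ω = v} := by
    intro m x a v
    have hdisj : Disjoint (Finset.range (m+1)) ({m+1} : Finset ℕ) := by
      simp [Finset.disjoint_singleton_right]
    have hInd := hXindep.indepFun_finset (Finset.range (m+1)) {m+1} hdisj hXmeas
    set φ : ((Finset.range (m+1) : Finset ℕ) → ℤ) → ℤ × ℤ :=
      fun g => mqSM m (fun i => if h : i ∈ Finset.range (m+1) then g ⟨i, h⟩ else 0) with hφdef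
    have hφ : Measurable φ := by
      apply (mqSM_measurable m).comp
      apply measurable_pi_lambda
      intro i
      by_cases h : i ∈ Finset.range (m+1)
      · simp only [h, dif_pos]; exact measurable_pi_apply _
      · simp only [h, dif_neg, not_false_iff]; exact measurable_const
    set ψ : (({m+1} : Finset ℕ) → ℤ) → ℤ :=
      fun g => g ⟨m+1, Finset.mem_singleton_self _⟩ with hψdef
    have hψ : Measurable ψ := measurable_pi_apply _
    have hcomp : IndepFun (fun ω => (S m ω, M m ω)) (X (m+1)) μ := by
      have h := hInd.comp hφ hψ
      have e1 : (φ ∘ fun ω (i : (Finset.range (m+1) : Finset ℕ)) => X i ω)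
          = fun ω => (S m ω, M m ω) := by
        funext ω
        show mqSM m (fun i => if h : i ∈ Finset.range (m+1) then X i ω else 0)
            = (S m ω, M m ω)
        rw [hrep m ω]
        apply mqSM_congr
        intro i hi
        have : i ∈ Finset.range (m+1) := Finset.mem_range.2 (Nat.lt_succ_of_le hi)
        simp [this]
      have e2 : (ψ ∘ fun ω (i : (({m+1} : Finset ℕ) : Finset ℕ)) => X i ω) = X (m+1) := rfl
      rwa [e1, e2] at h
    have hsets := hcomp.measure_inter_preimage_eq_mul ({(x, a)} : Set (ℤ × ℤ)) ({v} : Set ℤ)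
      (measurableSet_singleton _) (measurableSet_singleton _)
    have e3 : (fun ω => (S m ω, M m ω)) ⁻¹' {(x, a)} = {ω | S m ω = x ∧ M m ω = a} := by
      ext ω; simp [Prod.ext_iff]
    have e4 : X (m+1) ⁻¹' {v} = {ω | X (m+1) ω = v} := rfl
    rwa [e3, e4] at hsets
  -- splitting along the two a.s. values of X i
  have hsplit : ∀ (i : ℕ) (v w : ℤ), v ≠ w →
      μ {ω | X i ω = v} + μ {ω | X i ω = w} = 1 →
      ∀ E : Set Ω, MeasurableSet E →
      μ E = μ (E ∩ {ω | X i ω = v}) + μ (E ∩ {ω | X i ω = w}) := by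
    intro i v w hvw hsum E hE
    have hAm : MeasurableSet {ω | X i ω = v} := hXmeas i (measurableSet_singleton v)
    have hBm : MeasurableSet {ω | X i ω = w} := hXmeas i (measurableSet_singleton w)
    apply mq_split3 μ E _ _ hE hAm hBm
    · rw [Set.disjoint_left]
      intro ω h1 h2
      exact hvw (h1.symm.trans h2)
    · rw [prob_compl_eq_zero_iff (hAm.union hBm)]
      rw [measure_union ?_ hBm, hsum]
      rw [Set.disjoint_left]
      intro ω h1 h2
      exact hvw (h1.symm.trans h2)
  have hsum_odd : ∀ i : ℕ, Odd i → μ {ω | X i ω = 1} + μ {ω | X i ω = 0} = 1 := by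
    intro i hi
    rw [(hXodd i hi).1, (hXodd i hi).2, ← ENNReal.ofReal_add hp.le hq0, hpq1,
      ENNReal.ofReal_one]
  have hsum_even : ∀ i : ℕ, 1 ≤ i → Even i →
      μ {ω | X i ω = 0} + μ {ω | X i ω = -1} = 1 := by
    intro i h1 hi
    rw [(hXeven i h1 hi).1, (hXeven i h1 hi).2, ← ENNReal.ofReal_add hp.le hq0, hpq1,
      ENNReal.ofReal_one]
  -- vanishing of impossible events
  have hzero_neg : ∀ (m : ℕ) (x a : ℤ), x < 0 → μ {ω | S m ω = x ∧ M m ω = a} = 0 := by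
    intro m x a hx
    have : {ω | S m ω = x ∧ M m ω = a} = (∅ : Set Ω) := by
      ext ω
      simp only [Set.mem_setOf_eq, Set.mem_empty_iff_false, iff_false]
      rintro ⟨h1, -⟩
      have := hSnn m ω
      omega
    rw [this, measure_empty]
  have hzero_gt : ∀ (m : ℕ) (x a : ℤ), a < x → μ {ω | S m ω = x ∧ M m ω = a} = 0 := by
    intro m x a hx
    have : {ω | S m ω = x ∧ M m ω = a} = (∅ : Set Ω) := by
      ext ω
      simp only [Set.mem_setOf_eq, Set.mem_empty_iff_false, iff_false]
      rintro ⟨h1, h2⟩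
      have := hSleM m ω
      omega
    rw [this, measure_empty]
  -- the event intersected with {X = 0} (valid for any parity)
  have hset0 : ∀ (m : ℕ) (x a : ℤ),
      {ω | S (m+1) ω = x ∧ M (m+1) ω = a} ∩ {ω | X (m+1) ω = 0}
      = {ω | S m ω = x ∧ M m ω = a} ∩ {ω | X (m+1) ω = 0} := by
    intro m x a
    have key : ∀ ω, X (m+1) ω = 0 → S (m+1) ω = S m ω ∧ M (m+1) ω = M m ω := by
      intro ω h3
      have hs : S (m+1) ω = S m ω := by
        rw [hS m ω, h3, add_zero]; exact max_eq_left (hSnn m ω)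
      exact ⟨hs, by rw [hM m ω, hs]; exact max_eq_left (hSleM m ω)⟩
    ext ω
    simp only [Set.mem_inter_iff, Set.mem_setOf_eq]
    constructor
    · rintro ⟨⟨h1, h2⟩, h3⟩
      obtain ⟨hs, hm'⟩ := key ω h3
      exact ⟨⟨hs.symm.trans h1, hm'.symm.trans h2⟩, h3⟩
    · rintro ⟨⟨h1, h2⟩, h3⟩
      obtain ⟨hs, hm'⟩ := key ω h3
      exact ⟨⟨hs.trans h1, hm'.trans h2⟩, h3⟩
  -- finiteness helpers
  have hfin : ∀ (m : ℕ) (x a : ℤ) (r : ℝ),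
      μ {ω | S m ω = x ∧ M m ω = a} * ENNReal.ofReal r ≠ ⊤ :=
    fun m x a r => ENNReal.mul_ne_top (measure_ne_top μ _) ENNReal.ofReal_ne_top
  constructor
  · -- the case n = 1
    intro x a
    have hE : MeasurableSet {ω | S 1 ω = x ∧ M 1 ω = a} := hEM 1 x a
    have hx1 : ∀ ω, X 1 ω = 1 → S 1 ω = 1 ∧ M 1 ω = 1 := by
      intro ω h
      have hs : S 1 ω = 1 := by rw [hS 0 ω, hS0, h]; rfl
      exact ⟨hs, by rw [hM 0 ω, hM0, hS0, hs]; rfl⟩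
    have hx0 : ∀ ω, X 1 ω = 0 → S 1 ω = 0 ∧ M 1 ω = 0 := by
      intro ω h
      have hs : S 1 ω = 0 := by rw [hS 0 ω, hS0, h]; rfl
      exact ⟨hs, by rw [hM 0 ω, hM0, hS0, hs]; exact max_self 0⟩
    have hsp := hsplit 1 1 0 one_ne_zero (hsum_odd 1 odd_one) _ hE
    have h1 : μ ({ω | S 1 ω = x ∧ M 1 ω = a} ∩ {ω | X 1 ω = 1})
        = if x = 1 ∧ a = 1 then ENNReal.ofReal p else 0 := by
      split_ifs with h
      · obtain ⟨hx, ha⟩ := h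
        have : {ω | S 1 ω = x ∧ M 1 ω = a} ∩ {ω | X 1 ω = 1} = {ω | X 1 ω = 1} := by
          ext ω
          simp only [Set.mem_inter_iff, Set.mem_setOf_eq, and_iff_right_iff_imp]
          intro hω
          obtain ⟨hs, hm'⟩ := hx1 ω hω
          exact ⟨by rw [hs, hx], by rw [hm', ha]⟩
        rw [this, (hXodd 1 odd_one).1]
      · have : {ω | S 1 ω = x ∧ M 1 ω = a} ∩ {ω | X 1 ω = 1} = ∅ := by
          ext ω
          simp only [Set.mem_inter_iff, Set.mem_setOf_eq, Set.mem_empty_iff_false, iff_false]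
          rintro ⟨⟨h1, h2⟩, h3⟩
          obtain ⟨hs, hm'⟩ := hx1 ω h3
          exact h ⟨by rw [← h1, hs], by rw [← h2, hm']⟩
        rw [this, measure_empty]
    have h0 : μ ({ω | S 1 ω = x ∧ M 1 ω = a} ∩ {ω | X 1 ω = 0})
        = if x = 0 ∧ a = 0 then ENNReal.ofReal q else 0 := by
      split_ifs with h
      · obtain ⟨hx, ha⟩ := h
        have : {ω | S 1 ω = x ∧ M 1 ω = a} ∩ {ω | X 1 ω = 0} = {ω | X 1 ω = 0} := by
          ext ω
          simp only [Set.mem_inter_iff, Set.mem_setOf_eq, and_iff_right_iff_imp]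
          intro hω
          obtain ⟨hs, hm'⟩ := hx0 ω hω
          exact ⟨by rw [hs, hx], by rw [hm', ha]⟩
        rw [this, (hXodd 1 odd_one).2]
      · have : {ω | S 1 ω = x ∧ M 1 ω = a} ∩ {ω | X 1 ω = 0} = ∅ := by
          ext ω
          simp only [Set.mem_inter_iff, Set.mem_setOf_eq, Set.mem_empty_iff_false, iff_false]
          rintro ⟨⟨h1, h2⟩, h3⟩
          obtain ⟨hs, hm'⟩ := hx0 ω h3
          exact h ⟨by rw [← h1, hs], by rw [← h2, hm']⟩
        rw [this, measure_empty]
    rw [hF, hsp, h1, h0]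
    have hTp := ENNReal.toReal_ofReal hp.le
    have hTq := ENNReal.toReal_ofReal hq0
    by_cases hA : x = 1 ∧ a = 1
    · obtain ⟨hx, ha⟩ := hA
      subst hx; subst ha
      norm_num [hTp]
    · by_cases hB : x = 0 ∧ a = 0
      · obtain ⟨hx, ha⟩ := hB
        subst hx; subst ha
        norm_num [hTq]
      · rw [if_neg hA, if_neg hB, add_zero, ENNReal.toReal_zero]
        split_ifs <;> first | ring1 | (exfalso; apply hA; constructor <;> assumption) | (exfalso; apply hB; constructor <;> assumption)
  · intro n hn x a hx hxa
    obtain ⟨m, rfl⟩ : ∃ m, n = m + 1 := ⟨n - 1, by omega⟩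
    have hm1 : 1 ≤ m := by omega
    have hE : MeasurableSet {ω | S (m+1) ω = x ∧ M (m+1) ω = a} := hEM (m+1) x a
    have hTp := ENNReal.toReal_ofReal hp.le
    have hTq := ENNReal.toReal_ofReal hq0
    simp only [Nat.add_sub_cancel]
    constructor
    · -- odd case
      intro hodd
      have P1 := (hXodd (m+1) hodd).1
      have P0 := (hXodd (m+1) hodd).2
      have hsp := hsplit (m+1) 1 0 one_ne_zero (hsum_odd (m+1) hodd) _ hE
      -- the X = 1 part
      have key1 : ∀ ω, X (m+1) ω = 1 →
          S (m+1) ω = S m ω + 1 ∧ M (m+1) ω = max (M m ω) (S m ω + 1) := by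
        intro ω h3
        have hs : S (m+1) ω = S m ω + 1 := by
          rw [hS m ω, h3]
          exact max_eq_left (by linarith [hSnn m ω])
        exact ⟨hs, by rw [hM m ω, hs]⟩
      have hset1 : {ω | S (m+1) ω = x ∧ M (m+1) ω = a} ∩ {ω | X (m+1) ω = 1}
          = {ω | S m ω = x - 1 ∧ max (M m ω) x = a} ∩ {ω | X (m+1) ω = 1} := by
        ext ω
        simp only [Set.mem_inter_iff, Set.mem_setOf_eq]
        constructor
        · rintro ⟨⟨h1, h2⟩, h3⟩
          obtain ⟨hs, hm'⟩ := key1 ω h3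
          have e : S m ω + 1 = x := by omega
          refine ⟨⟨by omega, ?_⟩, h3⟩
          rw [← h2, hm', e]
        · rintro ⟨⟨h1, h2⟩, h3⟩
          obtain ⟨hs, hm'⟩ := key1 ω h3
          have e : S m ω + 1 = x := by omega
          refine ⟨⟨by omega, ?_⟩, h3⟩
          rw [hm', e, h2]
      by_cases hxa' : x = a
      · -- x = a : the middle-set splits in two
        subst hxa'
        have hsetU : {ω | S m ω = x - 1 ∧ max (M m ω) x = x}
            = {ω | S m ω = x - 1 ∧ M m ω = x - 1} ∪ {ω | S m ω = x - 1 ∧ M m ω = x} := by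
          ext ω
          simp only [Set.mem_setOf_eq, Set.mem_union]
          constructor
          · rintro ⟨h1, h2⟩
            have hle := hSleM m ω
            rcases le_total (M m ω) x with hc | hc
            · exact Or.imp (fun h => ⟨h1, h⟩) (fun h => ⟨h1, h⟩) (by omega)
            · have hmx : max (M m ω) x = M m ω := max_eq_left hc
              right; exact ⟨h1, by omega⟩
          · rintro (⟨h1, h2⟩ | ⟨h1, h2⟩)
            · exact ⟨h1, by rw [h2]; exact max_eq_right (by omega)⟩
            · exact ⟨h1, by rw [h2]; exact max_self x⟩
        have hdisjU : Disjoint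
            ({ω | S m ω = x - 1 ∧ M m ω = x - 1} ∩ {ω | X (m+1) ω = 1})
            ({ω | S m ω = x - 1 ∧ M m ω = x} ∩ {ω | X (m+1) ω = 1}) := by
          rw [Set.disjoint_left]
          rintro ω ⟨⟨-, h2⟩, -⟩ ⟨⟨-, h2'⟩, -⟩
          omega
        have hμ1 : μ ({ω | S (m+1) ω = x ∧ M (m+1) ω = x} ∩ {ω | X (m+1) ω = 1})
            = μ {ω | S m ω = x - 1 ∧ M m ω = x - 1} * ENNReal.ofReal p
              + μ {ω | S m ω = x - 1 ∧ M m ω = x} * ENNReal.ofReal p := by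
          rw [hset1, hsetU, Set.union_inter_distrib_right,
            measure_union hdisjU ((hEM m _ _).inter (hXmeas _ (measurableSet_singleton _))),
            hkey, hkey, P1]
        have hμ0 : μ ({ω | S (m+1) ω = x ∧ M (m+1) ω = x} ∩ {ω | X (m+1) ω = 0})
            = μ {ω | S m ω = x ∧ M m ω = x} * ENNReal.ofReal q := by
          rw [hset0, hkey, P0]
        rw [hF, hsp, hμ1, hμ0, ENNReal.toReal_add (ENNReal.add_ne_top.2 ⟨hfin m _ _ p, hfin m _ _ p⟩) (hfin m _ _ q),
          ENNReal.toReal_add (hfin m _ _ p) (hfin m _ _ p),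
          ENNReal.toReal_mul, ENNReal.toReal_mul, ENNReal.toReal_mul, hTp, hTq,
          if_pos rfl, hF m (x-1) (x-1), hF m (x-1) x, hF m x x]
        ring
      · -- x < a
        have hxlt : x < a := lt_of_le_of_ne hxa hxa'
        have hsetE : {ω | S m ω = x - 1 ∧ max (M m ω) x = a}
            = {ω | S m ω = x - 1 ∧ M m ω = a} := by
          ext ω
          simp only [Set.mem_setOf_eq]
          constructor
          · rintro ⟨h1, h2⟩
            refine ⟨h1, ?_⟩
            rcases le_total (M m ω) x with hc | hc
            · rw [max_eq_right hc] at h2; omega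
            · rwa [max_eq_left hc] at h2
          · rintro ⟨h1, h2⟩
            refine ⟨h1, ?_⟩
            rw [max_eq_left (by omega)]
            exact h2
        have hμ1 : μ ({ω | S (m+1) ω = x ∧ M (m+1) ω = a} ∩ {ω | X (m+1) ω = 1})
            = μ {ω | S m ω = x - 1 ∧ M m ω = a} * ENNReal.ofReal p := by
          rw [hset1, hsetE, hkey, P1]
        have hμ0 : μ ({ω | S (m+1) ω = x ∧ M (m+1) ω = a} ∩ {ω | X (m+1) ω = 0})
            = μ {ω | S m ω = x ∧ M m ω = a} * ENNReal.ofReal q := by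
          rw [hset0, hkey, P0]
        rw [hF, hsp, hμ1, hμ0, ENNReal.toReal_add (hfin m _ _ p) (hfin m _ _ q),
          ENNReal.toReal_mul, ENNReal.toReal_mul, hTp, hTq,
          if_neg hxa', hF m (x-1) a, hF m x a]
        ring
    · -- even case
      intro heven
      have P0 := (hXeven (m+1) (by omega) heven).1
      have Pm := (hXeven (m+1) (by omega) heven).2
      have hsp := hsplit (m+1) 0 (-1) (by norm_num) (hsum_even (m+1) (by omega) heven) _ hE
      have keym : ∀ ω, X (m+1) ω = -1 →
          S (m+1) ω = max (S m ω - 1) 0 ∧ M (m+1) ω = M m ω := by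
        intro ω h3
        have hs : S (m+1) ω = max (S m ω - 1) 0 := by
          rw [hS m ω, h3]
          congr 1 <;> ring
        refine ⟨hs, ?_⟩
        rw [hM m ω, hs]
        exact max_eq_left (max_le (by linarith [hSleM m ω])
          (le_trans (hSnn m ω) (hSleM m ω)))
      have hsetm : {ω | S (m+1) ω = x ∧ M (m+1) ω = a} ∩ {ω | X (m+1) ω = -1}
          = {ω | max (S m ω - 1) 0 = x ∧ M m ω = a} ∩ {ω | X (m+1) ω = -1} := by
        ext ω
        simp only [Set.mem_inter_iff, Set.mem_setOf_eq]
        constructor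
        · rintro ⟨⟨h1, h2⟩, h3⟩
          obtain ⟨hs, hm'⟩ := keym ω h3
          exact ⟨⟨hs.symm.trans h1, hm'.symm.trans h2⟩, h3⟩
        · rintro ⟨⟨h1, h2⟩, h3⟩
          obtain ⟨hs, hm'⟩ := keym ω h3
          exact ⟨⟨hs.trans h1, hm'.trans h2⟩, h3⟩
      have hμ0 : μ ({ω | S (m+1) ω = x ∧ M (m+1) ω = a} ∩ {ω | X (m+1) ω = 0})
          = μ {ω | S m ω = x ∧ M m ω = a} * ENNReal.ofReal p := by
        rw [hset0, hkey, P0]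
      by_cases hx0 : x = 0
      · subst hx0
        have hsetU : {ω | max (S m ω - 1) 0 = 0 ∧ M m ω = a}
            = {ω | S m ω = 0 ∧ M m ω = a} ∪ {ω | S m ω = 1 ∧ M m ω = a} := by
          ext ω
          simp only [Set.mem_setOf_eq, Set.mem_union]
          constructor
          · rintro ⟨h1, h2⟩
            have hnn := hSnn m ω
            rcases le_total (S m ω - 1) 0 with hc | hc
            · exact Or.imp (fun h => ⟨h, h2⟩) (fun h => ⟨h, h2⟩) (by omega)
            · have := max_eq_left hc
              exact Or.inr ⟨by omega, h2⟩
          · rintro (⟨h1, h2⟩ | ⟨h1, h2⟩)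
            · refine ⟨?_, h2⟩
              rw [h1]
              exact max_eq_right (by norm_num)
            · refine ⟨?_, h2⟩
              rw [h1]
              norm_num
        have hdisjU : Disjoint
            ({ω | S m ω = 0 ∧ M m ω = a} ∩ {ω | X (m+1) ω = -1})
            ({ω | S m ω = 1 ∧ M m ω = a} ∩ {ω | X (m+1) ω = -1}) := by
          rw [Set.disjoint_left]
          rintro ω ⟨⟨h2, -⟩, -⟩ ⟨⟨h2', -⟩, -⟩
          omega
        have hμm : μ ({ω | S (m+1) ω = 0 ∧ M (m+1) ω = a} ∩ {ω | X (m+1) ω = -1})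
            = μ {ω | S m ω = 0 ∧ M m ω = a} * ENNReal.ofReal q
              + μ {ω | S m ω = 1 ∧ M m ω = a} * ENNReal.ofReal q := by
          rw [hsetm, hsetU, Set.union_inter_distrib_right,
            measure_union hdisjU ((hEM m _ _).inter (hXmeas _ (measurableSet_singleton _))),
            hkey, hkey, Pm]
        rw [hF, hsp, hμ0, hμm,
          ENNReal.toReal_add (hfin m _ _ p) (ENNReal.add_ne_top.2 ⟨hfin m _ _ q, hfin m _ _ q⟩),
          ENNReal.toReal_add (hfin m _ _ q) (hfin m _ _ q),
          ENNReal.toReal_mul, ENNReal.toReal_mul, ENNReal.toReal_mul, hTp, hTq,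
          if_pos rfl, hF m 0 a, show (0:ℤ) + 1 = 1 by norm_num, hF m 1 a]
        by_cases ha0 : (0:ℤ) = a
        · rw [if_pos ha0, ← ha0, hzero_gt m 1 0 (by norm_num), ENNReal.toReal_zero]
          ring
        · rw [if_neg ha0]
          ring
      · have hsetE : {ω | max (S m ω - 1) 0 = x ∧ M m ω = a}
            = {ω | S m ω = x + 1 ∧ M m ω = a} := by
          ext ω
          simp only [Set.mem_setOf_eq]
          constructor
          · rintro ⟨h1, h2⟩
            refine ⟨?_, h2⟩
            rcases le_total (S m ω - 1) 0 with hc | hc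
            · rw [max_eq_right hc] at h1; omega
            · rw [max_eq_left hc] at h1; omega
          · rintro ⟨h1, h2⟩
            refine ⟨?_, h2⟩
            rw [h1]
            have e : x + 1 - 1 = x := by ring
            rw [e]
            exact max_eq_left hx
        have hμm : μ ({ω | S (m+1) ω = x ∧ M (m+1) ω = a} ∩ {ω | X (m+1) ω = -1})
            = μ {ω | S m ω = x + 1 ∧ M m ω = a} * ENNReal.ofReal q := by
          rw [hsetm, hsetE, hkey, Pm]
        rw [hF, hsp, hμ0, hμm, ENNReal.toReal_add (hfin m _ _ p) (hfin m _ _ q),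
          ENNReal.toReal_mul, ENNReal.toReal_mul, hTp, hTq,
          if_neg hx0, hF m x a, hF m (x+1) a]
        by_cases hxa' : x = a
        · rw [if_pos hxa', hxa', hzero_gt m (a+1) a (by omega), ENNReal.toReal_zero]
          ring
        · rw [if_neg hxa']
          ring
end

section
/- Let F_n(x,a) = P(S_n = x and M_n = a) for integers 0 ≤ x ≤ a, with the convention that F_n(x,a) = 0 if x < 0 or a < 0 or x > a. Then for every even n ≥ 2, every a ≥ 1 and every 0 ≤ x ≤ a: F_n(x,a) = p·δ_{x,a}·(p + q·δ_{x,0})·F_{n-2}(x-1,a-1) + p·(p + q·δ_{x,0})·F_{n-2}(x-1,a) + p·q·δ_{x+1,a}·(1 - δ_{x,a})·F_{n-2}(x,a-1) + q·[(p + q·δ_{x,0}) + p·(1 - δ_{x,a})]·F_{n-2}(x,a) + q²·(1 - δ_{x,a})·F_{n-2}(x+1,a), where F_0(x,a) = δ_{x,0}δ_{a,0} and δ denotes the Kronecker delta. -/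
open MeasureTheory ProbabilityTheory

/-- Auxiliary: reflected walk as a function of the increment sequence. -/
def trafficShat : ℕ → (ℕ → ℤ) → ℤ
  | 0, _ => 0
  | (j+1), f => max (trafficShat j f + f (j+1)) 0

/-- Auxiliary: running maximum as a function of the increment sequence. -/
def trafficMhat : ℕ → (ℕ → ℤ) → ℤ
  | 0, _ => 0
  | (j+1), f => max (trafficMhat j f) (trafficShat (j+1) f)

lemma trafficShat_meas (j : ℕ) : Measurable (trafficShat j) := by
  induction j with
  | zero => exact measurable_const
  | succ j ih => exact (ih.add (measurable_pi_apply _)).max measurable_const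

lemma trafficMhat_meas (j : ℕ) : Measurable (trafficMhat j) := by
  induction j with
  | zero => exact measurable_const
  | succ j ih => exact ih.max (trafficShat_meas _)

lemma trafficShat_congr {j : ℕ} {f g : ℕ → ℤ} (h : ∀ i ≤ j, f i = g i) :
    trafficShat j f = trafficShat j g := by
  induction j with
  | zero => rfl
  | succ j ih =>
      simp only [trafficShat, ih (fun i hi => h i (by omega)), h (j+1) le_rfl]

lemma trafficMhat_congr {j : ℕ} {f g : ℕ → ℤ} (h : ∀ i ≤ j, f i = g i) :
    trafficMhat j f = trafficMhat j g := by
  induction j with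
  | zero => rfl
  | succ j ih =>
      simp only [trafficMhat, ih (fun i hi => h i (by omega)), trafficShat_congr h]

/-- For the ℓ = 1 (RG-cycle) reflected traffic walk, the joint law
`F n x a = P(S_n = x ∧ M_n = a)` satisfies the two-step (full light-cycle) recurrence
for even n ≥ 2. -/
theorem maxQueue_F_two_step_recurrence
    (p q : ℝ) (hp : 0 < p) (hpq : p ≤ 1 / 2) (hq : q = 1 - p)
    {Ω : Type*} [MeasurableSpace Ω] (μ : Measure Ω) [IsProbabilityMeasure μ]
    (X : ℕ → Ω → ℤ) (hXmeas : ∀ i, Measurable (X i))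
    (hXindep : iIndepFun X μ)
    (hXodd : ∀ i : ℕ, Odd i →
      μ {ω | X i ω = 1} = ENNReal.ofReal p ∧ μ {ω | X i ω = 0} = ENNReal.ofReal q)
    (hXeven : ∀ i : ℕ, 1 ≤ i → Even i →
      μ {ω | X i ω = 0} = ENNReal.ofReal p ∧ μ {ω | X i ω = -1} = ENNReal.ofReal q)
    (S : ℕ → Ω → ℤ) (hS0 : ∀ ω, S 0 ω = 0)
    (hS : ∀ (j : ℕ) (ω : Ω), S (j + 1) ω = max (S j ω + X (j + 1) ω) 0)
    (M : ℕ → Ω → ℤ) (hM0 : ∀ ω, M 0 ω = S 0 ω)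
    (hM : ∀ (n : ℕ) (ω : Ω), M (n + 1) ω = max (M n ω) (S (n + 1) ω))
    (F : ℕ → ℤ → ℤ → ℝ)
    (hF : ∀ (n : ℕ) (x a : ℤ), F n x a = (μ {ω | S n ω = x ∧ M n ω = a}).toReal) :
    ∀ n : ℕ, 2 ≤ n → Even n → ∀ x a : ℤ, 0 ≤ x → x ≤ a → 1 ≤ a →
      F n x a =
        p * (if x = a then (1 : ℝ) else 0) * (p + q * (if x = 0 then (1 : ℝ) else 0))
            * F (n - 2) (x - 1) (a - 1)
        + p * (p + q * (if x = 0 then (1 : ℝ) else 0)) * F (n - 2) (x - 1) a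
        + p * q * (if x + 1 = a then (1 : ℝ) else 0) * (1 - (if x = a then (1 : ℝ) else 0))
            * F (n - 2) x (a - 1)
        + q * ((p + q * (if x = 0 then (1 : ℝ) else 0))
            + p * (1 - (if x = a then (1 : ℝ) else 0))) * F (n - 2) x a
        + q ^ 2 * (1 - (if x = a then (1 : ℝ) else 0)) * F (n - 2) (x + 1) a := by
  have hq0 : 0 ≤ q := by rw [hq]; linarith
  -- measurability of S and M
  have hSmeas : ∀ j, Measurable (S j) := by
    intro j
    induction j with
    | zero =>
        have : S 0 = fun _ => (0 : ℤ) := funext hS0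
        rw [this]; exact measurable_const
    | succ j ih =>
        have : S (j+1) = fun ω => max (S j ω + X (j+1) ω) 0 := funext (hS j)
        rw [this]; exact (ih.add (hXmeas _)).max measurable_const
  have hMmeas : ∀ j, Measurable (M j) := by
    intro j
    induction j with
    | zero =>
        have : M 0 = S 0 := funext hM0
        rw [this]; exact hSmeas 0
    | succ j ih =>
        have : M (j+1) = fun ω => max (M j ω) (S (j+1) ω) := funext (hM j)
        rw [this]; exact ih.max (hSmeas _)
  -- pointwise facts
  have hSnn : ∀ j ω, 0 ≤ S j ω := by
    intro j ω
    induction j with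
    | zero => simp [hS0]
    | succ j ih => have := hS j ω; omega
  have hSM : ∀ j ω, S j ω ≤ M j ω := by
    intro j ω
    induction j with
    | zero => simp [hM0]
    | succ j ih => have := hM j ω; omega
  -- representation via trafficShat / trafficMhat
  have hrep : ∀ j ω, S j ω = trafficShat j (fun i => X i ω) ∧
      M j ω = trafficMhat j (fun i => X i ω) := by
    intro j ω
    induction j with
    | zero => exact ⟨hS0 ω, by rw [hM0, hS0]; rfl⟩
    | succ j ih =>
        constructor
        · rw [hS j ω, ih.1]; rfl
        · rw [hM j ω, ih.2, hS j ω, ih.1]; rfl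
  -- measurability of events
  have hEmeas : ∀ (j : ℕ) (s b : ℤ), MeasurableSet {ω | S j ω = s ∧ M j ω = b} := by
    intro j s b
    have : {ω | S j ω = s ∧ M j ω = b} = S j ⁻¹' {s} ∩ M j ⁻¹' {b} := by
      ext ω; simp
    rw [this]
    exact (hSmeas j (measurableSet_singleton s)).inter (hMmeas j (measurableSet_singleton b))
  -- independence
  have hindep : ∀ (j : ℕ) (s b u : ℤ),
      μ {ω | (S j ω = s ∧ M j ω = b) ∧ X (j+1) ω = u}
        = μ {ω | S j ω = s ∧ M j ω = b} * μ {ω | X (j+1) ω = u} := by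
    intro j s b u
    classical
    set Sr : Finset ℕ := Finset.range (j+1) with hSr
    have hd : Disjoint Sr ({j+1} : Finset ℕ) := by
      simp [hSr, Finset.disjoint_singleton_right]
    have hIF := hXindep.indepFun_finset Sr {j+1} hd hXmeas
    set ext : (Sr → ℤ) → ℕ → ℤ := fun h i => if hi : i ∈ Sr then h ⟨i, hi⟩ else 0 with hext
    have hextmeas : Measurable ext := by
      apply measurable_pi_lambda
      intro i
      by_cases hi : i ∈ Sr
      · simpa [hext, hi] using measurable_pi_apply (⟨i, hi⟩ : Sr)
      · simpa [hext, hi] using measurable_const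
    set φ : (Sr → ℤ) → ℤ × ℤ := fun h => (trafficShat j (ext h), trafficMhat j (ext h)) with hφ
    have hφmeas : Measurable φ :=
      ((trafficShat_meas j).comp hextmeas).prodMk ((trafficMhat_meas j).comp hextmeas)
    have hjm : (j+1) ∈ ({j+1} : Finset ℕ) := Finset.mem_singleton_self _
    set ψ : (({j+1} : Finset ℕ) → ℤ) → ℤ := fun h => h ⟨j+1, hjm⟩ with hψ
    have hψmeas : Measurable ψ := measurable_pi_apply _
    have hIF2 : IndepFun (fun ω => (S j ω, M j ω)) (X (j+1)) μ := by
      have h2 := hIF.comp hφmeas hψmeas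
      have e1 : (φ ∘ fun ω (i : Sr) => X i ω) = fun ω => (S j ω, M j ω) := by
        funext ω
        have key : ∀ i ≤ j, ext (fun (i' : Sr) => X i' ω) i = X i ω := by
          intro i hi
          have hmem : i ∈ Sr := Finset.mem_range.mpr (by omega)
          simp [hext, hmem]
        simp only [Function.comp, hφ]
        rw [trafficShat_congr key, trafficMhat_congr key, ← (hrep j ω).1, ← (hrep j ω).2]
      have e2 : (ψ ∘ fun ω (i : ({j+1} : Finset ℕ)) => X i ω) = X (j+1) := rfl
      rwa [e1, e2] at h2
    have hmul := hIF2.measure_inter_preimage_eq_mul ({(s,b)} : Set (ℤ×ℤ)) ({u} : Set ℤ)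
        (measurableSet_singleton _) (measurableSet_singleton _)
    have eA : {ω | S j ω = s ∧ M j ω = b} = (fun ω => (S j ω, M j ω)) ⁻¹' {(s,b)} := by
      ext ω; simp [Prod.ext_iff]
    have eC : {ω | (S j ω = s ∧ M j ω = b) ∧ X (j+1) ω = u}
        = (fun ω => (S j ω, M j ω)) ⁻¹' {(s,b)} ∩ X (j+1) ⁻¹' {u} := by
      ext ω; simp [Prod.ext_iff, and_assoc]
    rw [eC, eA, hmul]; rfl
  -- a.e. two-valuedness & partition of a measurable event
  have hsplit : ∀ (E A B : Set Ω), MeasurableSet A → MeasurableSet B → Disjoint A B →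
      μ (A ∪ B)ᶜ = 0 → μ E = μ (E ∩ A) + μ (E ∩ B) := by
    intro E A B hA hB hAB h0
    have h1 : μ (E ∩ (A ∪ B)) + μ (E \ (A ∪ B)) = μ E :=
      measure_inter_add_diff E (hA.union hB)
    have h2 : μ (E \ (A ∪ B)) = 0 :=
      measure_mono_null (fun ω hω => hω.2) h0
    have h5 : μ ((E ∩ (A ∪ B)) ∩ A) + μ ((E ∩ (A ∪ B)) \ A) = μ (E ∩ (A ∪ B)) :=
      measure_inter_add_diff _ hA
    have e5 : (E ∩ (A ∪ B)) ∩ A = E ∩ A := by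
      ext ω; constructor
      · rintro ⟨⟨h, _⟩, ha⟩; exact ⟨h, ha⟩
      · rintro ⟨h, ha⟩; exact ⟨⟨h, Or.inl ha⟩, ha⟩
    have e6 : (E ∩ (A ∪ B)) \ A = E ∩ B := by
      ext ω; constructor
      · rintro ⟨⟨h, hab⟩, hna⟩
        rcases hab with ha | hb
        · exact absurd ha hna
        · exact ⟨h, hb⟩
      · rintro ⟨h, hb⟩
        exact ⟨⟨h, Or.inr hb⟩, fun ha => (Set.disjoint_left.mp hAB ha) hb⟩
    rw [e5, e6] at h5
    rw [← h5, h2, add_zero] at h1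
    exact h1.symm
  have hXm : ∀ (i : ℕ) (u : ℤ), MeasurableSet {ω | X i ω = u} := by
    intro i u
    exact hXmeas i (measurableSet_singleton u)
  have hfull : ∀ (i : ℕ) (u v : ℤ), u ≠ v →
      μ {ω | X i ω = u} = ENNReal.ofReal p → μ {ω | X i ω = v} = ENNReal.ofReal q →
      μ ({ω | X i ω = u} ∪ {ω | X i ω = v})ᶜ = 0 := by
    intro i u v huv h1 h2
    have hd : Disjoint {ω | X i ω = u} {ω | X i ω = v} := by
      rw [Set.disjoint_left]
      intro ω hu hv
      simp only [Set.mem_setOf_eq] at hu hv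
      exact huv (hu ▸ hv ▸ rfl)
    have hone : μ ({ω | X i ω = u} ∪ {ω | X i ω = v}) = 1 := by
      rw [measure_union hd (hXm i v), h1, h2, ← ENNReal.ofReal_add hp.le hq0]
      rw [show p + q = 1 by rw [hq]; ring, ENNReal.ofReal_one]
    rw [measure_compl ((hXm i u).union (hXm i v)) (measure_ne_top _ _), hone,
      measure_univ, tsub_self]
  -- degenerate events
  have hdeg : ∀ (j : ℕ) (s b : ℤ), s < 0 ∨ b < s → F j s b = 0 := by
    intro j s b h
    have : {ω | S j ω = s ∧ M j ω = b} = ∅ := by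
      ext ω
      simp only [Set.mem_setOf_eq, Set.mem_empty_iff_false, iff_false, not_and]
      intro e1 e2
      have := hSnn j ω; have := hSM j ω; omega
    rw [hF, this]; simp
  -- generic toReal converter for the step identity shape
  have hconv : ∀ (A B C D : ENNReal), A ≠ ⊤ → B ≠ ⊤ → C ≠ ⊤ → D ≠ ⊤ →
      ((A + B) * ENNReal.ofReal p + C * ENNReal.ofReal q = D) →
      D.toReal = (A.toReal + B.toReal) * p + C.toReal * q := by
    intro A B C D hA hB hC hD h
    rw [← h, ENNReal.toReal_add, ENNReal.toReal_mul, ENNReal.toReal_mul,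
      ENNReal.toReal_add hA hB, ENNReal.toReal_ofReal hp.le, ENNReal.toReal_ofReal hq0]
    · exact ENNReal.mul_ne_top (by finiteness) ENNReal.ofReal_ne_top
    · exact ENNReal.mul_ne_top hC ENNReal.ofReal_ne_top
  have hconv2 : ∀ (A B C D : ENNReal), A ≠ ⊤ → B ≠ ⊤ → C ≠ ⊤ → D ≠ ⊤ →
      (A * ENNReal.ofReal p + (B + C) * ENNReal.ofReal q = D) →
      D.toReal = A.toReal * p + (B.toReal + C.toReal) * q := by
    intro A B C D hA hB hC hD h
    rw [← h, ENNReal.toReal_add, ENNReal.toReal_mul, ENNReal.toReal_mul,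
      ENNReal.toReal_add hB hC, ENNReal.toReal_ofReal hp.le, ENNReal.toReal_ofReal hq0]
    · exact ENNReal.mul_ne_top hA ENNReal.ofReal_ne_top
    · exact ENNReal.mul_ne_top (by finiteness) ENNReal.ofReal_ne_top
  -- Step 1: odd step (green light), X ∈ {1, 0}
  have step1 : ∀ (j : ℕ), Odd (j+1) → ∀ x a : ℤ, 0 ≤ x → x ≤ a →
      F (j+1) x a = (F j (x-1) a + (if x = a then F j (x-1) (a-1) else 0)) * p
        + F j x a * q := by
    intro j hj x a hx hxa
    obtain ⟨hP, hQ⟩ := hXodd (j+1) hj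
    have hAB : Disjoint {ω | X (j+1) ω = 1} {ω | X (j+1) ω = 0} := by
      rw [Set.disjoint_left]
      intro ω h1 h0
      simp only [Set.mem_setOf_eq] at h1 h0
      omega
    have hsp := hsplit {ω | S (j+1) ω = x ∧ M (j+1) ω = a} _ _ (hXm (j+1) 1) (hXm (j+1) 0)
      hAB (hfull (j+1) 1 0 (by norm_num) hP hQ)
    have eB : {ω | S (j+1) ω = x ∧ M (j+1) ω = a} ∩ {ω | X (j+1) ω = 0}
        = {ω | (S j ω = x ∧ M j ω = a) ∧ X (j+1) ω = 0} := by
      ext ω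
      have h1 := hS j ω; have h2 := hM j ω
      have h3 := hSnn j ω; have h4 := hSM j ω
      simp only [Set.mem_inter_iff, Set.mem_setOf_eq]
      omega
    by_cases hxa' : x = a
    · have eA : {ω | S (j+1) ω = x ∧ M (j+1) ω = a} ∩ {ω | X (j+1) ω = 1}
          = {ω | (S j ω = x-1 ∧ M j ω = a) ∧ X (j+1) ω = 1}
            ∪ {ω | (S j ω = x-1 ∧ M j ω = a-1) ∧ X (j+1) ω = 1} := by
        ext ω
        have h1 := hS j ω; have h2 := hM j ω
        have h3 := hSnn j ω; have h4 := hSM j ω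
        simp only [Set.mem_inter_iff, Set.mem_union, Set.mem_setOf_eq]
        omega
      have hdisj : Disjoint {ω | (S j ω = x-1 ∧ M j ω = a) ∧ X (j+1) ω = 1}
          {ω | (S j ω = x-1 ∧ M j ω = a-1) ∧ X (j+1) ω = 1} := by
        rw [Set.disjoint_left]
        intro ω hA hB
        simp only [Set.mem_setOf_eq] at hA hB
        omega
      have hm2 : MeasurableSet {ω | (S j ω = x-1 ∧ M j ω = a-1) ∧ X (j+1) ω = 1} :=
        (hEmeas j (x-1) (a-1)).inter (hXm (j+1) 1)
      have key : (μ {ω | S j ω = x-1 ∧ M j ω = a} + μ {ω | S j ω = x-1 ∧ M j ω = a-1})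
            * ENNReal.ofReal p
          + μ {ω | S j ω = x ∧ M j ω = a} * ENNReal.ofReal q
          = μ {ω | S (j+1) ω = x ∧ M (j+1) ω = a} := by
        rw [hsp, eA, eB, measure_union hdisj hm2, hindep, hindep, hindep, hP, hQ]
        ring
      have := hconv (μ {ω | S j ω = x-1 ∧ M j ω = a}) (μ {ω | S j ω = x-1 ∧ M j ω = a-1})
        (μ {ω | S j ω = x ∧ M j ω = a}) _ (measure_ne_top _ _) (measure_ne_top _ _)
        (measure_ne_top _ _) (measure_ne_top _ _) key
      simp only [if_pos hxa', hF]
      exact this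
    · have eA : {ω | S (j+1) ω = x ∧ M (j+1) ω = a} ∩ {ω | X (j+1) ω = 1}
          = {ω | (S j ω = x-1 ∧ M j ω = a) ∧ X (j+1) ω = 1} := by
        ext ω
        have h1 := hS j ω; have h2 := hM j ω
        have h3 := hSnn j ω; have h4 := hSM j ω
        simp only [Set.mem_inter_iff, Set.mem_setOf_eq]
        omega
      have key : (μ {ω | S j ω = x-1 ∧ M j ω = a} + 0) * ENNReal.ofReal p
          + μ {ω | S j ω = x ∧ M j ω = a} * ENNReal.ofReal q
          = μ {ω | S (j+1) ω = x ∧ M (j+1) ω = a} := by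
        rw [hsp, eA, eB, hindep, hindep, hP, hQ]
        ring
      have := hconv (μ {ω | S j ω = x-1 ∧ M j ω = a}) 0
        (μ {ω | S j ω = x ∧ M j ω = a}) _ (measure_ne_top _ _) (by finiteness)
        (measure_ne_top _ _) (measure_ne_top _ _) key
      simp only [if_neg hxa', hF]
      simpa using this
  -- Step 2: even step (red light), X ∈ {0, -1}
  have step2 : ∀ (j : ℕ), Even (j+2) → ∀ x a : ℤ, 0 ≤ x → x ≤ a →
      F (j+2) x a = F (j+1) x a * p
        + (F (j+1) (x+1) a + (if x = 0 then F (j+1) 0 a else 0)) * q := by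
    intro j hj x a hx hxa
    obtain ⟨hP, hQ⟩ := hXeven (j+2) (by omega) hj
    have hindep2 : ∀ s b u : ℤ,
        μ {ω | (S (j+1) ω = s ∧ M (j+1) ω = b) ∧ X (j+2) ω = u}
          = μ {ω | S (j+1) ω = s ∧ M (j+1) ω = b} * μ {ω | X (j+2) ω = u} :=
      fun s b u => hindep (j+1) s b u
    have hAB : Disjoint {ω | X (j+2) ω = 0} {ω | X (j+2) ω = -1} := by
      rw [Set.disjoint_left]
      intro ω h1 h0
      simp only [Set.mem_setOf_eq] at h1 h0
      omega
    have hsp := hsplit {ω | S (j+2) ω = x ∧ M (j+2) ω = a} _ _ (hXm (j+2) 0) (hXm (j+2) (-1))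
      hAB (hfull (j+2) 0 (-1) (by norm_num) hP hQ)
    have eA : {ω | S (j+2) ω = x ∧ M (j+2) ω = a} ∩ {ω | X (j+2) ω = 0}
        = {ω | (S (j+1) ω = x ∧ M (j+1) ω = a) ∧ X (j+2) ω = 0} := by
      ext ω
      have h1 : S (j+2) ω = max (S (j+1) ω + X (j+2) ω) 0 := hS (j+1) ω
      have h2 : M (j+2) ω = max (M (j+1) ω) (S (j+2) ω) := hM (j+1) ω
      have h3 := hSnn (j+1) ω; have h4 := hSM (j+1) ω
      simp only [Set.mem_inter_iff, Set.mem_setOf_eq]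
      omega
    by_cases hx0 : x = 0
    · have eB : {ω | S (j+2) ω = x ∧ M (j+2) ω = a} ∩ {ω | X (j+2) ω = -1}
          = {ω | (S (j+1) ω = x+1 ∧ M (j+1) ω = a) ∧ X (j+2) ω = -1}
            ∪ {ω | (S (j+1) ω = 0 ∧ M (j+1) ω = a) ∧ X (j+2) ω = -1} := by
        ext ω
        have h1 : S (j+2) ω = max (S (j+1) ω + X (j+2) ω) 0 := hS (j+1) ω
        have h2 : M (j+2) ω = max (M (j+1) ω) (S (j+2) ω) := hM (j+1) ω
        have h3 := hSnn (j+1) ω; have h4 := hSM (j+1) ω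
        simp only [Set.mem_inter_iff, Set.mem_union, Set.mem_setOf_eq]
        omega
      have hdisj : Disjoint {ω | (S (j+1) ω = x+1 ∧ M (j+1) ω = a) ∧ X (j+2) ω = -1}
          {ω | (S (j+1) ω = 0 ∧ M (j+1) ω = a) ∧ X (j+2) ω = -1} := by
        rw [Set.disjoint_left]
        intro ω hA hB
        simp only [Set.mem_setOf_eq] at hA hB
        omega
      have hm2 : MeasurableSet {ω | (S (j+1) ω = 0 ∧ M (j+1) ω = a) ∧ X (j+2) ω = -1} :=
        (hEmeas (j+1) 0 a).inter (hXm (j+2) (-1))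
      have key : μ {ω | S (j+1) ω = x ∧ M (j+1) ω = a} * ENNReal.ofReal p
          + (μ {ω | S (j+1) ω = x+1 ∧ M (j+1) ω = a}
              + μ {ω | S (j+1) ω = 0 ∧ M (j+1) ω = a}) * ENNReal.ofReal q
          = μ {ω | S (j+2) ω = x ∧ M (j+2) ω = a} := by
        rw [hsp, eA, eB, measure_union hdisj hm2, hindep2, hindep2, hindep2, hP, hQ]
        ring
      have := hconv2 (μ {ω | S (j+1) ω = x ∧ M (j+1) ω = a})
        (μ {ω | S (j+1) ω = x+1 ∧ M (j+1) ω = a}) (μ {ω | S (j+1) ω = 0 ∧ M (j+1) ω = a}) _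
        (measure_ne_top _ _) (measure_ne_top _ _) (measure_ne_top _ _) (measure_ne_top _ _) key
      simp only [if_pos hx0, hF]
      exact this
    · have eB : {ω | S (j+2) ω = x ∧ M (j+2) ω = a} ∩ {ω | X (j+2) ω = -1}
          = {ω | (S (j+1) ω = x+1 ∧ M (j+1) ω = a) ∧ X (j+2) ω = -1} := by
        ext ω
        have h1 : S (j+2) ω = max (S (j+1) ω + X (j+2) ω) 0 := hS (j+1) ω
        have h2 : M (j+2) ω = max (M (j+1) ω) (S (j+2) ω) := hM (j+1) ω
        have h3 := hSnn (j+1) ω; have h4 := hSM (j+1) ω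
        simp only [Set.mem_inter_iff, Set.mem_setOf_eq]
        omega
      have key : μ {ω | S (j+1) ω = x ∧ M (j+1) ω = a} * ENNReal.ofReal p
          + (μ {ω | S (j+1) ω = x+1 ∧ M (j+1) ω = a} + 0) * ENNReal.ofReal q
          = μ {ω | S (j+2) ω = x ∧ M (j+2) ω = a} := by
        rw [hsp, eA, eB, hindep2, hindep2, hP, hQ]
        ring
      have := hconv2 (μ {ω | S (j+1) ω = x ∧ M (j+1) ω = a})
        (μ {ω | S (j+1) ω = x+1 ∧ M (j+1) ω = a}) 0 _
        (measure_ne_top _ _) (measure_ne_top _ _) (by finiteness) (measure_ne_top _ _) key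
      simp only [if_neg hx0, hF]
      simpa using this
  -- Final assembly
  intro n hn2 hev x a hx hxa ha
  obtain ⟨m, rfl⟩ : ∃ m, n = m + 2 := ⟨n - 2, by omega⟩
  have hmsub : m + 2 - 2 = m := by omega
  have hodd : Odd (m+1) := by
    rcases hev with ⟨k, hk⟩
    exact ⟨k - 1, by omega⟩
  rw [hmsub]
  by_cases hxa' : x = a
  · have hx1 : 1 ≤ x := by omega
    have hx0 : ¬ x = 0 := by omega
    have h2 := step2 m hev x a hx hxa
    rw [step1 m hodd x a hx hxa, if_pos hxa'] at h2
    have hd : F (m+1) (x+1) a = 0 := by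
      rw [hF]
      have he : {ω | S (m+1) ω = x + 1 ∧ M (m+1) ω = a} = ∅ := by
        ext ω
        have h3 := hSM (m+1) ω
        simp only [Set.mem_setOf_eq, Set.mem_empty_iff_false, iff_false, not_and]
        omega
      rw [he]; simp
    rw [hd, if_neg hx0] at h2
    rw [h2]
    simp only [if_pos hxa', if_neg hx0, if_neg (show ¬ x + 1 = a by omega)]
    ring
  · have hxlt : x < a := lt_of_le_of_ne hxa hxa'
    have h2 := step2 m hev x a hx hxa
    rw [step1 m hodd x a hx hxa, if_neg hxa',
      step1 m hodd (x+1) a (by omega) (by omega)] at h2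
    simp only [show x+1-1 = x from by ring] at h2
    by_cases hx0 : x = 0
    · subst hx0
      rw [if_pos rfl, step1 m hodd 0 a le_rfl (by omega),
        if_neg (show ¬ (0:ℤ) = a by omega), hdeg m (0-1) a (by omega)] at h2
      rw [h2]
      simp only [if_neg hxa', reduceIte,
        hdeg m ((0:ℤ)-1) a (by omega), hdeg m ((0:ℤ)-1) (a-1) (by omega)]
      by_cases h1a : (0:ℤ)+1 = a
      · simp only [if_pos h1a]; ring
      · simp only [if_neg h1a]; ring
    · rw [if_neg hx0] at h2
      rw [h2]
      simp only [if_neg hxa', if_neg hx0]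
      by_cases h1a : x+1 = a
      · simp only [if_pos h1a]; ring
      · simp only [if_neg h1a]; ring
end

section
/- For every real λ with 0 < λ < 1, one has λ = 2θ(λ)/(θ(λ) + 2pq)², and moreover pλ/(1 - qλ) = 2pθ(λ)/(θ(λ)² - 2(1 - 2p)q·θ(λ) + 4p²q²). -/
/-- λ = 2θ/(θ + 2pq)² and pλ/(1 - qλ) = 2pθ/(θ² - 2(1-2p)qθ + 4p²q²). -/
theorem maxQueue_lambda_theta_identities
    (p q : ℝ) (hp : 0 < p) (hpq : p ≤ 1 / 2) (hq : q = 1 - p)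
    (l : ℝ) (hl : 0 < l) (hl1 : l < 1)
    (θ : ℝ) (hθ : θ = (1 - 2 * p * q * l - Real.sqrt (1 - 4 * p * q * l)) / l) :
    l = 2 * θ / (θ + 2 * p * q) ^ 2 ∧
    p * l / (1 - q * l)
      = 2 * p * θ / (θ ^ 2 - 2 * (1 - 2 * p) * q * θ + 4 * p ^ 2 * q ^ 2) := by
  have hq0 : 0 < q := by rw [hq]; linarith
  set s := Real.sqrt (1 - 4 * p * q * l) with hs
  have hpq1 : 4 * p * q * l < 1 := by
    have h4 : 4 * p * q ≤ 1 := by rw [hq]; nlinarith [sq_nonneg (1 - 2 * p)]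
    have h5 : 0 < 4 * p * q := by positivity
    nlinarith
  have hs0 : 0 ≤ s := Real.sqrt_nonneg _
  have hs2 : s ^ 2 = 1 - 4 * p * q * l := by
    rw [hs, sq, Real.mul_self_sqrt]; linarith
  have hln : l ≠ 0 := ne_of_gt hl
  have hθl : θ * l = 1 - 2 * p * q * l - s := by
    rw [hθ]; field_simp
  have hnum : 0 < 1 - 2 * p * q * l - s := by
    nlinarith [mul_pos (mul_pos hp hq0) hl]
  have hθpos : 0 < θ := by rw [hθ]; exact div_pos hnum hl
  -- key polynomial identity
  have h1 : l ^ 2 * (θ + 2 * p * q) ^ 2 = 2 * θ * l := by nlinarith [hθl, hs2]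
  have hkey : l * (θ + 2 * p * q) ^ 2 = 2 * θ := by
    apply mul_left_cancel₀ hln
    nlinarith [h1]
  have hsq_ne : (θ + 2 * p * q) ^ 2 ≠ 0 := by positivity
  have hql : 1 - q * l > 0 := by nlinarith
  constructor
  · rw [eq_div_iff hsq_ne]; linarith [hkey]
  · have hD : (θ ^ 2 - 2 * (1 - 2 * p) * q * θ + 4 * p ^ 2 * q ^ 2) * l
        = 2 * θ * (1 - q * l) := by nlinarith [hkey]
    have hDpos : 0 < θ ^ 2 - 2 * (1 - 2 * p) * q * θ + 4 * p ^ 2 * q ^ 2 := by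
      have h2 : 0 < 2 * θ * (1 - q * l) := by positivity
      nlinarith
    rw [div_eq_div_iff (by linarith) (ne_of_gt hDpos)]
    nlinarith [hD]
end

section
/- For every integer a ≥ 2 and every real λ with 0 < λ < 1, Σ_{n≥1} λⁿ P(M_{2n} = a) = (pλ/(1 - λ)) · [G(λ,a-1,a-1) - G(λ,a,a)], where G(λ,b,b) = Σ_{n≥1} λⁿ P(S_{2n} = b and M_{2n} = b). -/
open MeasureTheory ProbabilityTheory
open scoped ENNReal NNReal

namespace MaxQueueAux6

def walkS : ℕ → (ℕ → ℤ) → ℤ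
  | 0, _ => 0
  | (j+1), x => max (walkS j x + x (j+1)) 0

def walkM : ℕ → (ℕ → ℤ) → ℤ
  | 0, _ => 0
  | (j+1), x => max (walkM j x) (walkS (j+1) x)

lemma measurable_walkS (j : ℕ) : Measurable (walkS j) := by
  induction j with
  | zero => exact measurable_const
  | succ j ih => exact (ih.add (measurable_pi_apply (j+1))).max measurable_const

lemma measurable_walkM (j : ℕ) : Measurable (walkM j) := by
  induction j with
  | zero => exact measurable_const
  | succ j ih => exact ih.max (measurable_walkS (j+1))

lemma walkS_congr {j : ℕ} {x y : ℕ → ℤ} (h : ∀ i, i ≤ j → x i = y i) :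
    walkS j x = walkS j y := by
  induction j with
  | zero => rfl
  | succ j ih =>
      simp only [walkS, ih (fun i hi => h i (hi.trans (Nat.le_succ j))), h (j+1) le_rfl]

lemma walkM_congr {j : ℕ} {x y : ℕ → ℤ} (h : ∀ i, i ≤ j → x i = y i) :
    walkM j x = walkM j y := by
  induction j with
  | zero => rfl
  | succ j ih =>
      simp only [walkM, ih (fun i hi => h i (hi.trans (Nat.le_succ j))), walkS_congr h]

end MaxQueueAux6

open MaxQueueAux6

/-- For a ≥ 2,
Σ_{n≥1} λⁿ P(M_{2n} = a) = (pλ/(1-λ)) · [G(λ,a-1,a-1) - G(λ,a,a)]. -/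
theorem maxQueue_M_genfun_telescope
    (p q : ℝ) (hp : 0 < p) (hpq : p ≤ 1 / 2) (hq : q = 1 - p)
    {Ω : Type*} [MeasurableSpace Ω] (μ : Measure Ω) [IsProbabilityMeasure μ]
    (X : ℕ → Ω → ℤ) (hXmeas : ∀ i, Measurable (X i))
    (hXindep : iIndepFun X μ)
    (hXodd : ∀ i : ℕ, Odd i →
      μ {ω | X i ω = 1} = ENNReal.ofReal p ∧ μ {ω | X i ω = 0} = ENNReal.ofReal q)
    (hXeven : ∀ i : ℕ, 1 ≤ i → Even i →
      μ {ω | X i ω = 0} = ENNReal.ofReal p ∧ μ {ω | X i ω = -1} = ENNReal.ofReal q)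
    (S : ℕ → Ω → ℤ) (hS0 : ∀ ω, S 0 ω = 0)
    (hS : ∀ (j : ℕ) (ω : Ω), S (j + 1) ω = max (S j ω + X (j + 1) ω) 0)
    (M : ℕ → Ω → ℤ) (hM0 : ∀ ω, M 0 ω = S 0 ω)
    (hM : ∀ (n : ℕ) (ω : Ω), M (n + 1) ω = max (M n ω) (S (n + 1) ω))
    (a : ℕ) (ha : 2 ≤ a) (l : ℝ) (hl : 0 < l) (hl1 : l < 1)
    (G : ℕ → ℝ)
    (hG : ∀ b : ℕ, G b = ∑' n : ℕ, l ^ (n + 1)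
        * (μ {ω | S (2 * (n + 1)) ω = (b : ℤ) ∧ M (2 * (n + 1)) ω = (b : ℤ)}).toReal) :
    ∑' n : ℕ, l ^ (n + 1) * (μ {ω | M (2 * (n + 1)) ω = (a : ℤ)}).toReal
      = p * l / (1 - l) * (G (a - 1) - G a) := by
  classical
  have hq0 : 0 ≤ q := by linarith
  have hpq1 : p + q = 1 := by linarith
  have hSW : ∀ (j : ℕ) (ω : Ω), S j ω = walkS j (fun i => X i ω) := by
    intro j ω
    induction j with
    | zero => simpa [walkS] using hS0 ω
    | succ j ih => rw [hS j ω, ih]; rfl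
  have hMW : ∀ (j : ℕ) (ω : Ω), M j ω = walkM j (fun i => X i ω) := by
    intro j ω
    induction j with
    | zero => rw [hM0 ω, hS0 ω]; rfl
    | succ j ih => rw [hM j ω, ih, hSW (j+1) ω]; rfl
  have hXvec : Measurable (fun ω (i : ℕ) => X i ω) :=
    measurable_pi_lambda _ hXmeas
  have hSmeas : ∀ j, Measurable (S j) := by
    intro j
    have : S j = (walkS j) ∘ (fun ω i => X i ω) := funext fun ω => hSW j ω
    rw [this]; exact (measurable_walkS j).comp hXvec
  have hMmeas : ∀ j, Measurable (M j) := by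
    intro j
    have : M j = (walkM j) ∘ (fun ω i => X i ω) := funext fun ω => hMW j ω
    rw [this]; exact (measurable_walkM j).comp hXvec
  have hM0' : ∀ ω, M 0 ω = 0 := fun ω => (hM0 ω).trans (hS0 ω)
  have hMmono : ∀ ω, Monotone (fun j => M j ω) := by
    intro ω
    exact monotone_nat_of_le_succ (fun j => by rw [hM j ω]; exact le_max_left _ _)
  have hSleM : ∀ (j : ℕ) (ω : Ω), S j ω ≤ M j ω := by
    intro j ω
    cases j with
    | zero => exact le_of_eq (hM0 ω).symm
    | succ j => rw [hM j ω]; exact le_max_right _ _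
  have hGoodc : μ ({ω | ∀ i : ℕ, 1 ≤ i →
      (Odd i → X i ω = 0 ∨ X i ω = 1) ∧ (Even i → X i ω = 0 ∨ X i ω = -1)} : Set Ω)ᶜ = 0 := by
    have key : ∀ i : ℕ, 1 ≤ i → μ {ω | ¬ ((Odd i → X i ω = 0 ∨ X i ω = 1)
        ∧ (Even i → X i ω = 0 ∨ X i ω = -1))} = 0 := by
      intro i hi
      rcases Nat.even_or_odd i with he | ho
      · have hnodd : ¬ Odd i := by simpa [Nat.even_iff, Nat.odd_iff] using he
        have hsub : {ω | ¬ ((Odd i → X i ω = 0 ∨ X i ω = 1)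
            ∧ (Even i → X i ω = 0 ∨ X i ω = -1))} ⊆ ({ω | X i ω = 0} ∪ {ω | X i ω = -1})ᶜ := by
          intro ω hω
          simp only [Set.mem_setOf_eq, hnodd, he] at hω ⊢
          simp only [Set.mem_compl_iff, Set.mem_union, Set.mem_setOf_eq]
          tauto
        refine measure_mono_null hsub ?_
        have hd : Disjoint {ω | X i ω = 0} {ω | X i ω = -1} := by
          rw [Set.disjoint_left]; intro ω h1 h2
          simp only [Set.mem_setOf_eq] at h1 h2; omega
        have hm0 : MeasurableSet {ω | X i ω = 0} := hXmeas i (measurableSet_singleton 0)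
        have hm1 : MeasurableSet {ω | X i ω = -1} := hXmeas i (measurableSet_singleton (-1))
        have hu : μ ({ω | X i ω = 0} ∪ {ω | X i ω = -1}) = 1 := by
          rw [measure_union hd hm1, (hXeven i hi he).1, (hXeven i hi he).2,
            ← ENNReal.ofReal_add hp.le hq0, hpq1, ENNReal.ofReal_one]
        rw [measure_compl (hm0.union hm1) (measure_ne_top _ _), hu, measure_univ, tsub_self]
      · have hneven : ¬ Even i := by simpa [Nat.even_iff, Nat.odd_iff] using ho
        have hsub : {ω | ¬ ((Odd i → X i ω = 0 ∨ X i ω = 1)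
            ∧ (Even i → X i ω = 0 ∨ X i ω = -1))} ⊆ ({ω | X i ω = 1} ∪ {ω | X i ω = 0})ᶜ := by
          intro ω hω
          simp only [Set.mem_setOf_eq, hneven, ho] at hω ⊢
          simp only [Set.mem_compl_iff, Set.mem_union, Set.mem_setOf_eq]
          tauto
        refine measure_mono_null hsub ?_
        have hd : Disjoint {ω | X i ω = 1} {ω | X i ω = 0} := by
          rw [Set.disjoint_left]; intro ω h1 h2
          simp only [Set.mem_setOf_eq] at h1 h2; omega
        have hm0 : MeasurableSet {ω | X i ω = 1} := hXmeas i (measurableSet_singleton 1)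
        have hm1 : MeasurableSet {ω | X i ω = 0} := hXmeas i (measurableSet_singleton 0)
        have hu : μ ({ω | X i ω = 1} ∪ {ω | X i ω = 0}) = 1 := by
          rw [measure_union hd hm1, (hXodd i ho).1, (hXodd i ho).2,
            ← ENNReal.ofReal_add hp.le hq0, hpq1, ENNReal.ofReal_one]
        rw [measure_compl (hm0.union hm1) (measure_ne_top _ _), hu, measure_univ, tsub_self]
    have hsub : ({ω | ∀ i : ℕ, 1 ≤ i →
        (Odd i → X i ω = 0 ∨ X i ω = 1) ∧ (Even i → X i ω = 0 ∨ X i ω = -1)} : Set Ω)ᶜ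
        ⊆ ⋃ i : ℕ, {ω | 1 ≤ i ∧ ¬ ((Odd i → X i ω = 0 ∨ X i ω = 1)
            ∧ (Even i → X i ω = 0 ∨ X i ω = -1))} := by
      intro ω hω
      simp only [Set.mem_compl_iff, Set.mem_setOf_eq, not_forall] at hω
      obtain ⟨i, hi, hbad⟩ := hω
      exact Set.mem_iUnion.2 ⟨i, hi, hbad⟩
    refine measure_mono_null hsub (measure_iUnion_null fun i => ?_)
    rcases Nat.lt_or_ge i 1 with h0 | h1
    · have : {ω | 1 ≤ i ∧ ¬ ((Odd i → X i ω = 0 ∨ X i ω = 1)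
          ∧ (Even i → X i ω = 0 ∨ X i ω = -1))} = (∅ : Set Ω) := by
        ext ω; simp [Nat.lt_one_iff.mp h0]
      rw [this, measure_empty]
    · refine measure_mono_null (fun ω hω => hω.2) (key i h1)
  set Good : Set Ω := {ω | ∀ i : ℕ, 1 ≤ i →
      (Odd i → X i ω = 0 ∨ X i ω = 1) ∧ (Even i → X i ω = 0 ∨ X i ω = -1)} with hGoodDef
  have covrev : (∀ (b : ℤ), 2 ≤ b → ∀ (n : ℕ) (ω : Ω),
      (∀ i : ℕ, 1 ≤ i → (Odd i → X i ω = 0 ∨ X i ω = 1) ∧ (Even i → X i ω = 0 ∨ X i ω = -1)) →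
      b ≤ M (2*n) ω →
      ∃ k, k < n ∧ (S (2*k) ω = b - 1 ∧ M (2*k) ω = b - 1) ∧ X (2*k+1) ω = 1)
    ∧ (∀ (b : ℤ), 2 ≤ b → ∀ (k n : ℕ), k < n → ∀ ω : Ω,
      (S (2*k) ω = b - 1 ∧ M (2*k) ω = b - 1) → X (2*k+1) ω = 1 → b ≤ M (2*n) ω) := by
    constructor
    · intro b hb n ω hgood h
      have hex : ∃ m, b ≤ M m ω := ⟨2*n, h⟩
      set m := Nat.find hex with hmdef
      have hm : b ≤ M m ω := Nat.find_spec hex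
      have hmle : m ≤ 2*n := Nat.find_min' hex h
      have hm0 : m ≠ 0 := by
        intro h0
        rw [h0, hM0'] at hm; omega
      obtain ⟨j, hj⟩ : ∃ j, m = j + 1 := ⟨m - 1, by omega⟩
      have hjlt : ¬ b ≤ M j ω := Nat.find_min hex (by omega)
      have hMj : M j ω ≤ b - 1 := by omega
      rw [hj] at hm
      have hSj1 : b ≤ S (j+1) ω := by
        rw [hM j ω] at hm
        rcases le_max_iff.mp hm with h' | h'
        · omega
        · exact h'
      have hSj1' : S (j+1) ω = S j ω + X (j+1) ω := by
        rw [hS j ω]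
        rw [max_eq_left]
        rw [hS j ω] at hSj1
        rcases le_max_iff.mp hSj1 with h' | h' <;> omega
      have hSjle : S j ω ≤ b - 1 := le_trans (hSleM j ω) hMj
      rcases Nat.even_or_odd (j+1) with he | ho
      · -- even step: X ∈ {0,-1}, contradiction
        have hx := (hgood (j+1) (by omega)).2 he
        omega
      · have hx := (hgood (j+1) (by omega)).1 ho
        have hx1 : X (j+1) ω = 1 := by omega
        have hSj : S j ω = b - 1 := by omega
        have hMjeq : M j ω = b - 1 := le_antisymm hMj (hSj ▸ hSleM j ω)
        have hjeven : j % 2 = 0 := by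
          have := Nat.odd_iff.mp ho; omega
        obtain ⟨k, hk⟩ : ∃ k, j = 2*k := ⟨j/2, by omega⟩
        refine ⟨k, by omega, ⟨by rw [← hk]; exact hSj, by rw [← hk]; exact hMjeq⟩, ?_⟩
        rw [show 2*k+1 = j+1 by omega]; exact hx1
    · intro b hb k n hkn ω ⟨hSk, hMk⟩ hx
      have h1 : S (2*k+1) ω = b := by
        rw [hS (2*k) ω, hSk, hx]
        rw [max_eq_left (by omega)]; ring
      have h2 : b ≤ M (2*k+1) ω := by
        rw [hM (2*k) ω]
        rw [h1] at *
        exact le_trans (le_of_eq rfl) (by rw [← h1]; exact le_max_right _ _)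
      exact le_trans h2 (hMmono ω (by omega))
  obtain ⟨cover, rev⟩ := covrev
  have indep : ∀ (b : ℤ) (k : ℕ),
      μ ({ω | S (2*k) ω = b - 1 ∧ M (2*k) ω = b - 1} ∩ {ω | X (2*k+1) ω = 1})
        = μ {ω | S (2*k) ω = b - 1 ∧ M (2*k) ω = b - 1} * ENNReal.ofReal p := by
    intro b k
    set T : Finset ℕ := Finset.range (2*k+1) with hT
    set Sg : Finset ℕ := {2*k+1} with hSg
    have hdisj : Disjoint (T : Finset ℕ) Sg := by
      simp [hT, hSg, Finset.disjoint_singleton_right]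
    have hindep : IndepFun (fun ω (i : T) => X i ω) (fun ω (i : Sg) => X i ω) μ :=
      hXindep.indepFun_finset T Sg hdisj hXmeas
    -- the extension map
    set g : ({x // x ∈ T} → ℤ) → (ℕ → ℤ) :=
      fun y i => if h : i ∈ T then y ⟨i, h⟩ else 0 with hg
    have hgmeas : Measurable g := by
      refine measurable_pi_lambda _ fun i => ?_
      by_cases h : i ∈ T
      · simpa [hg, h] using measurable_pi_apply (⟨i, h⟩ : {x // x ∈ T})
      · simpa [hg, h] using measurable_const
    set B : Set ({x // x ∈ T} → ℤ) :=
      {y | walkS (2*k) (g y) = b - 1 ∧ walkM (2*k) (g y) = b - 1} with hB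
    have hBmeas : MeasurableSet B := by
      have h1 : Measurable fun y => walkS (2*k) (g y) := (measurable_walkS (2*k)).comp hgmeas
      have h2 : Measurable fun y => walkM (2*k) (g y) := (measurable_walkM (2*k)).comp hgmeas
      exact (h1 (measurableSet_singleton (b-1))).inter (h2 (measurableSet_singleton (b-1)))
    have hAeq : {ω | S (2*k) ω = b - 1 ∧ M (2*k) ω = b - 1}
        = (fun ω (i : T) => X i ω) ⁻¹' B := by
      ext ω
      have hcong : ∀ i, i ≤ 2*k → g (fun i : T => X i ω) i = X i ω := by
        intro i hi
        have : i ∈ T := Finset.mem_range.mpr (by omega)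
        simp [hg, this]
      simp only [Set.mem_preimage, hB, Set.mem_setOf_eq,
        walkS_congr hcong, walkM_congr hcong, hSW (2*k) ω, hMW (2*k) ω]
    have hmem : (2*k+1) ∈ Sg := Finset.mem_singleton_self _
    set D : Set ({x // x ∈ Sg} → ℤ) := (fun z => z ⟨2*k+1, hmem⟩) ⁻¹' {1} with hD
    have hDmeas : MeasurableSet D := measurable_pi_apply _ (measurableSet_singleton 1)
    have hCeq : {ω | X (2*k+1) ω = 1} = (fun ω (i : Sg) => X i ω) ⁻¹' D := by
      ext ω; simp [hD]
    rw [hAeq, hCeq, hindep.measure_inter_preimage_eq_mul B D hBmeas hDmeas, ← hCeq]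
    congr 1
    exact (hXodd (2*k+1) (Nat.odd_iff.mpr (by omega))).1
  have lemA : ∀ (b : ℤ), 2 ≤ b → ∀ (n : ℕ),
      μ {ω | b ≤ M (2*n) ω}
        = ENNReal.ofReal p
          * ∑ k ∈ Finset.range n, μ {ω | S (2*k) ω = b - 1 ∧ M (2*k) ω = b - 1} := by
    intro b hb n
    set E : ℕ → Set Ω := fun k =>
      {ω | S (2*k) ω = b - 1 ∧ M (2*k) ω = b - 1} ∩ {ω | X (2*k+1) ω = 1} with hE
    have hEmeas : ∀ k, MeasurableSet (E k) := by
      intro k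
      exact (((hSmeas (2*k)) (measurableSet_singleton (b-1))).inter
        ((hMmeas (2*k)) (measurableSet_singleton (b-1)))).inter
        ((hXmeas (2*k+1)) (measurableSet_singleton 1))
    have hEsub : ∀ k, k < n → E k ⊆ {ω | b ≤ M (2*n) ω} := by
      intro k hk ω hω
      exact rev b hb k n hk ω hω.1 hω.2
    have hcover : {ω | b ≤ M (2*n) ω} ⊆ (⋃ k ∈ Finset.range n, E k) ∪ Goodᶜ := by
      intro ω hω
      by_cases hg : ω ∈ Good
      · obtain ⟨k, hk, h1, h2⟩ := cover b hb n ω hg hω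
        exact Or.inl (Set.mem_biUnion (Finset.mem_range.mpr hk) ⟨h1, h2⟩)
      · exact Or.inr hg
    have hdisj : (↑(Finset.range n) : Set ℕ).PairwiseDisjoint E := by
      intro k hk k' hk' hne
      simp only [Function.onFun]
      rcases Nat.lt_or_ge k k' with h | h
      · rw [Set.disjoint_left]
        rintro ω ⟨h1, h2⟩ ⟨h1', _⟩
        have hbb := rev b hb k k' h ω h1 h2
        have := h1'.2
        omega
      · have h' : k' < k := by omega
        rw [Set.disjoint_left]
        rintro ω ⟨h1, _⟩ ⟨h1', h2'⟩
        have hbb := rev b hb k' k h' ω h1' h2'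
        have := h1.2
        omega
    have hμeq : μ {ω | b ≤ M (2*n) ω} = μ (⋃ k ∈ Finset.range n, E k) := by
      refine le_antisymm ?_ (measure_mono (Set.iUnion₂_subset fun k hk =>
        hEsub k (Finset.mem_range.mp hk)))
      calc μ {ω | b ≤ M (2*n) ω} ≤ μ ((⋃ k ∈ Finset.range n, E k) ∪ Goodᶜ) := measure_mono hcover
      _ ≤ μ (⋃ k ∈ Finset.range n, E k) + μ Goodᶜ := measure_union_le _ _
      _ = μ (⋃ k ∈ Finset.range n, E k) := by rw [hGoodc, add_zero]
    rw [hμeq, measure_biUnion_finset hdisj (fun k _ => hEmeas k)]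
    rw [Finset.sum_congr rfl (fun k _ => indep b k), ← Finset.sum_mul, mul_comm]
  set lE : ℝ≥0∞ := ENNReal.ofReal l with hlE
  have hlE1 : lE < 1 := ENNReal.ofReal_lt_one.mpr hl1
  have hlEtop : lE ≠ ∞ := ENNReal.ofReal_ne_top
  have h1lE : (1:ℝ≥0∞) - lE ≠ 0 := by
    rw [Ne, tsub_eq_zero_iff_le]
    exact fun h => absurd hlE1 (not_lt.mpr h)
  have h1lEeq : (1:ℝ≥0∞) - lE = ENNReal.ofReal (1 - l) := by
    rw [ENNReal.ofReal_sub _ hl.le, ENNReal.ofReal_one]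
  -- abbreviation
  set μA : ℤ → ℕ → ℝ≥0∞ :=
    fun b k => μ {ω | S (2*k) ω = b - 1 ∧ M (2*k) ω = b - 1} with hμA
  have hA0 : ∀ b : ℤ, 2 ≤ b → μA b 0 = 0 := by
    intro b hb
    refine measure_mono_null (fun ω hω => ?_) (measure_empty (μ := μ))
    have h1 := hω.1
    rw [hS0 ω] at h1
    exact absurd h1 (by omega)
  -- finiteness
  have hfin : ∀ u : ℕ → ℝ≥0∞, (∀ n, u n ≤ 1) → ∑' n : ℕ, lE^(n+1) * u n ≠ ∞ := by
    intro u hu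
    refine ne_top_of_le_ne_top (b := lE * (1 - lE)⁻¹) ?_ ?_
    · exact ENNReal.mul_ne_top hlEtop (ENNReal.inv_ne_top.mpr h1lE)
    · calc ∑' n : ℕ, lE^(n+1) * u n ≤ ∑' n : ℕ, lE^(n+1) := by
            refine ENNReal.tsum_le_tsum fun n => ?_
            calc lE^(n+1) * u n ≤ lE^(n+1) * 1 := mul_le_mul_right (hu n) _
            _ = lE^(n+1) := mul_one _
      _ = lE * (1 - lE)⁻¹ := ENNReal.tsum_geometric_add_one lE
  -- the key identity
  have key : ∀ b : ℤ, 2 ≤ b →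
      (∑' n : ℕ, lE^(n+1) * μ {ω | b ≤ M (2*(n+1)) ω})
        = ENNReal.ofReal p * (1 - lE)⁻¹ * (lE * ∑' k : ℕ, lE^(k+1) * μA b (k+1)) := by
    intro b hb
    calc ∑' n : ℕ, lE^(n+1) * μ {ω | b ≤ M (2*(n+1)) ω}
        = ∑' n : ℕ, ∑' k : ℕ,
          (if k < n+1 then (ENNReal.ofReal p * lE^(n+1)) * μA b k else 0) := by
          refine tsum_congr fun n => ?_
          rw [lemA b hb (n+1), ← mul_assoc, mul_comm (lE^(n+1)) (ENNReal.ofReal p),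
            Finset.mul_sum]
          rw [tsum_eq_sum (s := Finset.range (n+1))
              (f := fun k => if k < n+1 then (ENNReal.ofReal p * lE^(n+1)) * μA b k else 0)
              (fun k hk => if_neg (by simpa using hk))]
          exact Finset.sum_congr rfl fun k hk => (if_pos (Finset.mem_range.mp hk)).symm
      _ = ∑' k : ℕ, ∑' n : ℕ,
          (if k < n+1 then (ENNReal.ofReal p * lE^(n+1)) * μA b k else 0) := ENNReal.tsum_comm
      _ = ∑' k : ℕ, (ENNReal.ofReal p * μA b k) * (lE^(k+1) * (1 - lE)⁻¹) := by
          refine tsum_congr fun k => ?_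
          have h1 : ∀ n : ℕ, (if k < n+1 then (ENNReal.ofReal p * lE^(n+1)) * μA b k else 0)
              = (if k < n+1 then lE^(n+1) else 0) * (ENNReal.ofReal p * μA b k) := by
            intro n
            by_cases h : k < n+1
            · simp only [if_pos h]; ring
            · simp only [if_neg h, zero_mul]
          have hinj : Function.Injective (fun j : ℕ => j + k) := add_left_injective k
          have hsupp : Function.support (fun n : ℕ => if k < n+1 then lE^(n+1) else 0)
              ⊆ Set.range (fun j : ℕ => j + k) := by
            intro n hn
            by_cases h : k < n+1
            · exact ⟨n - k, show n - k + k = n from by omega⟩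
            · simp [h] at hn
              exact absurd hn.1 (by omega)
          have e1 : ∑' j : ℕ, lE^(j+k+1) = lE^(k+1) * (1-lE)⁻¹ := by
            rw [tsum_congr (fun j => by
              rw [show j+k+1 = j+(k+1) from by omega, pow_add] :
              ∀ j : ℕ, lE^(j+k+1) = lE^j * lE^(k+1)),
              ENNReal.tsum_mul_right, ENNReal.tsum_geometric]
            exact mul_comm _ _
          have e2 : ∑' j : ℕ, (fun n : ℕ => if k < n+1 then lE^(n+1) else 0) (j + k)
              = ∑' j : ℕ, lE^(j+k+1) :=
            tsum_congr fun j => by simp only [if_pos (show k < j + k + 1 from by omega)]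
          have hgeo : ∑' n : ℕ, (if k < n+1 then lE^(n+1) else 0) = lE^(k+1) * (1 - lE)⁻¹ :=
            (hinj.tsum_eq hsupp).symm.trans (e2.trans e1)
          rw [tsum_congr h1, ENNReal.tsum_mul_right, hgeo, mul_comm]
      _ = ENNReal.ofReal p * (1 - lE)⁻¹ * ∑' k : ℕ, lE^(k+1) * μA b k := by
          rw [← ENNReal.tsum_mul_left]
          refine tsum_congr fun k => ?_
          ring
      _ = ENNReal.ofReal p * (1 - lE)⁻¹ * (lE * ∑' k : ℕ, lE^(k+1) * μA b (k+1)) := by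
          congr 1
          rw [tsum_eq_zero_add' ENNReal.summable, hA0 b hb, mul_zero, zero_add,
            ← ENNReal.tsum_mul_left]
          refine tsum_congr fun k => ?_
          rw [← mul_assoc, ← pow_succ']
  -- split of the event at level a
  have hsplit : ∀ n : ℕ, μ {ω | (a:ℤ) ≤ M (2*(n+1)) ω}
      = μ {ω | M (2*(n+1)) ω = (a:ℤ)} + μ {ω | (a:ℤ)+1 ≤ M (2*(n+1)) ω} := by
    intro n
    have hset : {ω | (a:ℤ) ≤ M (2*(n+1)) ω}
        = {ω | M (2*(n+1)) ω = (a:ℤ)} ∪ {ω | (a:ℤ)+1 ≤ M (2*(n+1)) ω} := by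
      ext ω
      simp only [Set.mem_setOf_eq, Set.mem_union]
      omega
    rw [hset]
    refine measure_union ?_ (hMmeas _ measurableSet_Ici)
    rw [Set.disjoint_left]
    intro ω h1 h2
    simp only [Set.mem_setOf_eq] at h1 h2
    omega
  have htadd : (∑' n : ℕ, lE^(n+1) * μ {ω | (a:ℤ) ≤ M (2*(n+1)) ω})
      = (∑' n : ℕ, lE^(n+1) * μ {ω | M (2*(n+1)) ω = (a:ℤ)})
        + (∑' n : ℕ, lE^(n+1) * μ {ω | (a:ℤ)+1 ≤ M (2*(n+1)) ω}) := by
    rw [← ENNReal.tsum_add]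
    exact tsum_congr fun n => by rw [hsplit n, mul_add]
  -- real conversions
  have hconv : ∀ v : ℕ → ℝ≥0∞, (∀ n, v n ≠ ∞) → (∑' n : ℕ, l^(n+1) * (v n).toReal)
      = (∑' n : ℕ, lE^(n+1) * v n).toReal := by
    intro v hv
    rw [ENNReal.tsum_toReal_eq (fun n => ENNReal.mul_ne_top (ENNReal.pow_ne_top hlEtop) (hv n))]
    exact tsum_congr fun n => by
      rw [ENNReal.toReal_mul, ENNReal.toReal_pow, hlE, ENNReal.toReal_ofReal hl.le]
  have hGc : ∀ c : ℕ, G c = (∑' k : ℕ, lE^(k+1)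
      * μ {ω | S (2*(k+1)) ω = (c:ℤ) ∧ M (2*(k+1)) ω = (c:ℤ)}).toReal := by
    intro c
    rw [hG c, hconv _ (fun k => measure_ne_top μ _)]
  have hc1 : ((a-1:ℕ):ℤ) = (a:ℤ)-1 := by omega
  have hH1 : (∑' k : ℕ, lE^(k+1) * μA (a:ℤ) (k+1)).toReal = G (a-1) := by
    rw [hGc (a-1)]
    congr 1
    refine tsum_congr fun k => ?_
    congr 1
    rw [hμA]
    simp only
    rw [hc1]
  have hH2 : (∑' k : ℕ, lE^(k+1) * μA ((a:ℤ)+1) (k+1)).toReal = G a := by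
    rw [hGc a]
    congr 1
    refine tsum_congr fun k => ?_
    congr 1
    rw [hμA]
    simp only
    norm_num
  -- apply key at levels a and a+1, take toReal
  have hform : ∀ (b : ℤ), 2 ≤ b →
      (∑' n : ℕ, lE^(n+1) * μ {ω | b ≤ M (2*(n+1)) ω}).toReal
        = p * (1-l)⁻¹ * (l * (∑' k : ℕ, lE^(k+1) * μA b (k+1)).toReal) := by
    intro b hb
    rw [key b hb, ENNReal.toReal_mul, ENNReal.toReal_mul, ENNReal.toReal_ofReal hp.le,
      ENNReal.toReal_inv, h1lEeq, ENNReal.toReal_ofReal (by linarith), ENNReal.toReal_mul,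
      hlE, ENNReal.toReal_ofReal hl.le]
  have hDfin : (∑' n : ℕ, lE^(n+1) * μ {ω | M (2*(n+1)) ω = (a:ℤ)}) ≠ ∞ :=
    hfin _ (fun n => prob_le_one)
  have hTbfin : (∑' n : ℕ, lE^(n+1) * μ {ω | (a:ℤ)+1 ≤ M (2*(n+1)) ω}) ≠ ∞ :=
    hfin _ (fun n => prob_le_one)
  have h5 : (∑' n : ℕ, lE^(n+1) * μ {ω | (a:ℤ) ≤ M (2*(n+1)) ω}).toReal
      = (∑' n : ℕ, lE^(n+1) * μ {ω | M (2*(n+1)) ω = (a:ℤ)}).toReal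
        + (∑' n : ℕ, lE^(n+1) * μ {ω | (a:ℤ)+1 ≤ M (2*(n+1)) ω}).toReal := by
    rw [htadd, ENNReal.toReal_add hDfin hTbfin]
  have hgoal : (∑' n : ℕ, lE^(n+1) * μ {ω | M (2*(n+1)) ω = (a:ℤ)}).toReal
      = p * (1-l)⁻¹ * (l * G (a-1)) - p * (1-l)⁻¹ * (l * G a) := by
    have e1 := hform (a:ℤ) (by exact_mod_cast ha)
    have e2 := hform ((a:ℤ)+1) (by omega)
    rw [hH1] at e1
    rw [hH2] at e2
    rw [e1, e2] at h5
    linarith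
  rw [hconv _ (fun n => measure_ne_top μ _), hgoal]
  have h1l : (1:ℝ) - l ≠ 0 := by linarith
  field_simp
end

section
/- In the symmetric case p = q = 1/2, the expected maximum queue length satisfies the Abel-type limit lim_{λ→1⁻} (1 - λ)^{3/2} · Σ_{n≥1} λⁿ E(M_{2n}) = π/4; equivalently, in the Abel sense E(M_{2n})/√(2n) converges to √(π/8). -/
set_option maxHeartbeats 1000000
open MeasureTheory ProbabilityTheory Filter Real Set
open scoped ENNReal

namespace MQAux


/-- Φ(x) = ∑_{r≥1} 2 x^r / (1 + x^{2r}) -/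
noncomputable def Phi (x : ℝ) : ℝ := ∑' k : ℕ, 2 * x ^ (k+1) / (1 + x ^ (2*(k+1)))

lemma phi_term_nonneg {x : ℝ} (hx : 0 < x) (k : ℕ) :
    0 ≤ 2 * x ^ (k+1) / (1 + x ^ (2*(k+1))) := by positivity

lemma phi_summable {x : ℝ} (hx : 0 < x) (hx1 : x < 1) :
    Summable (fun k : ℕ => 2 * x ^ (k+1) / (1 + x ^ (2*(k+1)))) := by
  have hg : Summable (fun k : ℕ => (2*x) * x ^ k) :=
    (summable_geometric_of_lt_one hx.le hx1).mul_left _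
  apply Summable.of_nonneg_of_le (phi_term_nonneg hx) _ hg
  intro k
  rw [div_le_iff₀ (by positivity)]
  have h1 : (2*x) * x ^ k = 2 * x ^ (k+1) := by ring
  rw [h1]
  nlinarith [pow_nonneg hx.le (k+1), pow_nonneg hx.le (2*(k+1)), pow_pos hx (k+1)]

/-- key monotone comparison: for 0 < u ≤ v ≤ 1,
  (log v - log u) * (u/(1+u^2)) ≤ arctan v - arctan u ≤ (log v - log u) * (v/(1+v^2)) -/
lemma arctan_log_bound_left {u v : ℝ} (hu : 0 < u) (huv : u ≤ v) (hv : v ≤ 1) :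
    (Real.log v - Real.log u) * (u/(1+u^2)) ≤ arctan v - arctan u := by
  set c := u / (1 + u^2) with hc
  have hmono : MonotoneOn (fun t => arctan t - c * Real.log t) (Icc u v) := by
    apply monotoneOn_of_deriv_nonneg (convex_Icc u v)
    · apply ContinuousOn.sub (Real.continuous_arctan.continuousOn)
      exact (continuousOn_const.mul (Real.continuousOn_log.mono (by
        intro t ht; simp only [mem_compl_iff, mem_singleton_iff]
        exact ne_of_gt (lt_of_lt_of_le hu ht.1))))
    · intro t ht
      rw [interior_Icc] at ht
      have ht0 : 0 < t := lt_trans hu ht.1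
      exact ((Real.hasDerivAt_arctan t).sub
        ((Real.hasDerivAt_log (ne_of_gt ht0)).const_mul c)).differentiableAt.differentiableWithinAt
    · intro t ht
      rw [interior_Icc] at ht
      have ht0 : 0 < t := lt_trans hu ht.1
      rw [HasDerivAt.deriv (f := fun t => arctan t - c * Real.log t) ((Real.hasDerivAt_arctan t).sub
        ((Real.hasDerivAt_log (ne_of_gt ht0)).const_mul c))]
      rw [sub_nonneg, hc]
      rw [show u / (1 + u ^ 2) * t⁻¹ = u / ((1 + u ^ 2) * t) by field_simp]
      rw [div_le_div_iff₀ (by positivity) (by positivity)]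
      have h1 : t ≤ 1 := le_trans (le_of_lt ht.2) hv
      nlinarith [mul_nonneg (sub_nonneg.2 ht.1.le) (sub_nonneg.2 (by nlinarith : u * t ≤ 1))]
  have := hmono (left_mem_Icc.2 huv) (right_mem_Icc.2 huv) huv
  simp only at this
  have hlog : Real.log u ≤ Real.log v := Real.log_le_log hu huv
  nlinarith [this]

lemma arctan_log_bound_right {u v : ℝ} (hu : 0 < u) (huv : u ≤ v) (hv : v ≤ 1) :
    arctan v - arctan u ≤ (Real.log v - Real.log u) * (v/(1+v^2)) := by
  set c := v / (1 + v^2) with hc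
  have hmono : MonotoneOn (fun t => c * Real.log t - arctan t) (Icc u v) := by
    apply monotoneOn_of_deriv_nonneg (convex_Icc u v)
    · apply ContinuousOn.sub
      exact (continuousOn_const.mul (Real.continuousOn_log.mono (by
        intro t ht; simp only [mem_compl_iff, mem_singleton_iff]
        exact ne_of_gt (lt_of_lt_of_le hu ht.1))))
      exact Real.continuous_arctan.continuousOn
    · intro t ht
      rw [interior_Icc] at ht
      have ht0 : 0 < t := lt_trans hu ht.1
      exact (((Real.hasDerivAt_log (ne_of_gt ht0)).const_mul c).sub
        (Real.hasDerivAt_arctan t)).differentiableAt.differentiableWithinAt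
    · intro t ht
      rw [interior_Icc] at ht
      have ht0 : 0 < t := lt_trans hu ht.1
      rw [HasDerivAt.deriv (f := fun t => c * Real.log t - arctan t) (((Real.hasDerivAt_log (ne_of_gt ht0)).const_mul c).sub
        (Real.hasDerivAt_arctan t))]
      rw [sub_nonneg, hc]
      rw [show v / (1 + v ^ 2) * t⁻¹ = v / ((1 + v ^ 2) * t) by field_simp]
      rw [div_le_div_iff₀ (by positivity) (by positivity)]
      have h1 : t ≤ v := le_of_lt ht.2
      have h2 : v ≤ 1 := hv
      nlinarith [mul_nonneg (sub_nonneg.2 h1) (sub_nonneg.2 (by nlinarith : v * t ≤ 1))]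
  have := hmono (left_mem_Icc.2 huv) (right_mem_Icc.2 huv) huv
  simp only at this
  nlinarith [this]

lemma theta_phi_upper {x : ℝ} (hx : 0 < x) (hx1 : x < 1) :
    (-Real.log x) * Phi x ≤ π / 2 := by
  have hθ : 0 < -Real.log x := by
    have := Real.log_neg hx hx1; linarith
  rw [Phi, ← tsum_mul_left]
  apply Real.tsum_le_of_sum_range_le
  · intro k; exact mul_nonneg hθ.le (phi_term_nonneg hx k)
  intro N
  have key : ∀ k : ℕ, (-Real.log x) * (2 * x ^ (k+1) / (1 + x ^ (2*(k+1))))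
      ≤ 2 * (arctan (x ^ k) - arctan (x ^ (k+1))) := by
    intro k
    have h := arctan_log_bound_left (u := x ^ (k+1)) (v := x ^ k)
      (pow_pos hx _) (pow_le_pow_of_le_one hx.le hx1.le (by omega))
      (pow_le_one₀ hx.le hx1.le)
    have hlog : Real.log (x ^ k) - Real.log (x ^ (k+1)) = -Real.log x := by
      rw [Real.log_pow, Real.log_pow]; push_cast; ring
    rw [hlog] at h
    have hrw : x ^ (k+1) / (1 + (x ^ (k+1))^2) = x ^ (k+1) / (1 + x ^ (2*(k+1))) := by
      rw [← pow_mul]; ring_nf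
    rw [hrw] at h
    rw [show -Real.log x * (2 * x ^ (k+1) / (1 + x ^ (2*(k+1))))
      = 2 * (-Real.log x * (x ^ (k+1) / (1 + x ^ (2*(k+1))))) by ring]
    linarith [h]
  calc ∑ k ∈ Finset.range N, (-Real.log x) * (2 * x ^ (k+1) / (1 + x ^ (2*(k+1))))
      ≤ ∑ k ∈ Finset.range N, 2 * (arctan (x ^ k) - arctan (x ^ (k+1))) :=
        Finset.sum_le_sum (fun k _ => key k)
    _ = 2 * (arctan (x ^ 0) - arctan (x ^ N)) := by
        rw [← Finset.mul_sum, Finset.sum_range_sub' (fun k => arctan (x ^ k))]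
    _ ≤ π / 2 := by
        simp only [pow_zero, arctan_one]
        have : 0 ≤ arctan (x ^ N) := by
          rw [← Real.arctan_zero]
          exact Real.arctan_strictMono.monotone (by positivity)
        linarith

lemma theta_phi_lower {x : ℝ} (hx : 0 < x) (hx1 : x < 1) :
    2 * arctan x ≤ (-Real.log x) * Phi x := by
  have hθ : 0 < -Real.log x := by
    have := Real.log_neg hx hx1; linarith
  have hsum := phi_summable hx hx1
  have key : ∀ k : ℕ, 2 * (arctan (x ^ (k+1)) - arctan (x ^ (k+2)))
      ≤ (-Real.log x) * (2 * x ^ (k+1) / (1 + x ^ (2*(k+1)))) := by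
    intro k
    have h := arctan_log_bound_right (u := x ^ (k+2)) (v := x ^ (k+1))
      (pow_pos hx _) (pow_le_pow_of_le_one hx.le hx1.le (by omega))
      (pow_le_one₀ hx.le hx1.le)
    have hlog : Real.log (x ^ (k+1)) - Real.log (x ^ (k+2)) = -Real.log x := by
      rw [Real.log_pow, Real.log_pow]; push_cast; ring
    rw [hlog] at h
    have hrw : x ^ (k+1) / (1 + (x ^ (k+1))^2) = x ^ (k+1) / (1 + x ^ (2*(k+1))) := by
      rw [← pow_mul]; ring_nf
    rw [hrw] at h
    rw [show -Real.log x * (2 * x ^ (k+1) / (1 + x ^ (2*(k+1))))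
      = 2 * (-Real.log x * (x ^ (k+1) / (1 + x ^ (2*(k+1))))) by ring]
    linarith [h]
  -- partial sums: 2*(arctan x - arctan (x^(N+1))) ≤ θ * Φ
  have hpart : ∀ N : ℕ, 2 * (arctan x - arctan (x ^ (N+1))) ≤ (-Real.log x) * Phi x := by
    intro N
    have h1 : ∑ k ∈ Finset.range N, 2 * (arctan (x ^ (k+1)) - arctan (x ^ (k+2)))
        = 2 * (arctan (x ^ 1) - arctan (x ^ (N+1))) := by
      rw [← Finset.mul_sum, Finset.sum_range_sub' (fun k => arctan (x ^ (k+1)))]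
    have h2 : ∑ k ∈ Finset.range N, (-Real.log x) * (2 * x ^ (k+1) / (1 + x ^ (2*(k+1))))
        ≤ (-Real.log x) * Phi x := by
      rw [Phi, ← tsum_mul_left]
      apply Summable.sum_le_tsum _ (fun k _ => mul_nonneg hθ.le (phi_term_nonneg hx k))
      exact hsum.mul_left _
    calc 2 * (arctan x - arctan (x ^ (N+1)))
        = ∑ k ∈ Finset.range N, 2 * (arctan (x ^ (k+1)) - arctan (x ^ (k+2)))
          + 2 * (arctan (x^(N+1)) - arctan (x^(N+1))) + 2 * (arctan x - arctan (x^1)) := by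
          rw [h1]; ring_nf
      _ ≤ (-Real.log x) * Phi x := by
          rw [pow_one]; simp only [sub_self, mul_zero, add_zero]
          calc _ ≤ ∑ k ∈ Finset.range N, (-Real.log x) * (2 * x ^ (k+1) / (1 + x ^ (2*(k+1)))) :=
                Finset.sum_le_sum (fun k _ => key k)
            _ ≤ _ := h2
  -- let N → ∞
  have hlim : Tendsto (fun N : ℕ => 2 * (arctan x - arctan (x ^ (N+1)))) atTop
      (nhds (2 * (arctan x - arctan 0))) := by
    apply Tendsto.const_mul
    apply Tendsto.const_sub
    exact (Real.continuous_arctan.tendsto 0).comp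
      ((tendsto_pow_atTop_nhds_zero_of_lt_one hx.le hx1).comp (tendsto_add_atTop_nat 1))
  rw [arctan_zero, sub_zero] at hlim
  exact le_of_tendsto hlim (Filter.Eventually.of_forall hpart)

lemma phi_nonneg {x : ℝ} (hx : 0 < x) : 0 ≤ Phi x :=
  tsum_nonneg (phi_term_nonneg hx)

/-- main analytic limit -/
lemma psi_limit :
    Tendsto (fun x : ℝ => (1-x)/(1+x) * Phi x) (nhdsWithin 1 (Ioo (0:ℝ) 1)) (nhds (π/4)) := by
  have hmem : ∀ᶠ x in nhdsWithin (1:ℝ) (Ioo (0:ℝ) 1), x ∈ Ioo (0:ℝ) 1 :=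
    eventually_mem_nhdsWithin
  apply tendsto_of_tendsto_of_tendsto_of_le_of_le'
    (g := fun x : ℝ => x * (2 * arctan x) / (1+x))
    (h := fun x : ℝ => (π/2) / (1+x))
  · -- lower bound tends to π/4
    have : Tendsto (fun x : ℝ => x * (2 * arctan x) / (1+x)) (nhds 1)
        (nhds ((1 : ℝ) * (2 * arctan 1) / (1+1))) := by
      apply Tendsto.div
      · exact (continuous_id.mul (continuous_const.mul Real.continuous_arctan)).tendsto 1
      · exact (continuous_const.add continuous_id).tendsto 1
      · norm_num
    rw [arctan_one] at this
    have h14 : (1 : ℝ) * (2 * (π/4)) / (1+1) = π/4 := by ring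
    rw [h14] at this
    exact this.mono_left nhdsWithin_le_nhds
  · -- upper bound tends to π/4
    have : Tendsto (fun x : ℝ => (π/2) / (1+x)) (nhds 1) (nhds ((π/2) / (1+1))) := by
      apply Tendsto.div tendsto_const_nhds ((continuous_const.add continuous_id).tendsto 1)
      norm_num
    have h14 : (π/2) / (1+1 : ℝ) = π/4 := by ring
    rw [h14] at this
    exact this.mono_left nhdsWithin_le_nhds
  · -- lower ≤ f
    filter_upwards [hmem] with x hx
    obtain ⟨hx0, hx1⟩ := hx
    have hθub : -Real.log x ≤ (1-x)/x := by
      have h := Real.log_le_sub_one_of_pos (inv_pos.2 hx0)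
      rw [Real.log_inv] at h
      have h2 : x⁻¹ - 1 = (1-x)/x := by field_simp
      rw [h2] at h; exact h
    have h1 := theta_phi_lower hx0 hx1
    have hphi := phi_nonneg hx0
    have h1x : (0:ℝ) < 1 + x := by linarith
    -- x * (2 arctan x) ≤ x * (θ Φ) ≤ (1-x) Φ
    have h2 : x * (2 * arctan x) ≤ x * ((-Real.log x) * Phi x) :=
      mul_le_mul_of_nonneg_left h1 hx0.le
    have h3 : x * ((-Real.log x) * Phi x) ≤ (1-x) * Phi x := by
      have := mul_le_mul_of_nonneg_right (mul_le_mul_of_nonneg_left hθub hx0.le) hphi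
      calc x * ((-Real.log x) * Phi x) = (x * (-Real.log x)) * Phi x := by ring
        _ ≤ (x * ((1-x)/x)) * Phi x := this
        _ = (1-x) * Phi x := by field_simp
    rw [show (1 - x)/(1+x) * Phi x = ((1-x) * Phi x)/(1+x) by ring,
      div_le_div_iff₀ h1x h1x]
    nlinarith [h2, h3]
  · -- f ≤ upper
    filter_upwards [hmem] with x hx
    obtain ⟨hx0, hx1⟩ := hx
    have hθlb : 1 - x ≤ -Real.log x := by
      have := Real.log_le_sub_one_of_pos hx0; linarith
    have h1 := theta_phi_upper hx0 hx1
    have hphi := phi_nonneg hx0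
    have h1x : (0:ℝ) < 1 + x := by linarith
    have h2 : (1-x) * Phi x ≤ (-Real.log x) * Phi x :=
      mul_le_mul_of_nonneg_right hθlb hphi
    rw [show (1 - x)/(1+x) * Phi x = ((1-x) * Phi x)/(1+x) by ring,
      div_le_div_iff₀ h1x h1x]
    nlinarith [h2, h1]



/-- survival mass: `tau r n s` = P(queue max over 2n steps < r, state at time 2n = s). -/
noncomputable def tau (r : ℕ) : ℕ → ℤ → ℝ
  | 0 => fun s => if s = 0 ∧ 0 < r then 1 else 0
  | (n+1) => fun s' =>
      ∑ s ∈ Finset.Ico (0:ℤ) (r:ℤ),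
        ((if s' = s then (4:ℝ)⁻¹ * tau r n s else 0)
        + (if s' = max (s-1) 0 then (4:ℝ)⁻¹ * tau r n s else 0)
        + (if s + 1 < (r:ℤ) ∧ s' = s + 1 then (4:ℝ)⁻¹ * tau r n s else 0)
        + (if s + 1 < (r:ℤ) ∧ s' = s then (4:ℝ)⁻¹ * tau r n s else 0))

noncomputable def sig (r n : ℕ) : ℝ := ∑ s ∈ Finset.Ico (0:ℤ) (r:ℤ), tau r n s

section Alg

lemma one_add_ne {x : ℝ} (hx0 : 0 < x) : (1:ℝ) + x ≠ 0 := by positivity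

lemma one_sub_l_eq {x : ℝ} (hx0 : 0 < x) : 1 - 4*x/(1+x)^2 = (1-x)^2/(1+x)^2 := by
  have h := one_add_ne hx0
  field_simp
  ring

lemma one_sub_l_pos {x : ℝ} (hx0 : 0 < x) (hx1 : x < 1) : 0 < 1 - 4*x/(1+x)^2 := by
  rw [one_sub_l_eq hx0]
  have : (0:ℝ) < 1 - x := by linarith
  positivity

lemma l_pos {x : ℝ} (hx0 : 0 < x) : 0 < 4*x/(1+x)^2 := by positivity

lemma alg_interior {x : ℝ} (hx0 : 0 < x) (hx1 : x < 1) (c X : ℝ) (hX : 0 < X) :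
    (1 - c*(X*x^3 + (X*x^2)⁻¹))/(1 - 4*x/(1+x)^2)
      + (1 - c*(X*x + X⁻¹))/(1 - 4*x/(1+x)^2)
      + ((1 - c*(X*x^2 + (X*x)⁻¹))/(1 - 4*x/(1+x)^2)
        + (1 - c*(X*x^2 + (X*x)⁻¹))/(1 - 4*x/(1+x)^2))
    = ((1 - c*(X*x^2 + (X*x)⁻¹))/(1 - 4*x/(1+x)^2) - 1) * (4/(4*x/(1+x)^2)) := by
  have h1 : (1:ℝ) + x ≠ 0 := one_add_ne hx0
  have h2 : (1:ℝ) - x ≠ 0 := by linarith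
  have h3 : x ≠ 0 := ne_of_gt hx0
  have h4 : X ≠ 0 := ne_of_gt hX
  rw [one_sub_l_eq hx0]
  field_simp
  ring

lemma alg_left {x : ℝ} (hx0 : 0 < x) (hx1 : x < 1) (c : ℝ) :
    (1 - c*(x^2 + x⁻¹))/(1 - 4*x/(1+x)^2)
      + (1 - c*(x + 1))/(1 - 4*x/(1+x)^2)
      + ((1 - c*(x + 1))/(1 - 4*x/(1+x)^2) + (1 - c*(x + 1))/(1 - 4*x/(1+x)^2))
    = ((1 - c*(x + 1))/(1 - 4*x/(1+x)^2) - 1) * (4/(4*x/(1+x)^2)) := by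
  have h1 : (1:ℝ) + x ≠ 0 := one_add_ne hx0
  have h2 : (1:ℝ) - x ≠ 0 := by linarith
  have h3 : x ≠ 0 := ne_of_gt hx0
  rw [one_sub_l_eq hx0]
  field_simp
  ring

lemma alg_right {x : ℝ} (hx0 : 0 < x) (hx1 : x < 1) (X : ℝ) (hX : 0 < X) :
    (1 - (2*(X*x^2)/((1+x)*(1+(X*x^2)^2)))*(X*x + X⁻¹))/(1 - 4*x/(1+x)^2)
      + (1 - (2*(X*x^2)/((1+x)*(1+(X*x^2)^2)))*(X*x^2 + (X*x)⁻¹))/(1 - 4*x/(1+x)^2)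
    = ((1 - (2*(X*x^2)/((1+x)*(1+(X*x^2)^2)))*(X*x^2 + (X*x)⁻¹))/(1 - 4*x/(1+x)^2) - 1)
        * (4/(4*x/(1+x)^2)) := by
  have h1 : (1:ℝ) + x ≠ 0 := one_add_ne hx0
  have h2 : (1:ℝ) - x ≠ 0 := by linarith
  have h3 : x ≠ 0 := ne_of_gt hx0
  have h4 : X ≠ 0 := ne_of_gt hX
  have h5 : (1:ℝ) + (X*x^2)^2 ≠ 0 := by positivity
  rw [one_sub_l_eq hx0]
  field_simp
  ring

lemma alg_corner {x : ℝ} (hx0 : 0 < x) (hx1 : x < 1) :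
    (1 - (2*x/((1+x)*(1+x^2)))*(x + 1))/(1 - 4*x/(1+x)^2)
      + (1 - (2*x/((1+x)*(1+x^2)))*(x + 1))/(1 - 4*x/(1+x)^2)
    = ((1 - (2*x/((1+x)*(1+x^2)))*(x + 1))/(1 - 4*x/(1+x)^2) - 1) * (4/(4*x/(1+x)^2)) := by
  have h1 : (1:ℝ) + x ≠ 0 := one_add_ne hx0
  have h2 : (1:ℝ) - x ≠ 0 := by linarith
  have h3 : x ≠ 0 := ne_of_gt hx0
  have h5 : (1:ℝ) + x^2 ≠ 0 := by positivity
  rw [one_sub_l_eq hx0]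
  field_simp
  ring

end Alg

/-- The generating function evaluation. -/
lemma gf_hasSum (r : ℕ) (hr : 1 ≤ r) {x : ℝ} (hx0 : 0 < x) (hx1 : x < 1)
    (H1 : ∀ n s, 0 ≤ tau r n s) (H2 : ∀ n, sig r n ≤ 1) :
    HasSum (fun n : ℕ => (4*x/(1+x)^2)^n * (1 - sig r n))
      ((2*x^r/(1+(x^r)^2)) / (1 - 4*x/(1+x)^2)) := by
  have hrZ : (0:ℤ) < (r:ℤ) := by exact_mod_cast hr
  set l : ℝ := 4*x/(1+x)^2 with hl
  have hl0 : 0 < l := l_pos hx0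
  have hl1 : l < 1 := by have := one_sub_l_pos hx0 hx1; linarith
  have hlne : l ≠ 0 := ne_of_gt hl0
  have h1lne : 1 - l ≠ 0 := ne_of_gt (one_sub_l_pos hx0 hx1)
  -- the candidate solution
  set C : ℝ := 2*x^r/((1+x)*(1+(x^r)^2)) with hC
  set gN : ℕ → ℝ := fun k => (1 - C*(x^(k+1) + (x^k)⁻¹))/(1-l) with hgN
  set g : ℤ → ℝ := fun s => if 0 ≤ s ∧ s < (r:ℤ) then gN s.toNat else 0 with hg
  have hleq : l = 4*x/(1+x)^2 := rfl
  have hCeq : C = 2*x^r/((1+x)*(1+(x^r)^2)) := rfl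
  have hgNeq : ∀ k, gN k = (1 - C*(x^(k+1) + (x^k)⁻¹))/(1-l) := fun _ => rfl
  have hgeq : ∀ s, g s = if 0 ≤ s ∧ s < (r:ℤ) then gN s.toNat else 0 := fun _ => rfl
  have hgnat : ∀ k : ℕ, k < r → g (k:ℤ) = gN k := by
    intro k hk
    rw [hgeq]
    simp only [Int.toNat_natCast]
    rw [if_pos ⟨Int.natCast_nonneg k, by exact_mod_cast hk⟩]
  -- SUMEQ : the key linear-system identity
  have SUMEQ : ∀ s ∈ Finset.Ico (0:ℤ) (r:ℤ),
      g s + g (max (s-1) 0) + ((if s + 1 < (r:ℤ) then g (s+1) else 0)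
        + (if s + 1 < (r:ℤ) then g s else 0)) = (g s - 1) * (4/l) := by
    intro s hs
    rw [Finset.mem_Ico] at hs
    obtain ⟨hs0, hsr⟩ := hs
    obtain ⟨k, rfl⟩ := Int.eq_ofNat_of_zero_le hs0
    have hkr : k < r := by exact_mod_cast hsr
    rcases Nat.lt_or_ge (k+1) r with hk1 | hk1
    · -- s+1 < r : interior or left
      have hk1Z : (k:ℤ) + 1 < (r:ℤ) := by exact_mod_cast hk1
      rw [if_pos hk1Z, if_pos hk1Z]
      have e1 : ((k:ℤ)) + 1 = ((k+1 : ℕ) : ℤ) := by push_cast; ring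
      rcases Nat.eq_zero_or_pos k with hk0 | hkpos
      · -- k = 0, left boundary
        subst hk0
        have e2 : max (((0:ℕ):ℤ) - 1) 0 = ((0:ℕ):ℤ) := by simp
        rw [e2, e1, hgnat 0 hkr, hgnat (0+1) hk1]
        have A := alg_left hx0 hx1 C
        rw [← hleq] at A
        have b0 : gN 0 = (1 - C*(x+1))/(1-l) := by rw [hgNeq]; norm_num
        have b1 : gN (0+1) = (1 - C*(x^2+x⁻¹))/(1-l) := by rw [hgNeq]; norm_num
        rw [b0, b1]
        linarith [A]
      · -- interior
        obtain ⟨j, rfl⟩ := Nat.exists_eq_succ_of_ne_zero (Nat.pos_iff_ne_zero.mp hkpos)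
        have e2 : max (((j+1:ℕ):ℤ) - 1) 0 = ((j:ℕ):ℤ) := by
          push_cast; rw [max_eq_left (by omega)]; ring_nf
        rw [e2, e1, hgnat (j+1) hkr, hgnat (j+1+1) hk1, hgnat j (by omega)]
        have A := alg_interior hx0 hx1 C (x^j) (pow_pos hx0 j)
        rw [← hleq] at A
        simp only [hgNeq]
        rw [(by ring : x^(j+1+1+1) = x^j*x^3), (by ring : x^(j+1+1) = x^j*x^2),
            (by ring : x^(j+1) = x^j*x)]
        linarith [A]
    · -- s+1 = r : right boundary or corner
      have hk1r : k + 1 = r := by omega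
      have hk1Z : ¬ ((k:ℤ) + 1 < (r:ℤ)) := by
        push_neg; exact_mod_cast hk1
      rw [if_neg hk1Z, if_neg hk1Z, add_zero, add_zero]
      rcases Nat.eq_zero_or_pos k with hk0 | hkpos
      · -- corner : r = 1
        subst hk0
        have hr1 : r = 1 := by omega
        subst hr1
        have e2 : max (((0:ℕ):ℤ) - 1) 0 = ((0:ℕ):ℤ) := by simp
        rw [e2, hgnat 0 hkr]
        have A := alg_corner hx0 hx1
        rw [← hleq] at A
        have bC : C = 2*x/((1+x)*(1+x^2)) := by rw [hCeq]; norm_num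
        have b0 : gN 0 = (1 - (2*x/((1+x)*(1+x^2)))*(x+1))/(1-l) := by
          rw [hgNeq, bC]; norm_num
        rw [b0]
        linarith [A]
      · obtain ⟨j, rfl⟩ := Nat.exists_eq_succ_of_ne_zero (Nat.pos_iff_ne_zero.mp hkpos)
        have hrj : r = j + 2 := by omega
        subst hrj
        have e2 : max (((j+1:ℕ):ℤ) - 1) 0 = ((j:ℕ):ℤ) := by
          push_cast; rw [max_eq_left (by omega)]; ring_nf
        rw [e2, hgnat (j+1) hkr, hgnat j (by omega)]
        have A := alg_right hx0 hx1 (x^j) (pow_pos hx0 j)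
        rw [← hleq] at A
        simp only [hgNeq, hCeq]
        rw [(by ring : x^(j+1+1) = x^j*x^2), (by ring : x^(j+1) = x^j*x)]
        linarith [A]
  -- W n
  set W : ℕ → ℝ := fun n => ∑ s ∈ Finset.Ico (0:ℤ) (r:ℤ), tau r n s * g s with hW
  have hWeq : ∀ n, W n = ∑ s ∈ Finset.Ico (0:ℤ) (r:ℤ), tau r n s * g s := fun _ => rfl
  -- helper for collapsing the s' sums
  have hsum_if : ∀ (P : Prop) [Decidable P] (e : ℤ) (A : ℝ), (P → e ∈ Finset.Ico (0:ℤ) (r:ℤ)) →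
      (∑ s' ∈ Finset.Ico (0:ℤ) (r:ℤ), (if P ∧ s' = e then A else 0) * g s')
        = if P then A * g e else 0 := by
    intro P _ e A he
    by_cases hP : P
    · simp only [hP, true_and, if_true]
      rw [Finset.sum_congr rfl (fun s' _ => by rw [ite_mul, zero_mul])]
      exact Finset.sum_ite_eq' _ _ _ |>.trans (by rw [if_pos (he hP)])
    · simp [hP]
  -- the recursion for W
  have Wrec : ∀ n, W (n+1) = (W n - sig r n) / l := by
    intro n
    rw [hWeq]
    have expand : ∀ s' ∈ Finset.Ico (0:ℤ) (r:ℤ), tau r (n+1) s' * g s'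
        = ∑ s ∈ Finset.Ico (0:ℤ) (r:ℤ),
          ((if True ∧ s' = s then (4:ℝ)⁻¹ * tau r n s else 0) * g s'
          + (if True ∧ s' = max (s-1) 0 then (4:ℝ)⁻¹ * tau r n s else 0) * g s'
          + (if s + 1 < (r:ℤ) ∧ s' = s + 1 then (4:ℝ)⁻¹ * tau r n s else 0) * g s'
          + (if s + 1 < (r:ℤ) ∧ s' = s then (4:ℝ)⁻¹ * tau r n s else 0) * g s') := by
      intro s' _
      rw [show tau r (n+1) s' = ∑ s ∈ Finset.Ico (0:ℤ) (r:ℤ),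
        ((if s' = s then (4:ℝ)⁻¹ * tau r n s else 0)
        + (if s' = max (s-1) 0 then (4:ℝ)⁻¹ * tau r n s else 0)
        + (if s + 1 < (r:ℤ) ∧ s' = s + 1 then (4:ℝ)⁻¹ * tau r n s else 0)
        + (if s + 1 < (r:ℤ) ∧ s' = s then (4:ℝ)⁻¹ * tau r n s else 0)) from rfl]
      rw [Finset.sum_mul]
      exact Finset.sum_congr rfl (fun s _ => by simp only [true_and]; ring)
    rw [Finset.sum_congr rfl expand, Finset.sum_comm]
    have inner : ∀ s ∈ Finset.Ico (0:ℤ) (r:ℤ),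
        (∑ s' ∈ Finset.Ico (0:ℤ) (r:ℤ),
          ((if True ∧ s' = s then (4:ℝ)⁻¹ * tau r n s else 0) * g s'
          + (if True ∧ s' = max (s-1) 0 then (4:ℝ)⁻¹ * tau r n s else 0) * g s'
          + (if s + 1 < (r:ℤ) ∧ s' = s + 1 then (4:ℝ)⁻¹ * tau r n s else 0) * g s'
          + (if s + 1 < (r:ℤ) ∧ s' = s then (4:ℝ)⁻¹ * tau r n s else 0) * g s'))
        = (tau r n s * g s - tau r n s) / l := by
      intro s hs
      have hsIco := Finset.mem_Ico.mp hs
      rw [Finset.sum_add_distrib, Finset.sum_add_distrib, Finset.sum_add_distrib]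
      rw [hsum_if True s _ (fun _ => hs),
          hsum_if True (max (s-1) 0) _ (fun _ => by
            rw [Finset.mem_Ico]
            constructor
            · exact le_max_right _ _
            · rw [max_lt_iff]; omega),
          hsum_if (s + 1 < (r:ℤ)) (s+1) _ (fun hP => by rw [Finset.mem_Ico]; omega),
          hsum_if (s + 1 < (r:ℤ)) s _ (fun _ => hs)]
      simp only [if_true]
      have factored :
          (4:ℝ)⁻¹ * tau r n s * g s + (4:ℝ)⁻¹ * tau r n s * g (max (s-1) 0)
          + (if s + 1 < (r:ℤ) then (4:ℝ)⁻¹ * tau r n s * g (s+1) else 0)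
          + (if s + 1 < (r:ℤ) then (4:ℝ)⁻¹ * tau r n s * g s else 0)
          = (4:ℝ)⁻¹ * tau r n s * (g s + g (max (s-1) 0)
            + ((if s + 1 < (r:ℤ) then g (s+1) else 0) + (if s + 1 < (r:ℤ) then g s else 0))) := by
        by_cases hP : s + 1 < (r:ℤ) <;> simp [hP] <;> ring
      rw [factored, SUMEQ s hs]
      field_simp
    rw [Finset.sum_congr rfl inner]
    rw [sig, hWeq]
    rw [← Finset.sum_div, Finset.sum_sub_distrib]
  -- telescoping
  have tele : ∀ N, ∑ n ∈ Finset.range N, l^n * sig r n = W 0 - l^N * W N := by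
    intro N
    induction N with
    | zero => simp
    | succ N ih =>
        rw [Finset.sum_range_succ, ih]
        have key : l^(N+1) * W (N+1) = l^N * (W N - sig r N) := by
          rw [Wrec N]
          field_simp
          ring
        rw [key]; ring
  -- bound on W
  have tau_le_one : ∀ n s, s ∈ Finset.Ico (0:ℤ) (r:ℤ) → tau r n s ≤ 1 := by
    intro n s hs
    calc tau r n s ≤ sig r n := Finset.single_le_sum (fun i _ => H1 n i) hs
      _ ≤ 1 := H2 n
  set B : ℝ := ∑ s ∈ Finset.Ico (0:ℤ) (r:ℤ), |g s| with hB
  have hBeq : B = ∑ s ∈ Finset.Ico (0:ℤ) (r:ℤ), |g s| := rfl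
  have Wbound : ∀ n, |W n| ≤ B := by
    intro n
    rw [hWeq, hBeq]
    calc |∑ s ∈ Finset.Ico (0:ℤ) (r:ℤ), tau r n s * g s|
        ≤ ∑ s ∈ Finset.Ico (0:ℤ) (r:ℤ), |tau r n s * g s| := Finset.abs_sum_le_sum_abs _ _
      _ ≤ ∑ s ∈ Finset.Ico (0:ℤ) (r:ℤ), |g s| := by
          apply Finset.sum_le_sum
          intro s hs
          rw [abs_mul]
          have h1 : |tau r n s| ≤ 1 := by
            rw [abs_of_nonneg (H1 n s)]; exact tau_le_one n s hs
          nlinarith [abs_nonneg (g s), abs_nonneg (tau r n s)]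
  -- W 0 = g 0
  have W0 : W 0 = (1 - 2*x^r/(1+(x^r)^2))/(1-l) := by
    rw [hWeq]
    have : ∀ s ∈ Finset.Ico (0:ℤ) (r:ℤ), tau r 0 s * g s = if s = 0 then g 0 else 0 := by
      intro s _
      rw [show tau r 0 s = if s = 0 ∧ 0 < r then 1 else 0 from rfl]
      have hrpos : 0 < r := hr
      by_cases h : s = 0
      · simp [h, hrpos]
      · simp [h]
    rw [Finset.sum_congr rfl this, Finset.sum_ite_eq' _ (0:ℤ) (fun _ => g 0),
      if_pos (Finset.mem_Ico.mpr ⟨le_refl _, hrZ⟩)]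
    rw [show ((0:ℤ)) = ((0:ℕ):ℤ) by norm_num, hgnat 0 hr, hgNeq]
    simp only [pow_one, pow_zero, inv_one]
    rw [hCeq]
    have h1 : (1:ℝ) + x ≠ 0 := one_add_ne hx0
    have h5 : (1:ℝ) + (x^r)^2 ≠ 0 := by positivity
    congr 1
    field_simp
    ring
  -- the HasSum
  have nonneg : ∀ n, 0 ≤ l^n * (1 - sig r n) := by
    intro n
    apply mul_nonneg (pow_nonneg hl0.le n)
    linarith [H2 n]
  rw [hasSum_iff_tendsto_nat_of_nonneg nonneg]
  have keyeq : ∀ N, ∑ n ∈ Finset.range N, l^n * (1 - sig r n)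
      = (∑ n ∈ Finset.range N, l^n) - W 0 + l^N * W N := by
    intro N
    have : ∑ n ∈ Finset.range N, l^n * (1 - sig r n)
        = (∑ n ∈ Finset.range N, l^n) - ∑ n ∈ Finset.range N, l^n * sig r n := by
      rw [← Finset.sum_sub_distrib]
      exact Finset.sum_congr rfl (fun n _ => by ring)
    rw [this, tele N]; ring
  have lim1 : Tendsto (fun N => ∑ n ∈ Finset.range N, l^n) atTop (nhds (1-l)⁻¹) :=
    (hasSum_geometric_of_lt_one hl0.le hl1).tendsto_sum_nat
  have lim2 : Tendsto (fun N : ℕ => l^N * W N) atTop (nhds 0) := by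
    have hb : ∀ N : ℕ, ‖l^N * W N‖ ≤ B * l^N := by
      intro N
      rw [norm_mul, norm_pow, Real.norm_eq_abs, Real.norm_eq_abs, abs_of_pos hl0]
      calc l^N * |W N| ≤ l^N * B :=
            mul_le_mul_of_nonneg_left (Wbound N) (pow_nonneg hl0.le N)
        _ = B * l^N := by ring
    have h0 : Tendsto (fun N : ℕ => B * l^N) atTop (nhds 0) := by
      rw [show (0:ℝ) = B * 0 by ring]
      exact (tendsto_pow_atTop_nhds_zero_of_lt_one hl0.le hl1).const_mul B
    exact squeeze_zero_norm hb h0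
  have limtot : Tendsto (fun N => ∑ n ∈ Finset.range N, l^n * (1 - sig r n)) atTop
      (nhds ((1-l)⁻¹ - W 0 + 0)) := by
    apply Tendsto.congr (fun N => (keyeq N).symm)
    exact ((lim1.sub tendsto_const_nhds).add lim2)
  have : (1-l)⁻¹ - W 0 + 0 = (2*x^r/(1+(x^r)^2)) / (1 - l) := by
    rw [W0, add_zero]
    have h5 : (1:ℝ) + (x^r)^2 ≠ 0 := by positivity
    field_simp
    ring
  rw [this] at limtot
  exact limtot



/-! ### Deterministic path functionals -/

def sd (x : ℕ → ℤ) : ℕ → ℤ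
  | 0 => 0
  | (j+1) => max (sd x j + x (j+1)) 0

def md (x : ℕ → ℤ) : ℕ → ℤ
  | 0 => 0
  | (n+1) => max (md x n) (sd x (n+1))

lemma sd_congr {x y : ℕ → ℤ} : ∀ (j : ℕ), (∀ i, 1 ≤ i → i ≤ j → x i = y i) → sd x j = sd y j
  | 0, _ => rfl
  | (j+1), h => by
      rw [sd, sd, sd_congr j (fun i h1 h2 => h i h1 (by omega)), h (j+1) (by omega) (le_refl _)]

lemma md_congr {x y : ℕ → ℤ} : ∀ (n : ℕ), (∀ i, 1 ≤ i → i ≤ n → x i = y i) → md x n = md y n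
  | 0, _ => rfl
  | (n+1), h => by
      rw [md, md, md_congr n (fun i h1 h2 => h i h1 (by omega)),
        sd_congr (n+1) (fun i h1 h2 => h i h1 h2)]

section Ctx

variable {Ω : Type*} [MeasurableSpace Ω] (μ : Measure Ω) [IsProbabilityMeasure μ]
    (X : ℕ → Ω → ℤ) (S M : ℕ → Ω → ℤ)

/-- the basic event -/
def ASet (n r : ℕ) (s : ℤ) : Set Ω := {ω | M (2*n) ω < (r:ℤ) ∧ S (2*n) ω = s}

variable {μ X S M}

section Pointwise

variable (hS0 : ∀ ω, S 0 ω = 0) (hS : ∀ (j : ℕ) (ω : Ω), S (j + 1) ω = max (S j ω + X (j + 1) ω) 0)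
variable (hM0 : ∀ ω, M 0 ω = S 0 ω) (hM : ∀ (n : ℕ) (ω : Ω), M (n + 1) ω = max (M n ω) (S (n + 1) ω))

include hS0 hS in
lemma S_nonneg : ∀ (j : ℕ) (ω : Ω), 0 ≤ S j ω
  | 0, ω => (hS0 ω).ge
  | (j+1), ω => by rw [hS j ω]; exact le_max_right _ _

include hS0 hM0 hM in
lemma S_le_M : ∀ (n : ℕ) (ω : Ω), S n ω ≤ M n ω
  | 0, ω => (hM0 ω).ge
  | (n+1), ω => by rw [hM n ω]; exact le_max_right _ _

include hM in
lemma M_mono (n : ℕ) (ω : Ω) : M n ω ≤ M (n+1) ω := by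
  rw [hM n ω]; exact le_max_left _ _

include hS0 hS in
lemma S_eq_sd : ∀ (j : ℕ) (ω : Ω), S j ω = sd (fun i => X i ω) j
  | 0, ω => by rw [hS0 ω]; rfl
  | (j+1), ω => by rw [hS j ω, sd, S_eq_sd j ω]

include hS0 hS hM0 hM in
lemma M_eq_md : ∀ (n : ℕ) (ω : Ω), M n ω = md (fun i => X i ω) n
  | 0, ω => by rw [hM0 ω, hS0 ω]; rfl
  | (n+1), ω => by
      rw [hM n ω, md, M_eq_md n ω, S_eq_sd hS0 hS (n+1) ω]

end Pointwise

section Meas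

variable (hXmeas : ∀ i, Measurable (X i))
variable (hS0 : ∀ ω, S 0 ω = 0) (hS : ∀ (j : ℕ) (ω : Ω), S (j + 1) ω = max (S j ω + X (j + 1) ω) 0)
variable (hM0 : ∀ ω, M 0 ω = S 0 ω) (hM : ∀ (n : ℕ) (ω : Ω), M (n + 1) ω = max (M n ω) (S (n + 1) ω))

lemma msetZ (s : Set ℤ) : MeasurableSet s := s.to_countable.measurableSet
lemma msetZZ (s : Set (ℤ × ℤ)) : MeasurableSet s := s.to_countable.measurableSet

include hXmeas hS0 hS in
lemma S_meas : ∀ j, Measurable (S j)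
  | 0 => by
      have : S 0 = fun _ => 0 := funext hS0
      rw [this]; exact measurable_const
  | (j+1) => by
      have : S (j+1) = fun ω => max (S j ω + X (j+1) ω) 0 := funext (hS j)
      rw [this]
      exact ((S_meas j).add (hXmeas (j+1))).max measurable_const

include hXmeas hS0 hS hM0 hM in
lemma M_meas : ∀ n, Measurable (M n)
  | 0 => by
      have : M 0 = S 0 := funext hM0
      rw [this]; exact S_meas hXmeas hS0 hS 0
  | (n+1) => by
      have : M (n+1) = fun ω => max (M n ω) (S (n+1) ω) := funext (hM n)
      rw [this]
      exact (M_meas n).max (S_meas hXmeas hS0 hS (n+1))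

include hXmeas hS0 hS hM0 hM in
lemma ASet_meas (n r : ℕ) (s : ℤ) : MeasurableSet (ASet S M n r s) := by
  have : ASet S M n r s
      = (fun ω => (S (2*n) ω, M (2*n) ω)) ⁻¹' {p : ℤ × ℤ | p.2 < (r:ℤ) ∧ p.1 = s} := by
    ext ω; simp [ASet]
  rw [this]
  exact ((S_meas hXmeas hS0 hS (2*n)).prodMk (M_meas hXmeas hS0 hS hM0 hM (2*n))) (msetZZ _)

include hXmeas in
lemma Xset_meas (i : ℕ) (a : ℤ) : MeasurableSet {ω | X i ω = a} := by
  have : {ω | X i ω = a} = X i ⁻¹' {a} := by ext ω; simp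
  rw [this]; exact hXmeas i (msetZ _)

end Meas

section Probs

variable (hXmeas : ∀ i, Measurable (X i))
variable (hXindep : iIndepFun X μ)

include hXmeas in
lemma null_bad (i : ℕ) (a b : ℤ) (hab : a ≠ b)
    (ha : μ {ω | X i ω = a} = 1/2) (hb : μ {ω | X i ω = b} = 1/2) :
    μ ({ω | X i ω = a ∨ X i ω = b}ᶜ) = 0 := by
  have hdisj : Disjoint {ω | X i ω = a} {ω | X i ω = b} := by
    rw [Set.disjoint_left]
    intro ω h1 h2
    exact hab (by rw [← h1, ← h2])
  have hsplit : {ω | X i ω = a ∨ X i ω = b} = {ω | X i ω = a} ∪ {ω | X i ω = b} := rfl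
  have hu : μ {ω | X i ω = a ∨ X i ω = b} = 1 := by
    rw [hsplit, measure_union hdisj (Xset_meas hXmeas i b), ha, hb]
    simp [ENNReal.inv_two_add_inv_two]
  have hmeas : MeasurableSet {ω | X i ω = a ∨ X i ω = b} := by
    rw [hsplit]; exact (Xset_meas hXmeas i a).union (Xset_meas hXmeas i b)
  rw [prob_compl_eq_one_sub hmeas, hu, tsub_self]

include hXindep in
lemma pair_quarter (i j : ℕ) (hij : i ≠ j) (u v : ℤ)
    (hu : μ {ω | X i ω = u} = 1/2) (hv : μ {ω | X j ω = v} = 1/2) :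
    μ ({ω | X i ω = u} ∩ {ω | X j ω = v}) = 1/4 := by
  have h := (hXindep.indepFun hij).measure_inter_preimage_eq_mul
    ({u} : Set ℤ) ({v} : Set ℤ) (msetZ _) (msetZ _)
  have e1 : X i ⁻¹' {u} = {ω | X i ω = u} := by ext ω; simp
  have e2 : X j ⁻¹' {v} = {ω | X j ω = v} := by ext ω; simp
  rw [e1, e2] at h
  rw [h, hu, hv, one_div, one_div, ← ENNReal.mul_inv (by norm_num) (by norm_num)]
  norm_num

end Probs

section Indep

variable (hXmeas : ∀ i, Measurable (X i))
variable (hXindep : iIndepFun X μ)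
variable (hS0 : ∀ ω, S 0 ω = 0) (hS : ∀ (j : ℕ) (ω : Ω), S (j + 1) ω = max (S j ω + X (j + 1) ω) 0)
variable (hM0 : ∀ ω, M 0 ω = S 0 ω) (hM : ∀ (n : ℕ) (ω : Ω), M (n + 1) ω = max (M n ω) (S (n + 1) ω))

include hXmeas hXindep hS0 hS hM0 hM in
lemma indep_SM (n : ℕ) :
    IndepFun (fun ω => (S (2*n) ω, M (2*n) ω)) (fun ω => (X (2*n+1) ω, X (2*n+2) ω)) μ := by
  classical
  have hdisj : Disjoint (Finset.range (2*n+1)) ({2*n+1, 2*n+2} : Finset ℕ) := by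
    rw [Finset.disjoint_left]
    intro a ha hb
    rw [Finset.mem_range] at ha
    rw [Finset.mem_insert, Finset.mem_singleton] at hb
    omega
  have base := hXindep.indepFun_finset (Finset.range (2*n+1)) ({2*n+1, 2*n+2} : Finset ℕ)
    hdisj hXmeas
  set φ : ((i : (Finset.range (2*n+1) : Finset ℕ)) → ℤ) → ℤ × ℤ := fun f =>
    (sd (fun i => if h : i ∈ Finset.range (2*n+1) then f ⟨i, h⟩ else 0) (2*n),
     md (fun i => if h : i ∈ Finset.range (2*n+1) then f ⟨i, h⟩ else 0) (2*n)) with hφdef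
  set ψ : ((i : ({2*n+1, 2*n+2} : Finset ℕ)) → ℤ) → ℤ × ℤ := fun f =>
    (f ⟨2*n+1, by simp⟩, f ⟨2*n+2, by simp⟩) with hψdef
  have hφ : Measurable φ := measurable_of_countable _
  have hψ : Measurable ψ := measurable_of_countable _
  have key := base.comp hφ hψ
  have e1 : (φ ∘ fun a (i : (Finset.range (2*n+1) : Finset ℕ)) => X i a)
      = fun ω => (S (2*n) ω, M (2*n) ω) := by
    funext ω
    simp only [Function.comp_apply, hφdef]
    have hagree : ∀ i, 1 ≤ i → i ≤ 2*n →
        (fun i => if h : i ∈ Finset.range (2*n+1) then X i ω else 0) i = (fun i => X i ω) i := by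
      intro i _ h2
      simp only
      rw [dif_pos (Finset.mem_range.mpr (by omega))]
    have c1 : sd (fun i => if h : i ∈ Finset.range (2*n+1) then X i ω else 0) (2*n)
        = S (2*n) ω := by
      rw [sd_congr (2*n) hagree, ← S_eq_sd hS0 hS]
    have c2 : md (fun i => if h : i ∈ Finset.range (2*n+1) then X i ω else 0) (2*n)
        = M (2*n) ω := by
      rw [md_congr (2*n) hagree, ← M_eq_md hS0 hS hM0 hM]
    rw [Prod.mk.injEq]
    exact ⟨c1, c2⟩
  have e2 : (ψ ∘ fun a (i : ({2*n+1, 2*n+2} : Finset ℕ)) => X i a)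
      = fun ω => (X (2*n+1) ω, X (2*n+2) ω) := rfl
  rw [e1, e2] at key
  exact key

end Indep

section MainCtx

variable (hXmeas : ∀ i, Measurable (X i))
variable (hXindep : iIndepFun X μ)
variable (hXodd : ∀ i : ℕ, Odd i → μ {ω | X i ω = 1} = 1 / 2 ∧ μ {ω | X i ω = 0} = 1 / 2)
variable (hXeven : ∀ i : ℕ, 1 ≤ i → Even i →
      μ {ω | X i ω = 0} = 1 / 2 ∧ μ {ω | X i ω = -1} = 1 / 2)
variable (hS0 : ∀ ω, S 0 ω = 0) (hS : ∀ (j : ℕ) (ω : Ω), S (j + 1) ω = max (S j ω + X (j + 1) ω) 0)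
variable (hM0 : ∀ ω, M 0 ω = S 0 ω) (hM : ∀ (n : ℕ) (ω : Ω), M (n + 1) ω = max (M n ω) (S (n + 1) ω))

include hXodd in
lemma marg_odd (n : ℕ) (u : ℤ) (hu : u = 0 ∨ u = 1) : μ {ω | X (2*n+1) ω = u} = 1/2 := by
  have hodd : Odd (2*n+1) := ⟨n, by ring⟩
  rcases hu with h | h
  · rw [h]; exact (hXodd _ hodd).2
  · rw [h]; exact (hXodd _ hodd).1

include hXeven in
lemma marg_even (n : ℕ) (d : ℤ) (hd : d = 0 ∨ d = -1) : μ {ω | X (2*n+2) ω = d} = 1/2 := by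
  have heven : Even (2*n+2) := ⟨n+1, by ring⟩
  rcases hd with h | h
  · rw [h]; exact (hXeven _ (by omega) heven).1
  · rw [h]; exact (hXeven _ (by omega) heven).2

include hXmeas hXindep hXodd hXeven hS0 hS hM0 hM in
lemma step_rec (n r : ℕ) (hr : 1 ≤ r) (s' : ℤ) :
    (μ (ASet S M (n+1) r s')).toReal
      = ∑ t ∈ (Finset.Ico (0:ℤ) (r:ℤ)) ×ˢ (({0,1} : Finset ℤ) ×ˢ ({0,-1} : Finset ℤ)),
          (if t.1 + t.2.1 < (r:ℤ) ∧ s' = max (t.1 + t.2.1 + t.2.2) 0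
            then (4:ℝ)⁻¹ * (μ (ASet S M n r t.1)).toReal else 0) := by
  classical
  have hrZ : (1:ℤ) ≤ (r:ℤ) := by exact_mod_cast hr
  set G : Set Ω := {ω | (X (2*n+1) ω = 0 ∨ X (2*n+1) ω = 1)
      ∧ (X (2*n+2) ω = 0 ∨ X (2*n+2) ω = -1)} with hGdef
  have hGsplit : G = {ω | X (2*n+1) ω = 0 ∨ X (2*n+1) ω = 1}
      ∩ {ω | X (2*n+2) ω = 0 ∨ X (2*n+2) ω = -1} := rfl
  have hGc : μ Gᶜ = 0 := by
    rw [hGsplit, Set.compl_inter]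
    apply measure_union_null
    · exact null_bad hXmeas (2*n+1) 0 1 (by norm_num)
        (marg_odd hXodd n 0 (Or.inl rfl)) (marg_odd hXodd n 1 (Or.inr rfl))
    · exact null_bad hXmeas (2*n+2) 0 (-1) (by norm_num)
        (marg_even hXeven n 0 (Or.inl rfl)) (marg_even hXeven n (-1) (Or.inr rfl))
  have hGmeas : MeasurableSet G := by
    rw [hGsplit]
    exact (((Xset_meas hXmeas _ 0).union (Xset_meas hXmeas _ 1))).inter
      (((Xset_meas hXmeas _ 0).union (Xset_meas hXmeas _ (-1))))
  set idx : Finset (ℤ × ℤ × ℤ) :=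
    (Finset.Ico (0:ℤ) (r:ℤ)) ×ˢ (({0,1} : Finset ℤ) ×ˢ ({0,-1} : Finset ℤ)) with hidx
  set piece : ℤ × ℤ × ℤ → Set Ω := fun t =>
    ASet S M n r t.1 ∩ ({ω | X (2*n+1) ω = t.2.1} ∩ {ω | X (2*n+2) ω = t.2.2}) with hpiecedef
  have hpiece_meas : ∀ t, MeasurableSet (piece t) := by
    intro t
    exact (ASet_meas hXmeas hS0 hS hM0 hM n r t.1).inter
      ((Xset_meas hXmeas _ _).inter (Xset_meas hXmeas _ _))
  -- membership extraction
  have hmem_idx : ∀ t ∈ idx, (0 ≤ t.1 ∧ t.1 < (r:ℤ)) ∧ (t.2.1 = 0 ∨ t.2.1 = 1)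
      ∧ (t.2.2 = 0 ∨ t.2.2 = -1) := by
    intro t ht
    rw [hidx, Finset.mem_product, Finset.mem_product] at ht
    obtain ⟨h1, h2, h3⟩ := ht
    rw [Finset.mem_Ico] at h1
    simp only [Finset.mem_insert, Finset.mem_singleton] at h2 h3
    exact ⟨h1, h2, h3⟩
  -- the key pointwise equivalence on pieces
  have hiff : ∀ t ∈ idx, ∀ ω ∈ piece t,
      (ω ∈ ASet S M (n+1) r s' ↔ (t.1 + t.2.1 < (r:ℤ) ∧ s' = max (t.1 + t.2.1 + t.2.2) 0)) := by
    intro t ht ω hω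
    obtain ⟨⟨hs01, hsr1⟩, hu, hd⟩ := hmem_idx t ht
    obtain ⟨hA, hX1, hX2⟩ := hω
    obtain ⟨hM2n, hS2n⟩ := hA
    simp only [Set.mem_setOf_eq] at hX1 hX2
    have e1 : S (2*n+1) ω = max (t.1 + t.2.1) 0 := by rw [hS (2*n) ω, hS2n, hX1]
    have e2 : S (2*n+1+1) ω = max (max (t.1 + t.2.1) 0 + t.2.2) 0 := by
      rw [hS (2*n+1) ω, e1, hX2]
    have e3 : M (2*n+1) ω = max (M (2*n) ω) (S (2*n+1) ω) := hM (2*n) ω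
    have e4 : M (2*n+1+1) ω = max (M (2*n+1) ω) (S (2*n+1+1) ω) := hM (2*n+1) ω
    have eidx : 2*(n+1) = 2*n+1+1 := by ring
    show (M (2*(n+1)) ω < (r:ℤ) ∧ S (2*(n+1)) ω = s') ↔ _
    rw [eidx, e4, e3, e2, e1]
    omega
  -- covering
  have cover : ASet S M (n+1) r s' ∩ G
      = ⋃ t ∈ idx, (ASet S M (n+1) r s' ∩ G ∩ piece t) := by
    apply subset_antisymm
    · intro ω hω
      obtain ⟨hA, hG⟩ := hω
      have hMlt : M (2*n) ω < (r:ℤ) := by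
        have h1 := M_mono hM (2*n) ω
        have h2 := M_mono hM (2*n+1) ω
        have e : 2*(n+1) = 2*n+1+1 := by ring
        have := hA.1
        rw [e] at this
        omega
      have hs0 := S_nonneg hS0 hS (2*n) ω
      have hsM := S_le_M hS0 hM0 hM (2*n) ω
      refine Set.mem_biUnion (show (S (2*n) ω, X (2*n+1) ω, X (2*n+2) ω) ∈ idx from ?_) ?_
      · rw [hidx, Finset.mem_product, Finset.mem_product]
        refine ⟨Finset.mem_Ico.mpr ⟨hs0, by omega⟩, ?_, ?_⟩
        · simp only [Finset.mem_insert, Finset.mem_singleton]; exact hG.1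
        · simp only [Finset.mem_insert, Finset.mem_singleton]; exact hG.2
      · exact ⟨⟨hA, hG⟩, ⟨hMlt, rfl⟩, rfl, rfl⟩
    · intro ω hω
      simp only [Set.mem_iUnion] at hω
      obtain ⟨t, _, h⟩ := hω
      exact h.1
  -- disjointness
  have disj : (idx : Set (ℤ × ℤ × ℤ)).PairwiseDisjoint
      (fun t => ASet S M (n+1) r s' ∩ G ∩ piece t) := by
    intro t1 _ t2 _ hne
    rw [Function.onFun, Set.disjoint_left]
    intro ω h1 h2
    apply hne
    obtain ⟨_, ⟨_, e1⟩, f1, g1⟩ := h1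
    obtain ⟨_, ⟨_, e2⟩, f2, g2⟩ := h2
    simp only [Set.mem_setOf_eq] at f1 g1 f2 g2
    have : t1.1 = t2.1 := by rw [← e1, ← e2]
    have h21 : t1.2.1 = t2.2.1 := by rw [← f1, ← f2]
    have h22 : t1.2.2 = t2.2.2 := by rw [← g1, ← g2]
    exact Prod.ext this (Prod.ext h21 h22)
  -- measure computation
  have hmain : μ (ASet S M (n+1) r s')
      = ∑ t ∈ idx, (if t.1 + t.2.1 < (r:ℤ) ∧ s' = max (t.1 + t.2.1 + t.2.2) 0
          then μ (ASet S M n r t.1) * (1/4) else 0) := by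
    rw [← measure_inter_conull hGc, cover, measure_biUnion_finset disj
      (fun t _ => ((ASet_meas hXmeas hS0 hS hM0 hM (n+1) r s').inter hGmeas).inter
        (hpiece_meas t))]
    apply Finset.sum_congr rfl
    intro t ht
    have hre : ASet S M (n+1) r s' ∩ G ∩ piece t = (ASet S M (n+1) r s' ∩ piece t) ∩ G := by
      ext ω; constructor
      · rintro ⟨⟨h1, h2⟩, h3⟩; exact ⟨⟨h1, h3⟩, h2⟩
      · rintro ⟨⟨h1, h3⟩, h2⟩; exact ⟨⟨h1, h2⟩, h3⟩
    rw [hre, measure_inter_conull hGc]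
    by_cases hc : t.1 + t.2.1 < (r:ℤ) ∧ s' = max (t.1 + t.2.1 + t.2.2) 0
    · rw [if_pos hc]
      have : ASet S M (n+1) r s' ∩ piece t = piece t := by
        apply subset_antisymm inter_subset_right
        intro ω hω
        exact ⟨(hiff t ht ω hω).mpr hc, hω⟩
      rw [this]
      -- independence
      obtain ⟨⟨hs01, hsr1⟩, hu, hd⟩ := hmem_idx t ht
      have hind := indep_SM hXmeas hXindep hS0 hS hM0 hM n
      have hfact := hind.measure_inter_preimage_eq_mul
        {p : ℤ × ℤ | p.2 < (r:ℤ) ∧ p.1 = t.1} {(t.2.1, t.2.2)} (msetZZ _) (msetZZ _)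
      have epre1 : (fun ω => (S (2*n) ω, M (2*n) ω)) ⁻¹' {p : ℤ × ℤ | p.2 < (r:ℤ) ∧ p.1 = t.1}
          = ASet S M n r t.1 := by
        ext ω; simp [ASet]
      have epre2 : (fun ω => (X (2*n+1) ω, X (2*n+2) ω)) ⁻¹' {(t.2.1, t.2.2)}
          = {ω | X (2*n+1) ω = t.2.1} ∩ {ω | X (2*n+2) ω = t.2.2} := by
        ext ω
        simp [Prod.ext_iff]
      rw [epre1, epre2] at hfact
      rw [hpiecedef]
      simp only
      rw [hfact]
      congr 1
      exact pair_quarter hXindep (2*n+1) (2*n+2) (by omega) t.2.1 t.2.2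
        (marg_odd hXodd n t.2.1 hu) (marg_even hXeven n t.2.2 hd)
    · rw [if_neg hc]
      have : ASet S M (n+1) r s' ∩ piece t = ∅ := by
        rw [Set.eq_empty_iff_forall_notMem]
        intro ω hω
        exact hc ((hiff t ht ω hω.2).mp hω.1)
      rw [this, measure_empty]
  rw [hmain, ENNReal.toReal_sum]
  · apply Finset.sum_congr rfl
    intro t _
    by_cases hc : t.1 + t.2.1 < (r:ℤ) ∧ s' = max (t.1 + t.2.1 + t.2.2) 0
    · rw [if_pos hc, if_pos hc, ENNReal.toReal_mul]
      rw [show ((1/4 : ℝ≥0∞)).toReal = (4:ℝ)⁻¹ by norm_num]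
      ring
    · rw [if_neg hc, if_neg hc, ENNReal.toReal_zero]
  · intro t _
    by_cases hc : t.1 + t.2.1 < (r:ℤ) ∧ s' = max (t.1 + t.2.1 + t.2.2) 0
    · rw [if_pos hc]
      exact ENNReal.mul_ne_top (measure_ne_top μ _) (by norm_num)
    · rw [if_neg hc]; exact ENNReal.zero_ne_top

include hXmeas hXindep hXodd hXeven hS0 hS hM0 hM in
lemma tau_eq (r : ℕ) (hr : 1 ≤ r) : ∀ (n : ℕ) (s : ℤ),
    (μ (ASet S M n r s)).toReal = tau r n s := by
  intro n
  induction n with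
  | zero =>
      intro s
      have hrZ : (1:ℤ) ≤ (r:ℤ) := by exact_mod_cast hr
      rw [show tau r 0 s = if s = 0 ∧ 0 < r then 1 else 0 from rfl]
      by_cases hs : s = 0
      · have : ASet S M 0 r s = Set.univ := by
          ext ω
          simp only [ASet, Set.mem_setOf_eq, Set.mem_univ, iff_true]
          have e : 2*0 = 0 := by norm_num
          rw [e, hM0 ω, hS0 ω]
          omega
        rw [this, measure_univ, if_pos ⟨hs, by omega⟩, ENNReal.toReal_one]
      · have : ASet S M 0 r s = ∅ := by
          rw [Set.eq_empty_iff_forall_notMem]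
          intro ω hω
          obtain ⟨_, h2⟩ := hω
          apply hs
          have e : 2*0 = 0 := by norm_num
          rw [e, hS0 ω] at h2
          omega
        rw [this, measure_empty, if_neg (fun h => hs h.1), ENNReal.toReal_zero]
  | succ n ih =>
      intro s'
      rw [step_rec hXmeas hXindep hXodd hXeven hS0 hS hM0 hM n r hr s']
      rw [show tau r (n+1) s' = ∑ s ∈ Finset.Ico (0:ℤ) (r:ℤ),
        ((if s' = s then (4:ℝ)⁻¹ * tau r n s else 0)
        + (if s' = max (s-1) 0 then (4:ℝ)⁻¹ * tau r n s else 0)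
        + (if s + 1 < (r:ℤ) ∧ s' = s + 1 then (4:ℝ)⁻¹ * tau r n s else 0)
        + (if s + 1 < (r:ℤ) ∧ s' = s then (4:ℝ)⁻¹ * tau r n s else 0)) from rfl]
      rw [Finset.sum_product]
      apply Finset.sum_congr rfl
      intro s hs
      obtain ⟨hs0, hsr⟩ := Finset.mem_Ico.mp hs
      rw [Finset.sum_product]
      rw [Finset.sum_pair (by norm_num : (0:ℤ) ≠ 1)]
      rw [Finset.sum_pair (by norm_num : (0:ℤ) ≠ -1), Finset.sum_pair (by norm_num : (0:ℤ) ≠ -1)]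
      simp only
      rw [ih s]
      have c1 : (s + 0 < (r:ℤ) ∧ s' = max (s+0+0) 0) ↔ (s' = s) := by omega
      have c2 : (s + 0 < (r:ℤ) ∧ s' = max (s+0+(-1)) 0) ↔ (s' = max (s-1) 0) := by omega
      have c3 : (s + 1 < (r:ℤ) ∧ s' = max (s+1+0) 0) ↔ (s + 1 < (r:ℤ) ∧ s' = s+1) := by omega
      have c4 : (s + 1 < (r:ℤ) ∧ s' = max (s+1+(-1)) 0) ↔ (s + 1 < (r:ℤ) ∧ s' = s) := by omega
      rw [if_congr c1 rfl rfl, if_congr c2 rfl rfl, if_congr c3 rfl rfl, if_congr c4 rfl rfl]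
      ring

include hXmeas hXindep hXodd hXeven hS0 hS hM0 hM in
lemma sig_eq (r : ℕ) (hr : 1 ≤ r) (n : ℕ) :
    (μ {ω | M (2*n) ω < (r:ℤ)}).toReal = sig r n := by
  have hcov : {ω | M (2*n) ω < (r:ℤ)} = ⋃ s ∈ Finset.Ico (0:ℤ) (r:ℤ), ASet S M n r s := by
    ext ω
    simp only [Set.mem_setOf_eq, Set.mem_iUnion, ASet]
    constructor
    · intro h
      refine ⟨S (2*n) ω, ?_, h, rfl⟩
      rw [Finset.mem_Ico]
      have := S_nonneg hS0 hS (2*n) ω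
      have := S_le_M hS0 hM0 hM (2*n) ω
      omega
    · rintro ⟨s, _, h, _⟩; exact h
  have hdisj : ((Finset.Ico (0:ℤ) (r:ℤ)) : Set ℤ).PairwiseDisjoint (ASet S M n r) := by
    intro s1 _ s2 _ hne
    rw [Function.onFun, Set.disjoint_left]
    intro ω h1 h2
    exact hne (by rw [← h1.2, ← h2.2])
  rw [hcov, measure_biUnion_finset hdisj
    (fun s _ => ASet_meas hXmeas hS0 hS hM0 hM n r s)]
  rw [ENNReal.toReal_sum (fun s _ => measure_ne_top μ _)]
  rw [sig]
  exact Finset.sum_congr rfl (fun s _ => tau_eq hXmeas hXindep hXodd hXeven hS0 hS hM0 hM r hr n s)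

include hXmeas hXindep hXodd hXeven hS0 hS hM0 hM in
lemma tau_nonneg (r : ℕ) (hr : 1 ≤ r) (n : ℕ) (s : ℤ) : 0 ≤ tau r n s := by
  rw [← tau_eq hXmeas hXindep hXodd hXeven hS0 hS hM0 hM r hr n s]
  exact ENNReal.toReal_nonneg

include hXmeas hXindep hXodd hXeven hS0 hS hM0 hM in
lemma sig_le_one (r : ℕ) (hr : 1 ≤ r) (n : ℕ) : sig r n ≤ 1 := by
  rw [← sig_eq hXmeas hXindep hXodd hXeven hS0 hS hM0 hM r hr n]
  rw [show (1:ℝ) = (1:ℝ≥0∞).toReal by norm_num]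
  exact ENNReal.toReal_mono (by norm_num) prob_le_one

-- a.s. bound M_{2n} ≤ n
include hXmeas hXodd hXeven hS0 hS hM0 hM in
lemma M_le_ae (n : ℕ) : ∀ᵐ ω ∂μ, M (2*n) ω ≤ (n:ℤ) := by
  classical
  set GG : Set Ω := ⋂ i ∈ Finset.Icc 1 (2*n),
    {ω | X i ω = (if i % 2 = 1 then 1 else 0) ∨ X i ω = (if i % 2 = 1 then 0 else -1)} with hGGdef
  have hGGnull : μ GGᶜ = 0 := by
    rw [hGGdef, Set.compl_iInter₂]
    refine measure_biUnion_null_iff (Finset.Icc 1 (2*n)).countable_toSet |>.mpr ?_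
    intro i hi
    rw [Finset.mem_coe, Finset.mem_Icc] at hi
    rcases Nat.even_or_odd i with he | ho
    · have h2 : i % 2 = 0 := Nat.even_iff.mp he
      simp only [h2]
      norm_num
      rcases he with ⟨m, hm⟩
      have hm' : i = 2*(m-1)+2 := by omega
      rw [hm']
      exact null_bad hXmeas (2*(m-1)+2) 0 (-1) (by norm_num)
        (marg_even hXeven (m-1) 0 (Or.inl rfl)) (marg_even hXeven (m-1) (-1) (Or.inr rfl))
    · have h2 : i % 2 = 1 := Nat.odd_iff.mp ho
      simp only [h2]
      norm_num
      rcases ho with ⟨m, hm⟩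
      rw [hm]
      exact null_bad hXmeas (2*m+1) 1 0 (by norm_num)
        (marg_odd hXodd m 1 (Or.inr rfl)) (marg_odd hXodd m 0 (Or.inl rfl))
  have hbound : ∀ ω ∈ GG, M (2*n) ω ≤ (n:ℤ) := by
    intro ω hω
    have hXle : ∀ i, 1 ≤ i → i ≤ 2*n → X i ω ≤ (if i % 2 = 1 then 1 else 0) := by
      intro i h1 h2
      have := Set.mem_iInter₂.mp hω i (Finset.mem_Icc.mpr ⟨h1, h2⟩)
      rcases this with h | h <;> rw [h] <;> split <;> norm_num
    have key : ∀ k, k ≤ n → S (2*k) ω ≤ (k:ℤ) ∧ M (2*k) ω ≤ (k:ℤ) := by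
      intro k
      induction k with
      | zero =>
          intro _
          constructor
          · rw [show 2*0 = 0 by norm_num, hS0 ω]; simp
          · rw [show 2*0 = 0 by norm_num, hM0 ω, hS0 ω]; simp
      | succ k ihk =>
          intro hk
          obtain ⟨ihS, ihM⟩ := ihk (by omega)
          have hx1 : X (2*k+1) ω ≤ 1 := by
            have := hXle (2*k+1) (by omega) (by omega)
            rwa [if_pos (by omega)] at this
          have hx2 : X (2*k+2) ω ≤ 0 := by
            have := hXle (2*k+2) (by omega) (by omega)
            rwa [if_neg (by omega)] at this
          have e1 : S (2*k+1) ω = max (S (2*k) ω + X (2*k+1) ω) 0 := hS (2*k) ω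
          have e2 : S (2*k+1+1) ω = max (S (2*k+1) ω + X (2*k+2) ω) 0 := hS (2*k+1) ω
          have e3 : M (2*k+1) ω = max (M (2*k) ω) (S (2*k+1) ω) := hM (2*k) ω
          have e4 : M (2*k+1+1) ω = max (M (2*k+1) ω) (S (2*k+1+1) ω) := hM (2*k+1) ω
          have eidx : 2*(k+1) = 2*k+1+1 := by ring
          rw [eidx]
          push_cast
          omega
    exact (key n (le_refl n)).2
  have : ∀ᵐ ω ∂μ, ω ∈ GG := by
    rw [MeasureTheory.ae_iff]
    convert hGGnull using 2
    rfl
  filter_upwards [this] with ω hω using hbound ω hω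

include hXmeas hXindep hXodd hXeven hS0 hS hM0 hM in
lemma sig_eq_one (r n : ℕ) (hn : n < r) : sig r n = 1 := by
  rw [← sig_eq hXmeas hXindep hXodd hXeven hS0 hS hM0 hM r (by omega) n]
  have h1 : μ {ω | M (2*n) ω < (r:ℤ)} = 1 := by
    rw [← measure_univ (μ := μ)]
    apply measure_congr
    rw [Filter.eventuallyEq_univ]
    filter_upwards [M_le_ae hXmeas hXodd hXeven hS0 hS hM0 hM n] with ω hω
    have : (n:ℤ) < (r:ℤ) := by exact_mod_cast hn
    exact lt_of_le_of_lt hω this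
  rw [h1, ENNReal.toReal_one]

lemma intsum (n : ℕ) (m : ℤ) (h0 : 0 ≤ m) (hn : m ≤ (n:ℤ)) :
    (m : ℝ) = ∑ r ∈ Finset.Icc 1 n, (if (r:ℤ) ≤ m then (1:ℝ) else 0) := by
  induction n with
  | zero =>
      have : m = 0 := by omega
      simp [this]
  | succ n ih =>
      rw [Finset.sum_Icc_succ_top (by omega : 1 ≤ n+1)]
      by_cases hm : m ≤ (n:ℤ)
      · rw [← ih hm, if_neg (by push_cast; omega)]
        ring
      · have hm' : m = (n:ℤ)+1 := by push_cast at hn ⊢; omega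
        have hall : ∀ x ∈ Finset.Icc 1 n, (if (x:ℤ) ≤ m then (1:ℝ) else 0) = 1 := by
          intro x hx
          rw [Finset.mem_Icc] at hx
          rw [if_pos (by push_cast; omega)]
        rw [Finset.sum_congr rfl hall, Finset.sum_const, if_pos (by push_cast; omega),
          Nat.card_Icc]
        simp only [nsmul_eq_mul, mul_one]
        have : (m:ℝ) = ((n:ℤ):ℝ) + 1 := by exact_mod_cast congrArg (Int.cast : ℤ → ℝ) hm'
        rw [this]
        push_cast
        ring

include hXmeas hXindep hXodd hXeven hS0 hS hM0 hM in
lemma integral_eq (n : ℕ) :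
    ∫ ω, ((M (2*n) ω : ℤ) : ℝ) ∂μ = ∑ r ∈ Finset.Icc 1 n, (1 - sig r n) := by
  have hae : (fun ω => ((M (2*n) ω : ℤ) : ℝ))
      =ᵐ[μ] (fun ω => ∑ r ∈ Finset.Icc 1 n,
        Set.indicator {ω | (r:ℤ) ≤ M (2*n) ω} (fun _ => (1:ℝ)) ω) := by
    filter_upwards [M_le_ae hXmeas hXodd hXeven hS0 hS hM0 hM n] with ω hω
    have h0 : 0 ≤ M (2*n) ω :=
      le_trans (S_nonneg hS0 hS (2*n) ω) (S_le_M hS0 hM0 hM (2*n) ω)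
    rw [intsum n (M (2*n) ω) h0 hω]
    apply Finset.sum_congr rfl
    intro r _
    rw [Set.indicator_apply]
    rfl
  rw [integral_congr_ae hae]
  have hmeas' : ∀ r : ℕ, MeasurableSet {ω | (r:ℤ) ≤ M (2*n) ω} := by
    intro r
    have : {ω | (r:ℤ) ≤ M (2*n) ω} = (M (2*n)) ⁻¹' (Set.Ici (r:ℤ)) := rfl
    rw [this]
    exact (M_meas hXmeas hS0 hS hM0 hM (2*n)) (msetZ _)
  rw [integral_finset_sum _ (fun r _ => (integrable_const (1:ℝ)).indicator (hmeas' r))]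
  apply Finset.sum_congr rfl
  intro r hr
  rw [Finset.mem_Icc] at hr
  rw [integral_indicator_const (1:ℝ) (hmeas' r), smul_eq_mul, mul_one]
  have hcompl : {ω | (r:ℤ) ≤ M (2*n) ω} = {ω | M (2*n) ω < (r:ℤ)}ᶜ := by
    ext ω; simp [not_lt]
  rw [hcompl, measureReal_def, prob_compl_eq_one_sub]
  · rw [ENNReal.toReal_sub_of_le prob_le_one (by norm_num), ENNReal.toReal_one,
      sig_eq hXmeas hXindep hXodd hXeven hS0 hS hM0 hM r hr.1 n]
  · have : {ω | M (2*n) ω < (r:ℤ)} = (M (2*n)) ⁻¹' (Set.Iio (r:ℤ)) := rfl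
    rw [this]
    exact (M_meas hXmeas hS0 hS hM0 hM (2*n)) (msetZ _)

end MainCtx

end Ctx


end MQAux


/-- Symmetric case: Abel-type limit
lim_{λ→1⁻} (1-λ)^{3/2} Σ_{n≥1} λⁿ E(M_{2n}) = π/4,
i.e. E(M_{2n})/√(2n) → √(π/8) in the Abel sense. -/
theorem maxQueue_symmetric_mean_abel_limit
    {Ω : Type*} [MeasurableSpace Ω] (μ : Measure Ω) [IsProbabilityMeasure μ]
    (X : ℕ → Ω → ℤ) (hXmeas : ∀ i, Measurable (X i))
    (hXindep : iIndepFun X μ)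
    (hXodd : ∀ i : ℕ, Odd i →
      μ {ω | X i ω = 1} = 1 / 2 ∧ μ {ω | X i ω = 0} = 1 / 2)
    (hXeven : ∀ i : ℕ, 1 ≤ i → Even i →
      μ {ω | X i ω = 0} = 1 / 2 ∧ μ {ω | X i ω = -1} = 1 / 2)
    (S : ℕ → Ω → ℤ) (hS0 : ∀ ω, S 0 ω = 0)
    (hS : ∀ (j : ℕ) (ω : Ω), S (j + 1) ω = max (S j ω + X (j + 1) ω) 0)
    (M : ℕ → Ω → ℤ) (hM0 : ∀ ω, M 0 ω = S 0 ω)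
    (hM : ∀ (n : ℕ) (ω : Ω), M (n + 1) ω = max (M n ω) (S (n + 1) ω)) :
    Tendsto
      (fun l : ℝ =>
        (1 - l) ^ ((3 : ℝ) / 2)
          * ∑' n : ℕ, l ^ (n + 1) * ∫ ω, ((M (2 * (n + 1)) ω : ℤ) : ℝ) ∂μ)
      (nhdsWithin 1 (Set.Iio 1)) (nhds (π / 4)) := by
  classical
  have hInt : ∀ m : ℕ, (∫ ω, ((M (2*m) ω : ℤ) : ℝ) ∂μ)
      = ∑ r ∈ Finset.Icc 1 m, (1 - MQAux.sig r m) :=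
    fun m => MQAux.integral_eq hXmeas hXindep hXodd hXeven hS0 hS hM0 hM m
  have hTau : ∀ (r : ℕ), 1 ≤ r → ∀ (n : ℕ) (s : ℤ), 0 ≤ MQAux.tau r n s :=
    fun r hr => MQAux.tau_nonneg hXmeas hXindep hXodd hXeven hS0 hS hM0 hM r hr
  have hSig1 : ∀ (r : ℕ), 1 ≤ r → ∀ n, MQAux.sig r n ≤ 1 :=
    fun r hr => MQAux.sig_le_one hXmeas hXindep hXodd hXeven hS0 hS hM0 hM r hr
  have hSigOne : ∀ (r n : ℕ), n < r → MQAux.sig r n = 1 :=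
    fun r n h => MQAux.sig_eq_one hXmeas hXindep hXodd hXeven hS0 hS hM0 hM r n h
  have hSignn : ∀ (r : ℕ), 1 ≤ r → ∀ n, 0 ≤ MQAux.sig r n := by
    intro r hr n
    rw [MQAux.sig]
    exact Finset.sum_nonneg (fun s _ => hTau r hr n s)
  -- the key identity for each l in (0,1)
  have key : ∀ l : ℝ, l ∈ Set.Ioo (0:ℝ) 1 →
      (∑' n : ℕ, l ^ (n + 1) * ∫ ω, ((M (2 * (n + 1)) ω : ℤ) : ℝ) ∂μ)
        = MQAux.Phi ((1 - Real.sqrt (1-l))/(1 + Real.sqrt (1-l))) / (1 - l) := by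
    intro l hl
    obtain ⟨hl0, hl1⟩ := hl
    set t : ℝ := Real.sqrt (1-l) with htdef
    have ht2 : t^2 = 1 - l := Real.sq_sqrt (by linarith)
    have ht0 : 0 < t := Real.sqrt_pos.mpr (by linarith)
    have ht1 : t < 1 := by nlinarith [ht2, ht0.le]
    set x : ℝ := (1-t)/(1+t) with hxdef
    have hx0 : 0 < x := div_pos (by linarith) (by linarith)
    have hx1 : x < 1 := by
      rw [hxdef, div_lt_one (by linarith)]; linarith
    have hlx : 4*x/(1+x)^2 = l := by
      rw [hxdef]
      have h1t : (1:ℝ) + t ≠ 0 := by positivity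
      field_simp
      nlinarith [ht2]
    -- p and q
    set p : ℕ → ℕ → ℝ := fun r m => 1 - MQAux.sig r m with hpdef
    set q : ℕ → ℕ → ℝ := fun k m => l^m * p (k+1) m with hqdef
    have hq_nonneg : ∀ k m, 0 ≤ q k m := by
      intro k m
      apply mul_nonneg (pow_nonneg hl0.le m)
      have := hSig1 (k+1) (by omega) m
      simp only [hpdef]; linarith
    have hp_le_one : ∀ k m, p (k+1) m ≤ 1 := by
      intro k m
      have := hSignn (k+1) (by omega) m
      simp only [hpdef]; linarith
    have hq_zero : ∀ k m, m < k + 1 → q k m = 0 := by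
      intro k m h
      simp only [hqdef, hpdef, hSigOne (k+1) m h, sub_self, mul_zero]
    -- row sums from the generating function
    have hrow : ∀ k : ℕ, HasSum (fun m => q k m)
        ((2*x^(k+1)/(1+(x^(k+1))^2)) / (1 - l)) := by
      intro k
      have h := MQAux.gf_hasSum (k+1) (by omega) hx0 hx1
        (hTau (k+1) (by omega)) (hSig1 (k+1) (by omega))
      rw [hlx] at h
      exact h
    have hrow_summable : ∀ k, Summable (fun m => q k m) := fun k => (hrow k).summable
    have hpow : ∀ k : ℕ, (x^(k+1))^2 = x^(2*(k+1)) := by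
      intro k
      rw [← pow_mul, Nat.mul_comm]
    have hT_summable : Summable (fun k : ℕ => (2*x^(k+1)/(1+(x^(k+1))^2)) / (1 - l)) := by
      apply Summable.div_const
      have := MQAux.phi_summable hx0 hx1
      apply Summable.congr this
      intro k
      rw [hpow k]
    -- summability of the double series
    have huncurry : Summable (Function.uncurry (fun k m => q k m)) := by
      have hnn : 0 ≤ Function.uncurry (fun k m => q k m) := fun km => hq_nonneg km.1 km.2
      refine (summable_prod_of_nonneg hnn).mpr ⟨hrow_summable, ?_⟩
      apply Summable.congr hT_summable
      intro k
      exact ((hrow k).tsum_eq).symm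
    have hcol_summable : ∀ m, Summable (fun k => q k m) := by
      intro m
      apply summable_of_ne_finset_zero (s := Finset.range m)
      intro k hk
      rw [Finset.mem_range, not_lt] at hk
      exact hq_zero k m (by omega)
    -- column evaluation
    have hcol : ∀ m : ℕ, (∑' k, q k m) = l^m * ∑ r ∈ Finset.Icc 1 m, (1 - MQAux.sig r m) := by
      intro m
      rw [tsum_eq_sum (s := Finset.range m) (fun k hk => by
        rw [Finset.mem_range, not_lt] at hk
        exact hq_zero k m (by omega))]
      rw [← Finset.Ico_add_one_right_eq_Icc, Finset.sum_Ico_eq_sum_range]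
      rw [Finset.mul_sum]
      apply Finset.sum_congr rfl
      intro k _
      simp only [hqdef, hpdef, Nat.add_comm 1 k]
    -- swap
    have hswap := Summable.tsum_comm' huncurry hrow_summable hcol_summable
    -- identify target with ∑'_m col m
    have hcol0 : (∑' k, q k 0) = 0 := by
      rw [hcol 0, Finset.Icc_eq_empty (by omega)]
      simp
    have hcolsum : Summable (fun m => ∑' k, q k m) := by
      have hb : ∀ m : ℕ, ‖∑' k, q k m‖ ≤ (m:ℝ) * l^m := by
        intro m
        rw [hcol m, Real.norm_eq_abs, abs_mul, abs_of_nonneg (pow_nonneg hl0.le m)]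
        have habs : |∑ r ∈ Finset.Icc 1 m, (1 - MQAux.sig r m)| ≤ (m:ℝ) := by
          rw [abs_of_nonneg (Finset.sum_nonneg (fun r hr => by
            have := hSig1 r (Finset.mem_Icc.mp hr).1 m; linarith))]
          calc ∑ r ∈ Finset.Icc 1 m, (1 - MQAux.sig r m)
              ≤ ∑ r ∈ Finset.Icc 1 m, (1:ℝ) := Finset.sum_le_sum (fun r hr => by
                have := hSignn r (Finset.mem_Icc.mp hr).1 m; linarith)
            _ = (m:ℝ) := by rw [Finset.sum_const, Nat.card_Icc]; simp
        calc l^m * |∑ r ∈ Finset.Icc 1 m, (1 - MQAux.sig r m)|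
            ≤ l^m * (m:ℝ) := by
              apply mul_le_mul_of_nonneg_left habs (pow_nonneg hl0.le m)
          _ = (m:ℝ) * l^m := by ring
      apply Summable.of_norm_bounded ?_ hb
      have := summable_pow_mul_geometric_of_norm_lt_one 1 (r := l)
        (by rw [Real.norm_eq_abs, abs_of_pos hl0]; exact hl1)
      apply Summable.congr this
      intro m
      simp [pow_one]
    -- target series = ∑'_n col (n+1)
    have htarget : (∑' n : ℕ, l ^ (n + 1) * ∫ ω, ((M (2 * (n + 1)) ω : ℤ) : ℝ) ∂μ)
        = ∑' n : ℕ, (∑' k, q k (n+1)) := by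
      apply tsum_congr
      intro n
      rw [hInt (n+1), hcol (n+1)]
    rw [htarget]
    have hzero_add := Summable.tsum_eq_zero_add hcolsum
    rw [hcol0, zero_add] at hzero_add
    rw [← hzero_add, hswap]
    -- evaluate ∑'_k row k
    have hrowval : (∑' k, ∑' m, q k m)
        = ∑' k : ℕ, (2*x^(k+1)/(1+(x^(k+1))^2)) / (1 - l) := by
      apply tsum_congr
      intro k
      exact (hrow k).tsum_eq
    rw [hrowval]
    rw [tsum_div_const]
    congr 1
    rw [MQAux.Phi]
    apply tsum_congr
    intro k
    rw [hpow k]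
  -- final limit
  have hxcont : Tendsto (fun l : ℝ => (1 - Real.sqrt (1-l))/(1 + Real.sqrt (1-l)))
      (nhdsWithin 1 (Set.Iio 1)) (nhdsWithin 1 (Set.Ioo (0:ℝ) 1)) := by
    apply tendsto_nhdsWithin_of_tendsto_nhds_of_eventually_within
    · have hsq : Tendsto (fun l : ℝ => Real.sqrt (1-l)) (nhds 1) (nhds 0) := by
        have : Continuous (fun l : ℝ => Real.sqrt (1-l)) :=
          Real.continuous_sqrt.comp (continuous_const.sub continuous_id)
        have h := this.tendsto 1
        simpa using h
      have : Tendsto (fun l : ℝ => (1 - Real.sqrt (1-l))/(1 + Real.sqrt (1-l)))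
          (nhds 1) (nhds ((1 - 0)/(1 + 0))) := by
        apply Tendsto.div
        · exact tendsto_const_nhds.sub hsq
        · exact tendsto_const_nhds.add hsq
        · norm_num
      norm_num at this
      exact this.mono_left nhdsWithin_le_nhds
    · have hev : ∀ᶠ l in nhdsWithin (1:ℝ) (Set.Iio 1), l ∈ Set.Ioo (0:ℝ) 1 := by
        have h1 : Set.Ioi (0:ℝ) ∈ nhdsWithin (1:ℝ) (Set.Iio 1) :=
          nhdsWithin_le_nhds (isOpen_Ioi.mem_nhds (by norm_num))
        have h2 : Set.Iio (1:ℝ) ∈ nhdsWithin (1:ℝ) (Set.Iio 1) := self_mem_nhdsWithin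
        filter_upwards [h1, h2] with l hl1 hl2
        exact ⟨hl1, hl2⟩
      filter_upwards [hev] with l hl
      obtain ⟨hl0, hl1⟩ := hl
      set t : ℝ := Real.sqrt (1-l) with htdef
      have ht2 : t^2 = 1 - l := Real.sq_sqrt (by linarith)
      have ht0 : 0 < t := Real.sqrt_pos.mpr (by linarith)
      have ht1 : t < 1 := by nlinarith [ht0.le]
      constructor
      · exact div_pos (by linarith) (by linarith)
      · rw [div_lt_one (by linarith)]; linarith
  have hcomp := MQAux.psi_limit.comp hxcont
  apply Tendsto.congr' _ hcomp
  -- eventual equality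
  have hev : ∀ᶠ l in nhdsWithin (1:ℝ) (Set.Iio 1), l ∈ Set.Ioo (0:ℝ) 1 := by
    have h1 : Set.Ioi (0:ℝ) ∈ nhdsWithin (1:ℝ) (Set.Iio 1) :=
      nhdsWithin_le_nhds (isOpen_Ioi.mem_nhds (by norm_num))
    have h2 : Set.Iio (1:ℝ) ∈ nhdsWithin (1:ℝ) (Set.Iio 1) := self_mem_nhdsWithin
    filter_upwards [h1, h2] with l hl1 hl2
    exact ⟨hl1, hl2⟩
  filter_upwards [hev] with l hl
  obtain ⟨hl0, hl1⟩ := hl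
  set t : ℝ := Real.sqrt (1-l) with htdef
  have ht2 : t^2 = 1 - l := Real.sq_sqrt (by linarith)
  have ht0 : 0 < t := Real.sqrt_pos.mpr (by linarith)
  have ht1 : t < 1 := by nlinarith [ht0.le]
  set x : ℝ := (1-t)/(1+t) with hxdef
  have h1t : (1:ℝ) + t ≠ 0 := by positivity
  have hx0 : 0 < x := div_pos (by linarith) (by linarith)
  have hsqeq : (1 - x)/(1 + x) = t := by
    rw [hxdef]
    field_simp
    ring
  show (fun y : ℝ => (1-y)/(1+y) * MQAux.Phi y) ((1 - Real.sqrt (1-l))/(1 + Real.sqrt (1-l)))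
      = (1 - l) ^ ((3 : ℝ) / 2) * ∑' n : ℕ, l ^ (n + 1) * ∫ ω, ((M (2 * (n + 1)) ω : ℤ) : ℝ) ∂μ
  rw [key l ⟨hl0, hl1⟩]
  simp only
  rw [show ((1 - Real.sqrt (1-l))/(1 + Real.sqrt (1-l))) = x from rfl]
  rw [hsqeq]
  have hrpow : (1 - l) ^ ((3:ℝ)/2) = (1-l) * Real.sqrt (1-l) := by
    rw [show (3:ℝ)/2 = 1 + 1/2 by norm_num, Real.rpow_add (by linarith), Real.rpow_one,
      ← Real.sqrt_eq_rpow]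
  rw [hrpow, ← htdef]
  have h1l : (1:ℝ) - l ≠ 0 := by linarith
  field_simp
end

section
/- As t → 0⁺, the quantity t² · Σ_{a=1}^∞ a·sech(a·t) converges to ∫₀^∞ b·sech(b) db = 2G, where G = Σ_{k≥0} (-1)^k/(2k+1)² is Catalan's constant and sech(x) = 2/(e^x + e^{-x}). -/
open Filter Real

open Set MeasureTheory


lemma sech_hasSum {x : ℝ} (hx : 0 < x) :
    HasSum (fun n : ℕ => 2 * (-1 : ℝ) ^ n * Real.exp (-((2 * n + 1) * x)))
      (2 / (Real.exp x + Real.exp (-x))) := by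
  have hq : ‖(-Real.exp (-(2 * x)))‖ < 1 := by
    rw [norm_neg, Real.norm_eq_abs, abs_of_pos (Real.exp_pos _)]
    exact Real.exp_lt_one_iff.2 (by linarith)
  have h := (hasSum_geometric_of_norm_lt_one hq).mul_left (2 * Real.exp (-x))
  have heq : ∀ n : ℕ, 2 * Real.exp (-x) * (-Real.exp (-(2 * x))) ^ n
      = 2 * (-1 : ℝ) ^ n * Real.exp (-((2 * n + 1) * x)) := by
    intro n
    rw [neg_pow, ← Real.exp_nat_mul]
    rw [show -((2 * (n : ℝ) + 1) * x) = -x + n * -(2 * x) by ring, Real.exp_add]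
    ring
  have hval : 2 * Real.exp (-x) * (1 - -Real.exp (-(2 * x)))⁻¹
      = 2 / (Real.exp x + Real.exp (-x)) := by
    rw [sub_neg_eq_add]
    have h1 : Real.exp x > 0 := Real.exp_pos x
    have h2 : Real.exp (-x) > 0 := Real.exp_pos (-x)
    have e2 : Real.exp (-(2*x)) = Real.exp (-x) * Real.exp (-x) := by
      rw [← Real.exp_add]; ring_nf
    have e3 : Real.exp x * Real.exp (-x) = 1 := by rw [← Real.exp_add]; norm_num
    rw [e2, eq_div_iff (by positivity)]
    field_simp
    nlinarith
  exact hval ▸ (h.congr_fun (fun n => (heq n).symm))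

lemma aux_bound {s : ℝ} (hs : 0 < s) : s ^ 2 * Real.exp (-s) ≤ (1 - Real.exp (-s)) ^ 2 := by
  have h1 : s / 2 ≤ Real.sinh (s / 2) := Real.self_le_sinh_iff.2 (by linarith)
  rw [Real.sinh_eq] at h1
  have h2 : s * Real.exp (-(s/2)) ≤ 1 - Real.exp (-s) := by
    have := mul_le_mul_of_nonneg_right h1 (Real.exp_pos (-(s/2))).le
    have e1 : Real.exp (s/2) * Real.exp (-(s/2)) = 1 := by
      rw [← Real.exp_add]; norm_num
    have e2 : Real.exp (-(s/2)) * Real.exp (-(s/2)) = Real.exp (-s) := by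
      rw [← Real.exp_add]; ring_nf
    nlinarith [Real.exp_pos (-(s/2))]
  have h3 : 0 ≤ s * Real.exp (-(s/2)) := by positivity
  have h4 := mul_self_le_mul_self h3 h2
  calc s ^ 2 * Real.exp (-s) = (s * Real.exp (-(s/2))) * (s * Real.exp (-(s/2))) := by
        rw [show -s = -(s/2) + -(s/2) by ring, Real.exp_add]; ring
    _ ≤ (1 - Real.exp (-s)) * (1 - Real.exp (-s)) := h4
    _ = (1 - Real.exp (-s)) ^ 2 := (sq _).symm

lemma integral_id_mul_exp {c : ℝ} (hc : 0 < c) :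
    ∫ b in Ioi (0:ℝ), b * Real.exp (-(c * b)) = 1 / c ^ 2 := by
  have h := integral_rpow_mul_exp_neg_mul_rpow (p := 1) (q := 1) one_pos (by norm_num) hc
  simp only [Real.rpow_one] at h
  rw [show (fun b : ℝ => b * Real.exp (-(c * b))) = (fun b : ℝ => b * Real.exp (-c * b)) by
    funext b; rw [neg_mul]] at *
  rw [h, show ((1+1)/1 : ℝ) = 2 by norm_num, Real.Gamma_two,
    show (-(1+1)/1 : ℝ) = (-2 : ℤ) by norm_num, Real.rpow_intCast]
  norm_num [zpow_neg]

lemma integrable_id_mul_exp {c : ℝ} (hc : 0 < c) :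
    IntegrableOn (fun b : ℝ => b * Real.exp (-(c * b))) (Ioi 0) := by
  have h := integrableOn_rpow_mul_exp_neg_mul_rpow (p := 1) (s := 1) (by norm_num) one_pos hc
  simp only [Real.rpow_one] at h
  exact h.congr_fun (fun b _ => by simp only [neg_mul]) measurableSet_Ioi


lemma summable_inv_sq : Summable (fun k : ℕ => 1 / (2 * (k:ℝ) + 1) ^ 2) := by
  have h : Summable (fun k : ℕ => 1 / ((k:ℝ) + 1) ^ 2) := by
    have h0 : Summable (fun k : ℕ => 1 / (k:ℝ) ^ 2) := summable_one_div_nat_pow.mpr one_lt_two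
    have := (summable_nat_add_iff 1).mpr h0
    simpa using this
  refine Summable.of_nonneg_of_le (fun k => by positivity) (fun k => ?_) h
  have hk : (0:ℝ) < (k:ℝ) + 1 := by positivity
  apply one_div_le_one_div_of_le (by positivity)
  nlinarith [Nat.cast_nonneg (α := ℝ) k]

lemma summable_alt : Summable (fun k : ℕ => (-1:ℝ) ^ k / (2 * (k:ℝ) + 1) ^ 2) := by
  refine Summable.of_norm ?_
  refine summable_inv_sq.congr fun k => ?_
  rw [norm_div, norm_pow, norm_neg, norm_one, one_pow, Real.norm_eq_abs,
    abs_of_pos (by positivity)]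

lemma hasSum_cat : HasSum (fun n : ℕ => 2 * (-1:ℝ) ^ n / (2 * (n:ℝ) + 1) ^ 2)
    (2 * ∑' k : ℕ, (-1 : ℝ) ^ k / (2 * (k : ℝ) + 1) ^ 2) := by
  have := summable_alt.hasSum.mul_left 2
  exact this.congr_fun fun n => by ring

lemma integral_part :
    ∫ b in Set.Ioi (0 : ℝ), b * (2 / (Real.exp b + Real.exp (-b)))
      = 2 * ∑' k : ℕ, (-1 : ℝ) ^ k / (2 * (k : ℝ) + 1) ^ 2 := by
  set F : ℕ → ℝ → ℝ := fun N b => ∑ n ∈ Finset.range N,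
    2 * (-1:ℝ) ^ n * (b * Real.exp (-((2 * n + 1) * b))) with hF
  have hc : ∀ n : ℕ, (0:ℝ) < 2 * n + 1 := fun n => by positivity
  have hint : ∀ n : ℕ, IntegrableOn
      (fun b : ℝ => 2 * (-1:ℝ) ^ n * (b * Real.exp (-((2 * n + 1) * b)))) (Ioi 0) :=
    fun n => (integrable_id_mul_exp (hc n)).const_mul _
  have hFeval : ∀ N : ℕ, ∫ b in Ioi (0:ℝ), F N b
      = ∑ n ∈ Finset.range N, 2 * (-1:ℝ) ^ n / (2 * (n:ℝ) + 1) ^ 2 := by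
    intro N
    rw [hF, integral_finset_sum _ (fun n _ => hint n)]
    refine Finset.sum_congr rfl fun n _ => ?_
    rw [integral_const_mul, integral_id_mul_exp (hc n)]
    ring
  have htendS : Tendsto (fun N => ∫ b in Ioi (0:ℝ), F N b) atTop
      (nhds (2 * ∑' k : ℕ, (-1 : ℝ) ^ k / (2 * (k : ℝ) + 1) ^ 2)) := by
    simp_rw [hFeval]
    exact hasSum_cat.tendsto_sum_nat
  have hbound_int : Integrable (fun b : ℝ => 4 * (b * Real.exp (-(1 * b))))
      (volume.restrict (Ioi 0)) := (integrable_id_mul_exp one_pos).const_mul 4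
  have hDCT : Tendsto (fun N => ∫ b in Ioi (0:ℝ), F N b) atTop
      (nhds (∫ b in Ioi (0:ℝ), b * (2 / (Real.exp b + Real.exp (-b))))) := by
    refine tendsto_integral_of_dominated_convergence
      (fun b => 4 * (b * Real.exp (-(1 * b)))) (fun N => ?_) hbound_int (fun N => ?_) ?_
    · refine Continuous.aestronglyMeasurable ?_
      exact continuous_finset_sum _ fun n _ => by fun_prop
    · rw [ae_restrict_iff' measurableSet_Ioi]
      refine ae_of_all _ fun b hb => ?_
      rw [mem_Ioi] at hb
      set r : ℝ := -Real.exp (-(2 * b)) with hr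
      have hr1 : Real.exp (-(2 * b)) < 1 := Real.exp_lt_one_iff.2 (by linarith)
      have hrpos : 0 < Real.exp (-(2 * b)) := Real.exp_pos _
      have hFform : F N b = 2 * (b * Real.exp (-b)) * ∑ n ∈ Finset.range N, r ^ n := by
        rw [hF, Finset.mul_sum]
        refine Finset.sum_congr rfl fun n _ => ?_
        rw [hr, show (-Real.exp (-(2*b)))^n = (-1:ℝ)^n * Real.exp ((n:ℝ) * -(2*b)) by
            rw [neg_pow, ← Real.exp_nat_mul],
          show -((2 * (n:ℝ) + 1) * b) = -b + (n:ℝ) * -(2 * b) by ring, Real.exp_add]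
        ring
      have hsum_le : |∑ n ∈ Finset.range N, r ^ n| ≤ 2 := by
        rw [geom_sum_eq (by rw [hr]; intro h; nlinarith)]
        rw [abs_div]
        have h1 : |r ^ N - 1| ≤ 2 := by
          have : |r| ≤ 1 := by rw [hr, abs_neg, abs_of_pos hrpos]; linarith
          have h2 : |r ^ N| ≤ 1 := by rw [abs_pow]; exact pow_le_one₀ (abs_nonneg r) this
          have h3 : |r ^ N - 1| ≤ |r ^ N| + 1 := by
            have := abs_add_le (r ^ N) (-1)
            rw [← sub_eq_add_neg] at this
            simpa using this
          linarith
        have h2 : 1 ≤ |r - 1| := by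
          rw [hr, abs_of_nonpos (by linarith)]; linarith
        calc |r ^ N - 1| / |r - 1| ≤ 2 / 1 := by
              apply div_le_div₀ (by norm_num) h1 one_pos h2
          _ = 2 := by norm_num
      rw [hFform, Real.norm_eq_abs, abs_mul, abs_of_nonneg (by positivity : (0:ℝ) ≤ 2 * (b * Real.exp (-b)))]
      simp only [one_mul]
      calc 2 * (b * Real.exp (-b)) * |∑ n ∈ Finset.range N, r ^ n|
          ≤ 2 * (b * Real.exp (-b)) * 2 := by
            apply mul_le_mul_of_nonneg_left hsum_le (by positivity)
        _ = 4 * (b * Real.exp (-b)) := by ring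
    · rw [ae_restrict_iff' measurableSet_Ioi]
      refine ae_of_all _ fun b hb => ?_
      rw [mem_Ioi] at hb
      have h := ((sech_hasSum hb).mul_left b).tendsto_sum_nat
      refine h.congr fun N => ?_
      refine Finset.sum_congr rfl fun n _ => ?_
      ring
  exact tendsto_nhds_unique hDCT htendS


-- pointwise limit of each term
lemma tendsto_g (n : ℕ) :
    Tendsto (fun t : ℝ => t ^ 2 *
        (Real.exp (-((2 * n + 1) * t)) / (1 - Real.exp (-((2 * n + 1) * t))) ^ 2))
      (nhdsWithin 0 (Set.Ioi 0)) (nhds (1 / (2 * (n:ℝ) + 1) ^ 2)) := by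
  set c : ℝ := 2 * (n:ℝ) + 1 with hcdef
  have hc : (0:ℝ) < c := by positivity
  set f : ℝ → ℝ := fun t => 1 - Real.exp (-(c * t)) with hfdef
  have hd : HasDerivAt f c 0 := by
    have h1 : HasDerivAt (fun t : ℝ => -(c * t)) (-c) 0 := by
      simpa using ((hasDerivAt_id (0:ℝ)).const_mul c).fun_neg
    have h2 : HasDerivAt (fun t : ℝ => Real.exp (-(c * t))) (-c) 0 := by
      have := (Real.hasDerivAt_exp (-(c * 0))).comp 0 h1
      simpa [Function.comp_def] using this
    simpa using h2.const_sub 1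
  have hs : Tendsto (slope f 0) (nhdsWithin 0 {(0:ℝ)}ᶜ) (nhds c) :=
    hasDerivAt_iff_tendsto_slope.mp hd
  have hmono : nhdsWithin (0:ℝ) (Set.Ioi 0) ≤ nhdsWithin 0 {(0:ℝ)}ᶜ :=
    nhdsWithin_mono 0 (fun x hx => ne_of_gt hx)
  have hs' : Tendsto (slope f 0) (nhdsWithin 0 (Set.Ioi 0)) (nhds c) := hs.mono_left hmono
  have hinv : Tendsto (fun t => (slope f 0 t)⁻¹) (nhdsWithin 0 (Set.Ioi 0)) (nhds c⁻¹) :=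
    hs'.inv₀ (ne_of_gt hc)
  have hq : Tendsto (fun t => Real.exp (-(c * t))) (nhdsWithin 0 (Set.Ioi 0)) (nhds 1) := by
    have hcont : Continuous (fun t : ℝ => Real.exp (-(c * t))) := by fun_prop
    have := (hcont.tendsto 0).mono_left (nhdsWithin_le_nhds (s := Set.Ioi 0))
    simpa using this
  have hcomb := hq.mul (hinv.mul hinv)
  have hval : (1:ℝ) * (c⁻¹ * c⁻¹) = 1 / c ^ 2 := by
    field_simp
  rw [hval] at hcomb
  refine Tendsto.congr' ?_ hcomb
  filter_upwards [self_mem_nhdsWithin] with t ht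
  rw [mem_Ioi] at ht
  have hq1 : Real.exp (-(c * t)) < 1 := Real.exp_lt_one_iff.2 (by nlinarith)
  have hslope : slope f 0 t = (1 - Real.exp (-(c * t))) / t := by
    rw [slope_def_field, hfdef]
    simp [div_eq_iff (ne_of_gt ht)]
  rw [hslope]
  have ht' : t ≠ 0 := ne_of_gt ht
  have h1q : 1 - Real.exp (-(c * t)) ≠ 0 := by nlinarith
  have hexp : -((2 * (n:ℝ) + 1) * t) = -(c * t) := by rw [hcdef]
  rw [hexp]
  field_simp

lemma key_eq {t : ℝ} (ht : 0 < t) :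
    t ^ 2 * ∑' a : ℕ,
        ((a : ℝ) + 1) * (2 / (Real.exp (((a : ℝ) + 1) * t) + Real.exp (-(((a : ℝ) + 1) * t))))
      = ∑' n : ℕ, 2 * (-1:ℝ) ^ n * (t ^ 2 *
          (Real.exp (-((2 * n + 1) * t)) / (1 - Real.exp (-((2 * n + 1) * t))) ^ 2)) := by
  set f : ℕ → ℕ → ℝ := fun a n =>
    t ^ 2 * (((a:ℝ) + 1) * (2 * (-1:ℝ) ^ n * Real.exp (-((2 * n + 1) * (((a:ℝ) + 1) * t)))))
    with hfdef
  have hxpos : ∀ a : ℕ, (0:ℝ) < ((a:ℝ) + 1) * t := fun a => by positivity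
  -- summability of |f| over the product
  have habs : ∀ a n : ℕ, |f a n| =
      (2 * t ^ 2 * (((a:ℝ) + 1) * Real.exp (-(((a:ℝ) + 1) * t)))) *
        (Real.exp (-(2 * (((a:ℝ) + 1) * t)))) ^ n := by
    intro a n
    have he : Real.exp (-((2 * (n:ℝ) + 1) * (((a:ℝ) + 1) * t)))
        = Real.exp (-(((a:ℝ) + 1) * t)) * (Real.exp (-(2 * (((a:ℝ) + 1) * t)))) ^ n := by
      rw [← Real.exp_nat_mul, ← Real.exp_add]
      congr 1
      ring
    rw [hfdef]
    simp only []
    rw [he, abs_mul, abs_mul, abs_mul, abs_mul,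
      show |(-1:ℝ) ^ n| = 1 by rw [abs_pow, abs_neg, abs_one, one_pow],
      abs_of_nonneg (by positivity : (0:ℝ) ≤ t ^ 2),
      abs_of_nonneg (by positivity : (0:ℝ) ≤ (a:ℝ) + 1),
      abs_of_nonneg (by positivity :
        (0:ℝ) ≤ Real.exp (-(((a:ℝ) + 1) * t)) * Real.exp (-(2 * (((a:ℝ) + 1) * t))) ^ n),
      abs_of_nonneg (by norm_num : (0:ℝ) ≤ 2)]
    ring
  have hr_lt : ∀ a : ℕ, Real.exp (-(2 * (((a:ℝ) + 1) * t))) < 1 := fun a =>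
    Real.exp_lt_one_iff.2 (by nlinarith [hxpos a])
  have hsumabs : Summable (fun p : ℕ × ℕ => |f p.1 p.2|) := by
    refine (summable_prod_of_nonneg fun p => abs_nonneg _).mpr ⟨?_, ?_⟩
    · intro a
      simp only [habs]
      exact (summable_geometric_of_lt_one (Real.exp_pos _).le (hr_lt a)).mul_left _
    · -- bound the inner tsums
      have hinner : ∀ a : ℕ, ∑' n, |f a n| ≤
          ((1 - Real.exp (-(2 * t)))⁻¹ * (2 * t ^ 2 * Real.exp (-t))) *
            (((a:ℝ) + 1) * (Real.exp (-t)) ^ a) := by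
        intro a
        have hgs : ∑' n : ℕ, |f a n| =
            (2 * t ^ 2 * (((a:ℝ) + 1) * Real.exp (-(((a:ℝ) + 1) * t)))) *
              (1 - Real.exp (-(2 * (((a:ℝ) + 1) * t))))⁻¹ := by
          simp_rw [habs]
          rw [tsum_mul_left, tsum_geometric_of_lt_one (Real.exp_pos _).le (hr_lt a)]
        rw [hgs]
        have h1 : (1 - Real.exp (-(2 * (((a:ℝ) + 1) * t))))⁻¹ ≤ (1 - Real.exp (-(2 * t)))⁻¹ := by
          have ha1 : Real.exp (-(2 * (((a:ℝ) + 1) * t))) ≤ Real.exp (-(2 * t)) := by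
            apply Real.exp_le_exp.2
            nlinarith [Nat.cast_nonneg (α := ℝ) a]
          have h2t : Real.exp (-(2 * t)) < 1 := Real.exp_lt_one_iff.2 (by nlinarith)
          apply inv_anti₀ (by nlinarith) (by nlinarith)
        have he2 : Real.exp (-(((a:ℝ) + 1) * t)) = Real.exp (-t) * (Real.exp (-t)) ^ a := by
          rw [← Real.exp_nat_mul, ← Real.exp_add]; congr 1; ring
        calc (2 * t ^ 2 * (((a:ℝ) + 1) * Real.exp (-(((a:ℝ) + 1) * t)))) *
              (1 - Real.exp (-(2 * (((a:ℝ) + 1) * t))))⁻¹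
            ≤ (2 * t ^ 2 * (((a:ℝ) + 1) * Real.exp (-(((a:ℝ) + 1) * t)))) *
              (1 - Real.exp (-(2 * t)))⁻¹ := by
              apply mul_le_mul_of_nonneg_left h1 (by positivity)
          _ = ((1 - Real.exp (-(2 * t)))⁻¹ * (2 * t ^ 2 * Real.exp (-t))) *
              (((a:ℝ) + 1) * (Real.exp (-t)) ^ a) := by rw [he2]; ring
      have hmaj : Summable (fun a : ℕ =>
          ((1 - Real.exp (-(2 * t)))⁻¹ * (2 * t ^ 2 * Real.exp (-t))) *
            (((a:ℝ) + 1) * (Real.exp (-t)) ^ a)) := by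
        apply Summable.mul_left
        have hrt : Real.exp (-t) < 1 := Real.exp_lt_one_iff.2 (by linarith)
        have h1 : Summable (fun a : ℕ => (a:ℝ) * (Real.exp (-t)) ^ a) := by
          have := summable_pow_mul_geometric_of_norm_lt_one (R := ℝ) 1
            (r := Real.exp (-t)) (by rw [Real.norm_eq_abs, abs_of_pos (Real.exp_pos _)]; exact hrt)
          simpa using this
        have h2 : Summable (fun a : ℕ => (Real.exp (-t)) ^ a) :=
          summable_geometric_of_lt_one (Real.exp_pos _).le hrt
        exact (h1.add h2).congr fun a => by ring
      exact Summable.of_nonneg_of_le (fun a => tsum_nonneg fun n => abs_nonneg _) hinner hmaj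
  have hsum : Summable (Function.uncurry f) := by
    rw [← summable_abs_iff]
    exact hsumabs
  -- inner sums over n (for fixed a)
  have hinner_n : ∀ a : ℕ, ∑' n : ℕ, f a n = t ^ 2 * (((a:ℝ) + 1) *
      (2 / (Real.exp (((a:ℝ) + 1) * t) + Real.exp (-(((a:ℝ) + 1) * t))))) := by
    intro a
    have h := (sech_hasSum (hxpos a)).mul_left (t ^ 2 * ((a:ℝ) + 1))
    have h' := h.tsum_eq
    calc ∑' n : ℕ, f a n
        = ∑' n : ℕ, t ^ 2 * ((a:ℝ) + 1) *
            (2 * (-1:ℝ) ^ n * Real.exp (-((2 * n + 1) * (((a:ℝ) + 1) * t)))) :=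
          tsum_congr fun n => by rw [hfdef]; ring
      _ = t ^ 2 * (((a:ℝ) + 1) *
            (2 / (Real.exp (((a:ℝ) + 1) * t) + Real.exp (-(((a:ℝ) + 1) * t))))) := by
          rw [h']; ring
  -- inner sums over a (for fixed n)
  have hinner_a : ∀ n : ℕ, ∑' a : ℕ, f a n = 2 * (-1:ℝ) ^ n * (t ^ 2 *
      (Real.exp (-((2 * n + 1) * t)) / (1 - Real.exp (-((2 * n + 1) * t))) ^ 2)) := by
    intro n
    set q : ℝ := Real.exp (-((2 * n + 1) * t)) with hqdef
    have hq0 : 0 < q := Real.exp_pos _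
    have hq1 : q < 1 := Real.exp_lt_one_iff.2 (by nlinarith [Nat.cast_nonneg (α := ℝ) n])
    have hqn : ‖q‖ < 1 := by rw [Real.norm_eq_abs, abs_of_pos hq0]; exact hq1
    have h0 := hasSum_coe_mul_geometric_of_norm_lt_one hqn
    have h1 : HasSum (fun a : ℕ => ((a:ℝ) + 1) * q ^ (a + 1)) (q / (1 - q) ^ 2) := by
      have h2 := (hasSum_nat_add_iff' (f := fun m : ℕ => (m:ℝ) * q ^ m) 1).mpr h0
      simp only [Finset.range_one, Finset.sum_singleton, Nat.cast_zero, zero_mul, pow_zero,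
        sub_zero, Nat.cast_add, Nat.cast_one] at h2
      exact h2
    have h3 := h1.mul_left (2 * (-1:ℝ) ^ n * t ^ 2)
    have h4 : ∀ a : ℕ, 2 * (-1:ℝ) ^ n * t ^ 2 * (((a:ℝ) + 1) * q ^ (a + 1)) = f a n := by
      intro a
      have he : q ^ (a + 1) = Real.exp (-((2 * n + 1) * (((a:ℝ) + 1) * t))) := by
        rw [hqdef, ← Real.exp_nat_mul]
        congr 1
        push_cast
        ring
      rw [he, hfdef]
      ring
    have h5 := (h3.congr_fun (fun a => (h4 a).symm)).tsum_eq
    rw [h5]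
    ring
  -- put it together using Fubini for sums
  have hswap : ∑' n : ℕ, ∑' a : ℕ, f a n = ∑' a : ℕ, ∑' n : ℕ, f a n := hsum.tsum_comm
  calc t ^ 2 * ∑' a : ℕ, ((a : ℝ) + 1) *
        (2 / (Real.exp (((a : ℝ) + 1) * t) + Real.exp (-(((a : ℝ) + 1) * t))))
      = ∑' a : ℕ, ∑' n : ℕ, f a n := by
        rw [← tsum_mul_left]
        exact tsum_congr fun a => by rw [hinner_n a]
    _ = ∑' n : ℕ, ∑' a : ℕ, f a n := hswap.symm
    _ = ∑' n : ℕ, 2 * (-1:ℝ) ^ n * (t ^ 2 *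
          (Real.exp (-((2 * n + 1) * t)) / (1 - Real.exp (-((2 * n + 1) * t))) ^ 2)) :=
        tsum_congr fun n => hinner_a n


/-- As t → 0⁺, t²·Σ_{a≥1} a·sech(a t) → ∫₀^∞ b·sech(b) db = 2G,
where G is Catalan's constant and sech(x) = 2/(eˣ + e⁻ˣ). -/
theorem sech_weighted_riemann_sum_limit :
    Tendsto
      (fun t : ℝ =>
        t ^ 2 * ∑' a : ℕ,
          ((a : ℝ) + 1) * (2 / (Real.exp (((a : ℝ) + 1) * t) + Real.exp (-(((a : ℝ) + 1) * t)))))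
      (nhdsWithin 0 (Set.Ioi 0))
      (nhds (2 * ∑' k : ℕ, (-1 : ℝ) ^ k / (2 * (k : ℝ) + 1) ^ 2)) ∧
    ∫ b in Set.Ioi (0 : ℝ), b * (2 / (Real.exp b + Real.exp (-b)))
      = 2 * ∑' k : ℕ, (-1 : ℝ) ^ k / (2 * (k : ℝ) + 1) ^ 2 := by
  refine ⟨?_, integral_part⟩
  have hbound : Summable (fun n : ℕ => 2 / (2 * (n:ℝ) + 1) ^ 2) := by
    have := summable_inv_sq.mul_left 2
    exact this.congr fun n => by ring
  have hab : ∀ n : ℕ, Tendsto (fun t : ℝ => 2 * (-1:ℝ) ^ n * (t ^ 2 *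
      (Real.exp (-((2 * n + 1) * t)) / (1 - Real.exp (-((2 * n + 1) * t))) ^ 2)))
      (nhdsWithin 0 (Set.Ioi 0)) (nhds (2 * (-1:ℝ) ^ n * (1 / (2 * (n:ℝ) + 1) ^ 2))) :=
    fun n => (tendsto_g n).const_mul _
  have h_bound : ∀ᶠ t in nhdsWithin (0:ℝ) (Set.Ioi 0), ∀ n : ℕ,
      ‖2 * (-1:ℝ) ^ n * (t ^ 2 *
        (Real.exp (-((2 * n + 1) * t)) / (1 - Real.exp (-((2 * n + 1) * t))) ^ 2))‖
        ≤ 2 / (2 * (n:ℝ) + 1) ^ 2 := by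
    filter_upwards [self_mem_nhdsWithin] with t ht n
    rw [mem_Ioi] at ht
    set q : ℝ := Real.exp (-((2 * n + 1) * t)) with hq
    have hc : (0:ℝ) < 2 * (n:ℝ) + 1 := by positivity
    have hst : (0:ℝ) < (2 * (n:ℝ) + 1) * t := mul_pos hc ht
    have hq0 : 0 < q := Real.exp_pos _
    have hq1 : q < 1 := Real.exp_lt_one_iff.2 (by linarith)
    have h1q : (0:ℝ) < (1 - q) ^ 2 := pow_pos (by linarith) 2
    have hXnn : (0:ℝ) ≤ t ^ 2 * (q / (1 - q) ^ 2) := by positivity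
    have hX : t ^ 2 * (q / (1 - q) ^ 2) ≤ 1 / (2 * (n:ℝ) + 1) ^ 2 := by
      rw [mul_div_assoc', div_le_div_iff₀ h1q (by positivity)]
      have hkey := aux_bound hst
      have hs2 : ((2 * (n:ℝ) + 1) * t) ^ 2 * Real.exp (-((2 * (n:ℝ) + 1) * t))
          ≤ (1 - q) ^ 2 := by
        rw [hq]; exact hkey
      nlinarith
    rw [Real.norm_eq_abs, abs_mul, abs_mul,
      show |(-1:ℝ) ^ n| = 1 by rw [abs_pow, abs_neg, abs_one, one_pow],
      show |(2:ℝ)| = 2 by norm_num, mul_one, abs_of_nonneg hXnn]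
    calc 2 * (t ^ 2 * (q / (1 - q) ^ 2)) ≤ 2 * (1 / (2 * (n:ℝ) + 1) ^ 2) := by linarith
      _ = 2 / (2 * (n:ℝ) + 1) ^ 2 := by ring
  have htan := tendsto_tsum_of_dominated_convergence hbound hab h_bound
  have hval : ∑' n : ℕ, 2 * (-1:ℝ) ^ n * (1 / (2 * (n:ℝ) + 1) ^ 2)
      = 2 * ∑' k : ℕ, (-1 : ℝ) ^ k / (2 * (k : ℝ) + 1) ^ 2 := by
    rw [← hasSum_cat.tsum_eq]
    exact tsum_congr fun n => by ring
  rw [hval] at htan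
  refine htan.congr' ?_
  filter_upwards [self_mem_nhdsWithin] with t ht
  rw [mem_Ioi] at ht
  exact (key_eq ht).symm
end
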